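/- arXiv:1706.07650 — 4 statements merged into one kernel-verified Lean document; each statement's English description precedes it below -/
import Mathlib

section
/- In the semi-discrete setting with Euclidean cost, there exists a solution to Monge's problem which is unique up to μ-null sets: there is a measurable map T* : ℝ^d → ℝ^d with T*_{#}μ = ν minimizing ∫_{ℝ^d} ‖x − T(x)‖ dμ(x) over all measurable maps T with T_{#}μ = ν, and any other minimizer agrees with T* μ-almost everywhere. -/
open MeasureTheory ENNReal

noncomputable section

lemma strictConvexOn_norm_line {E : Type*} [NormedAddCommGroup E] [InnerProductSpace ℝ E]
    {p w : E} (hw : w ≠ 0) (hp : p ∉ Submodule.span ℝ {w}) :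
    StrictConvexOn ℝ Set.univ (fun t : ℝ => ‖p + t • w‖) := by
  refine ⟨convex_univ, ?_⟩
  intro s _ t _ hst lam mu hlam hmu hlm
  have hv : ∀ r : ℝ, p + r • w ≠ 0 := by
    intro r h
    apply hp
    have : p = (-r) • w := by
      rw [neg_smul]; linear_combination (norm := module) h
    rw [this]; exact Submodule.smul_mem _ _ (Submodule.mem_span_singleton_self w)
  have key : p + (lam • s + mu • t) • w = lam • (p + s • w) + mu • (p + t • w) := by
    conv_lhs => rw [show p = (lam + mu) • p by rw [hlm, one_smul]]
    simp only [smul_eq_mul]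
    module
  simp only [key]
  have hray : ¬ SameRay ℝ (lam • (p + s • w)) (mu • (p + t • w)) := by
    intro h
    have h1 : lam • (p + s • w) ≠ 0 := smul_ne_zero hlam.ne' (hv s)
    have h2 : mu • (p + t • w) ≠ 0 := smul_ne_zero hmu.ne' (hv t)
    obtain ⟨r₁, r₂, hr₁, hr₂, heq⟩ := h.exists_pos h1 h2
    rw [smul_smul, smul_smul] at heq
    set α := r₁ * lam with hα
    set β := r₂ * mu with hβ
    have hαpos : 0 < α := mul_pos hr₁ hlam
    have hβpos : 0 < β := mul_pos hr₂ hmu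
    have heq2 : (α - β) • p = (β * t - α * s) • w := by
      rw [sub_smul, sub_smul]
      linear_combination (norm := module) heq
    rcases eq_or_ne α β with hab | hab
    · rw [hab, sub_self, zero_smul] at heq2
      rcases smul_eq_zero.mp heq2.symm with h0 | h0
      · have : β * (t - s) = 0 := by ring_nf; ring_nf at h0; linarith [h0]
        rcases mul_eq_zero.mp this with h' | h'
        · exact hβpos.ne' h'
        · exact (sub_ne_zero.mpr (Ne.symm hst)) h'
      · exact hw h0
    · apply hp
      have hne : α - β ≠ 0 := sub_ne_zero.mpr hab
      have : p = ((α - β)⁻¹ * (β * t - α * s)) • w := by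
        rw [← smul_smul, ← heq2, smul_smul, inv_mul_cancel₀ hne, one_smul]
      rw [this]; exact Submodule.smul_mem _ _ (Submodule.mem_span_singleton_self w)
  calc ‖lam • (p + s • w) + mu • (p + t • w)‖
      < ‖lam • (p + s • w)‖ + ‖mu • (p + t • w)‖ := norm_add_lt_of_not_sameRay hray
    _ = lam * ‖p + s • w‖ + mu * ‖p + t • w‖ := by
        rw [norm_smul, norm_smul, Real.norm_eq_abs, Real.norm_eq_abs,
          abs_of_pos hlam, abs_of_pos hmu]

lemma strictMono_diff_of_strictConvexOn {h : ℝ → ℝ} (hc : StrictConvexOn ℝ Set.univ h) :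
    StrictMono (fun t => h t - h (t - 1)) := by
  intro t₁ t₂ hlt
  have s₁ := hc.slope_strict_mono_adjacent (Set.mem_univ (t₁ - 1)) (Set.mem_univ t₂)
    (by linarith : t₁ - 1 < t₁) hlt
  have s₂ := hc.slope_strict_mono_adjacent (Set.mem_univ (t₁ - 1)) (Set.mem_univ t₂)
    (by linarith : t₁ - 1 < t₂ - 1) (by linarith : t₂ - 1 < t₂)
  rw [div_lt_div_iff₀ (by linarith) (by linarith)] at s₁ s₂
  simp only
  nlinarith [s₁, s₂, hlt]

lemma tie_null {d : ℕ} (hd : 2 ≤ d) (a b : EuclideanSpace ℝ (Fin d)) (hab : a ≠ b) (c : ℝ) :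
    volume {x : EuclideanSpace ℝ (Fin d) | ‖x - a‖ - ‖x - b‖ = c} = 0 := by
  let E := EuclideanSpace ℝ (Fin d)
  set w : E := b - a with hw
  have hw0 : w ≠ 0 := sub_ne_zero.mpr (Ne.symm hab)
  set s : Set E := {x | ‖x - a‖ - ‖x - b‖ ≠ c} with hs_def
  have hcont : Continuous (fun x : E => ‖x - a‖ - ‖x - b‖) := by fun_prop
  have hs : MeasurableSet s := (measurableSet_eq_fun (f := fun x : E => ‖x - a‖ - ‖x - b‖)
      (g := fun _ => c) hcont.measurable measurable_const).compl
  set L : ℝ →ₗ[ℝ] E := LinearMap.toSpanSingleton ℝ E w with hL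
  have key : (∀ᵐ y ∂(volume : Measure E), ∀ᵐ t ∂(volume : Measure ℝ), y + L t ∈ s)
      ↔ ∀ᵐ y ∂(volume : Measure E), y ∈ s :=
    MeasureTheory.ae_ae_add_linearMap_mem_iff L volume volume hs
  -- the bad line
  set ℓ : AffineSubspace ℝ E := AffineSubspace.mk' a (Submodule.span ℝ {w}) with hℓ
  have hℓne : ℓ ≠ ⊤ := by
    intro htop
    have h1 : ℓ.direction = ⊤ := by rw [htop]; exact AffineSubspace.direction_top ℝ E E
    rw [hℓ, AffineSubspace.direction_mk'] at h1
    have h2 : Module.finrank ℝ (Submodule.span ℝ {w} : Submodule ℝ E) = 1 :=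
      finrank_span_singleton hw0
    rw [h1, finrank_top] at h2
    have h3 : Module.finrank ℝ E = d := finrank_euclideanSpace_fin
    omega
  have hℓ0 : (volume : Measure E) (ℓ : Set E) = 0 :=
    Measure.addHaar_affineSubspace volume ℓ hℓne
  have hae : ∀ᵐ y ∂(volume : Measure E), y ∉ (ℓ : Set E) :=
    (MeasureTheory.measure_eq_zero_iff_ae_notMem).mp hℓ0
  have main : ∀ᵐ y ∂(volume : Measure E), ∀ᵐ t ∂(volume : Measure ℝ), y + L t ∈ s := by
    filter_upwards [hae] with y hy
    have hp : (y - a) ∉ Submodule.span ℝ {w} := by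
      intro hmem
      exact hy (by rw [hℓ]; exact AffineSubspace.mem_mk'.mpr hmem)
    have hconv := strictConvexOn_norm_line hw0 hp
    have hmono := strictMono_diff_of_strictConvexOn hconv
    rw [ae_iff]
    have hsub : {t : ℝ | ¬ (y + L t ∈ s)} ⊆
        {t : ℝ | ‖(y - a) + t • w‖ - ‖(y - a) + (t - 1) • w‖ = c} := by
      intro t ht
      simp only [hs_def, Set.mem_setOf_eq, not_not, hL, LinearMap.toSpanSingleton_apply] at ht
      simp only [Set.mem_setOf_eq]
      have e1 : y + t • w - a = (y - a) + t • w := by abel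
      have e2 : y + t • w - b = (y - a) + (t - 1) • w := by
        rw [hw]; rw [sub_smul, one_smul]; abel
      rw [← e1, ← e2]; exact ht
    have hsubsing : {t : ℝ | ‖(y - a) + t • w‖ - ‖(y - a) + (t - 1) • w‖ = c}.Subsingleton := by
      intro t₁ h1 t₂ h2
      simp only [Set.mem_setOf_eq] at h1 h2
      by_contra hne
      rcases lt_or_gt_of_ne hne with h | h
      · exact absurd (h1.trans h2.symm) (ne_of_lt (hmono h))
      · exact absurd (h2.trans h1.symm) (ne_of_lt (hmono h))
    exact measure_mono_null hsub (hsubsing.countable.measure_zero _)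
  have := key.mp main
  rw [ae_iff] at this
  convert this using 2
  ext x
  simp [hs_def]
  exact Iff.rfl


variable {d n : ℕ}

local notation "Esp" => EuclideanSpace ℝ (Fin d)

lemma inf'_le_inf'_add {α : Type*} (s : Finset α) (h : s.Nonempty) (f g : α → ℝ) (ε : ℝ)
    (hfg : ∀ j ∈ s, f j ≤ g j + ε) : s.inf' h f ≤ s.inf' h g + ε := by
  obtain ⟨j, hj, hgj⟩ := s.exists_mem_eq_inf' h g
  rw [hgj]
  exact le_trans (Finset.inf'_le f hj) (hfg j hj)

lemma continuous_finset_inf' {ι X : Type*} [TopologicalSpace X] (s : Finset ι) (hs : s.Nonempty)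
    (f : ι → X → ℝ) (hf : ∀ j, Continuous (f j)) :
    Continuous (fun x => s.inf' hs fun j => f j x) := by
  induction hs using Finset.Nonempty.cons_induction with
  | singleton j =>
      exact (continuous_congr (fun x => Finset.inf'_singleton (fun k => f k x))).mpr (hf j)
  | cons j s hj hs ih =>
      have he : (fun x => (Finset.cons j s hj).inf' (Finset.cons_nonempty hj) fun k => f k x)
          = fun x => min (f j x) (s.inf' hs fun k => f k x) :=
        funext fun x => (Finset.inf'_cons (H := hs) (fun k => f k x)).trans rfl
      rw [he]
      exact (hf j).min ih

/-- the dual potential integrand -/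
def fm (y : Fin n → Esp) (w : Fin n → ℝ) (hn : (Finset.univ : Finset (Fin n)).Nonempty)
    (x : Esp) : ℝ :=
  Finset.univ.inf' hn fun j => ‖x - y j‖ - w j

lemma fm_le (y : Fin n → Esp) (w : Fin n → ℝ) (hn : (Finset.univ : Finset (Fin n)).Nonempty)
    (x : Esp) (j : Fin n) : fm y w hn x ≤ ‖x - y j‖ - w j :=
  Finset.inf'_le _ (Finset.mem_univ j)

lemma fm_continuous (y : Fin n → Esp) (w : Fin n → ℝ)
    (hn : (Finset.univ : Finset (Fin n)).Nonempty) : Continuous (fm y w hn) :=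
  continuous_finset_inf' _ hn _ (fun j => by fun_prop)

lemma fm_abs_le (y : Fin n → Esp) (w : Fin n → ℝ)
    (hn : (Finset.univ : Finset (Fin n)).Nonempty) (x : Esp) :
    |fm y w hn x| ≤ ‖x‖ + Finset.univ.sup' hn (fun j => ‖y j‖ + |w j|) := by
  set M := Finset.univ.sup' hn (fun j => ‖y j‖ + |w j|) with hM
  obtain ⟨j0, _, h0⟩ := Finset.exists_mem_eq_inf' hn (fun j => ‖x - y j‖ - w j)
  have hjM : ∀ j : Fin n, ‖y j‖ + |w j| ≤ M := fun j => Finset.le_sup' (fun j => ‖y j‖ + |w j|) (Finset.mem_univ j)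
  rw [abs_le]
  have heq : fm y w hn x = ‖x - y j0‖ - w j0 := h0
  constructor
  · rw [heq]
    have := norm_nonneg (x - y j0)
    have := norm_nonneg (y j0)
    have := hjM j0
    have := le_abs_self (w j0)
    have := norm_nonneg x
    linarith
  · refine le_trans (fm_le y w hn x j0) ?_
    have h1 : ‖x - y j0‖ ≤ ‖x‖ + ‖y j0‖ := norm_sub_le _ _
    have := hjM j0
    have := neg_abs_le (w j0)
    linarith

lemma fm_integrable (y : Fin n → Esp) (w : Fin n → ℝ)
    (hn : (Finset.univ : Finset (Fin n)).Nonempty)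
    (μ : Measure Esp) [IsProbabilityMeasure μ] (hμint : Integrable (fun x => ‖x‖) μ) :
    Integrable (fm y w hn) μ := by
  refine Integrable.mono' (hμint.add (integrable_const
    (Finset.univ.sup' hn (fun j => ‖y j‖ + |w j|))))
    ((fm_continuous y w hn).aestronglyMeasurable) ?_
  filter_upwards with x
  rw [Real.norm_eq_abs]
  exact fm_abs_le y w hn x

lemma norm_sub_integrable (μ : Measure Esp) [IsProbabilityMeasure μ]
    (hμint : Integrable (fun x => ‖x‖) μ) (z : Esp) :
    Integrable (fun x : Esp => ‖x - z‖) μ := by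
  refine Integrable.mono' (hμint.add (integrable_const ‖z‖))
    (Continuous.aestronglyMeasurable (by fun_prop)) ?_
  filter_upwards with x
  rw [Real.norm_eq_abs, abs_of_nonneg (norm_nonneg _)]
  exact norm_sub_le _ _

lemma fm_diff_le (y : Fin n → Esp) (w w' : Fin n → ℝ)
    (hn : (Finset.univ : Finset (Fin n)).Nonempty) (x : Esp) :
    |fm y w hn x - fm y w' hn x| ≤ dist w w' := by
  have key : ∀ (u u' : Fin n → ℝ), fm y u hn x ≤ fm y u' hn x + dist u u' := by
    intro u u'
    refine inf'_le_inf'_add _ hn _ _ _ (fun j _ => ?_)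
    have h1 : dist (u j) (u' j) ≤ dist u u' := dist_le_pi_dist u u' j
    rw [Real.dist_eq] at h1
    have := abs_le.mp h1
    linarith [this.1, this.2]
  rw [abs_le]
  constructor
  · have h2 := key w' w
    rw [dist_comm] at h2
    linarith
  · have h1 := key w w'
    linarith

lemma phi_continuous (y : Fin n → Esp) (a : Fin n → ℝ)
    (hn : (Finset.univ : Finset (Fin n)).Nonempty)
    (μ : Measure Esp) [IsProbabilityMeasure μ] (hμint : Integrable (fun x => ‖x‖) μ) :
    Continuous (fun w => (∑ j, a j * w j) + ∫ x, fm y w hn x ∂μ) := by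
  apply Continuous.add
  · exact continuous_finset_sum _ (fun j _ => continuous_const.mul (continuous_apply j))
  · rw [continuous_iff_continuousAt]
    intro w
    rw [Metric.continuousAt_iff]
    intro ε hε
    refine ⟨ε / 2, by linarith, fun {w'} hw' => ?_⟩
    have hint := fm_integrable y w hn μ hμint
    have hint' := fm_integrable y w' hn μ hμint
    rw [Real.dist_eq, ← integral_sub hint' hint]
    calc |∫ x, (fm y w' hn x - fm y w hn x) ∂μ|
        = ‖∫ x, (fm y w' hn x - fm y w hn x) ∂μ‖ := (Real.norm_eq_abs _).symm
      _ ≤ ∫ x, ‖fm y w' hn x - fm y w hn x‖ ∂μ := norm_integral_le_integral_norm _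
      _ ≤ ∫ _x, dist w' w ∂μ := by
          refine integral_mono (hint'.sub hint).norm (integrable_const _) (fun x => ?_)
          rw [Real.norm_eq_abs]
          exact fm_diff_le y w' w hn x
      _ = dist w' w := by simp
      _ < ε := by rw [dist_comm] at hw' ⊢; linarith [hw']

lemma exists_global_max (y : Fin n → Esp) (a : Fin n → ℝ)
    (hn : (Finset.univ : Finset (Fin n)).Nonempty)
    (μ : Measure Esp) [IsProbabilityMeasure μ] (hμint : Integrable (fun x => ‖x‖) μ)
    (hapos : ∀ j, 0 < a j) (hsum : ∑ j, a j = 1) :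
    ∃ w : Fin n → ℝ, ∀ v : Fin n → ℝ,
      (∑ j, a j * v j) + ∫ x, fm y v hn x ∂μ ≤ (∑ j, a j * w j) + ∫ x, fm y w hn x ∂μ := by
  set Φ : (Fin n → ℝ) → ℝ := fun w => (∑ j, a j * w j) + ∫ x, fm y w hn x ∂μ with hΦ
  have hΦc : Continuous Φ := phi_continuous y a hn μ hμint
  set amin : ℝ := Finset.univ.inf' hn a with hamin_def
  have hamin : 0 < amin := by
    rw [hamin_def, Finset.lt_inf'_iff]
    exact fun j _ => hapos j
  have hamin_le : ∀ j, amin ≤ a j := fun j => Finset.inf'_le a (Finset.mem_univ j)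
  set C : ℝ := Finset.univ.sup' hn (fun j => ∫ x, ‖x - y j‖ ∂μ) with hC_def
  have hC_le : ∀ j, ∫ x, ‖x - y j‖ ∂μ ≤ C :=
    fun j => Finset.le_sup' (fun j => ∫ x, ‖x - y j‖ ∂μ) (Finset.mem_univ j)
  set R : ℝ := max 0 ((C - Φ 0) / amin + 1) with hR_def
  have hR0 : 0 ≤ R := le_max_left _ _
  have hRbig : C - amin * R ≤ Φ 0 - amin := by
    have h1 : (C - Φ 0) / amin + 1 ≤ R := le_max_right _ _
    have h2 : C - Φ 0 ≤ amin * (R - 1) := by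
      rw [div_add' _ _ _ hamin.ne'] at h1
      calc C - Φ 0 = ((C - Φ 0) + amin) - amin := by ring
        _ ≤ amin * R - amin := by
            have := (div_le_iff₀ hamin).mp h1
            nlinarith
        _ = amin * (R - 1) := by ring
    nlinarith
  have hK : IsCompact (Metric.closedBall (0 : Fin n → ℝ) R) := isCompact_closedBall _ _
  obtain ⟨w, hwK, hwmax⟩ := hK.exists_isMaxOn
    ⟨0, Metric.mem_closedBall_self hR0⟩ hΦc.continuousOn
  refine ⟨w, fun v => ?_⟩
  show Φ v ≤ Φ w
  set s : ℝ := Finset.univ.inf' hn v with hs_def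
  set v' : Fin n → ℝ := fun j => v j - s with hv'_def
  have hv'0 : ∀ j, 0 ≤ v' j := fun j => sub_nonneg.mpr (Finset.inf'_le v (Finset.mem_univ j))
  have hfm_shift : ∀ x, fm y v' hn x = fm y v hn x + s := by
    intro x
    apply le_antisymm
    · refine inf'_le_inf'_add _ hn _ _ _ (fun j _ => ?_)
      simp only [hv'_def]; ring_nf; exact le_refl _
    · have := inf'_le_inf'_add Finset.univ hn (fun j => ‖x - y j‖ - v j)
        (fun j => ‖x - y j‖ - v' j) (-s) (fun j _ => by simp only [hv'_def]; ring_nf; exact le_refl _)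
      have h2 : fm y v hn x ≤ fm y v' hn x + (-s) := this
      linarith
  have hinv : Φ v' = Φ v := by
    have hsum' : ∑ j, a j * v' j = (∑ j, a j * v j) - s := by
      simp only [hv'_def, mul_sub]
      rw [Finset.sum_sub_distrib, ← Finset.sum_mul, hsum, one_mul]
    have hint' : ∫ x, fm y v' hn x ∂μ = (∫ x, fm y v hn x ∂μ) + s := by
      rw [show (fun x => fm y v' hn x) = fun x => fm y v hn x + s from funext hfm_shift]
      rw [integral_add (fm_integrable y v hn μ hμint) (integrable_const s)]
      simp
    rw [hΦ]
    simp only [hsum', hint']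
    ring
  rw [← hinv]
  by_cases hvK : v' ∈ Metric.closedBall (0 : Fin n → ℝ) R
  · exact hwmax hvK
  · -- v' is far away: its value is below Φ 0 ≤ Φ w
    have hfar : ∃ m, R < v' m := by
      by_contra hcon
      push_neg at hcon
      apply hvK
      rw [Metric.mem_closedBall, dist_zero_right]
      rw [pi_norm_le_iff_of_nonneg hR0]
      intro j
      rw [Real.norm_eq_abs, abs_of_nonneg (hv'0 j)]
      exact hcon j
    obtain ⟨m, hm⟩ := hfar
    set M : ℝ := Finset.univ.sup' hn v' with hM_def
    have hMR : R < M := lt_of_lt_of_le hm (Finset.le_sup' v' (Finset.mem_univ m))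
    obtain ⟨m', _, hm'⟩ := Finset.exists_mem_eq_sup' hn v'
    obtain ⟨i₀, _, hi₀⟩ := Finset.exists_mem_eq_inf' hn v
    have hv'i₀ : v' i₀ = 0 := by simp only [hv'_def]; rw [hs_def, ← hi₀]; ring
    have hbound1 : ∫ x, fm y v' hn x ∂μ ≤ (∫ x, ‖x - y m'‖ ∂μ) - M := by
      have : ∀ x, fm y v' hn x ≤ ‖x - y m'‖ - M := by
        intro x
        have := fm_le y v' hn x m'
        rw [← hm'] at this
        exact this
      calc ∫ x, fm y v' hn x ∂μ ≤ ∫ x, (‖x - y m'‖ - M) ∂μ := by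
            refine integral_mono (fm_integrable y v' hn μ hμint) ?_ this
            exact (norm_sub_integrable μ hμint (y m')).sub (integrable_const M)
        _ = (∫ x, ‖x - y m'‖ ∂μ) - M := by
            rw [integral_sub (norm_sub_integrable μ hμint (y m')) (integrable_const M)]
            simp
    have hbound2 : ∑ j, a j * v' j ≤ (1 - a i₀) * M := by
      have hstep : ∑ j, a j * v' j = ∑ j ∈ Finset.univ.erase i₀, a j * v' j := by
        rw [← Finset.add_sum_erase _ _ (Finset.mem_univ i₀), hv'i₀, mul_zero, zero_add]
      rw [hstep]
      have hub : ∑ j ∈ Finset.univ.erase i₀, a j * v' j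
          ≤ ∑ j ∈ Finset.univ.erase i₀, a j * M := by
        refine Finset.sum_le_sum (fun j _ => ?_)
        exact mul_le_mul_of_nonneg_left (Finset.le_sup' v' (Finset.mem_univ j)) (hapos j).le
      have hers : ∑ j ∈ Finset.univ.erase i₀, a j = 1 - a i₀ := by
        have := Finset.add_sum_erase Finset.univ a (Finset.mem_univ i₀)
        rw [hsum] at this
        linarith
      rw [← Finset.sum_mul, hers] at hub
      exact hub
    have hM0 : 0 ≤ M := le_trans hR0 hMR.le
    have hai₀ : amin * M ≤ a i₀ * M := mul_le_mul_of_nonneg_right (hamin_le i₀) hM0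
    have hfin : Φ v' < Φ 0 := by
      have h1 : Φ v' ≤ (1 - a i₀) * M + ((∫ x, ‖x - y m'‖ ∂μ) - M) :=
        add_le_add hbound2 hbound1
      have h2 : (1 - a i₀) * M + ((∫ x, ‖x - y m'‖ ∂μ) - M) = (∫ x, ‖x - y m'‖ ∂μ) - a i₀ * M := by
        ring
      have h3 : (∫ x, ‖x - y m'‖ ∂μ) - a i₀ * M ≤ C - amin * M := by
        have := hC_le m'
        linarith
      have h4 : C - amin * M < C - amin * R := by nlinarith
      linarith
    exact le_trans hfin.le (hwmax (Metric.mem_closedBall_self hR0))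

lemma fm_update_pos (y : Fin n → Esp) (w : Fin n → ℝ)
    (hn : (Finset.univ : Finset (Fin n)).Nonempty) (j : Fin n) (t : ℝ) (ht : 0 ≤ t) (x : Esp) :
    fm y (Function.update w j (w j + t)) hn x = min (fm y w hn x) (‖x - y j‖ - w j - t) := by
  apply le_antisymm
  · apply le_min
    · have := inf'_le_inf'_add Finset.univ hn
        (fun k => ‖x - y k‖ - Function.update w j (w j + t) k)
        (fun k => ‖x - y k‖ - w k) 0 (fun k _ => ?_)
      · rw [add_zero] at this; exact this
      · rcases eq_or_ne k j with rfl | hkj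
        · simp only [Function.update_self]; linarith
        · rw [Function.update_of_ne hkj]; linarith
    · have h := fm_le y (Function.update w j (w j + t)) hn x j
      rwa [Function.update_self, show ‖x - y j‖ - (w j + t) = ‖x - y j‖ - w j - t by ring] at h
  · refine Finset.le_inf' hn _ (fun k _ => ?_)
    rcases eq_or_ne k j with rfl | hkj
    · rw [Function.update_self]
      calc min (fm y w hn x) (‖x - y k‖ - w k - t) ≤ ‖x - y k‖ - w k - t := min_le_right _ _
        _ = ‖x - y k‖ - (w k + t) := by ring
    · rw [Function.update_of_ne hkj]
      exact le_trans (min_le_left _ _) (fm_le y w hn x k)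

lemma sum_update_mul (a w : Fin n → ℝ) (j : Fin n) (c : ℝ) :
    ∑ k, a k * Function.update w j c k = (∑ k, a k * w k) + a j * (c - w j) := by
  have h3 : ∑ k ∈ Finset.univ.erase j, a k * Function.update w j c k
      = ∑ k ∈ Finset.univ.erase j, a k * w k :=
    Finset.sum_congr rfl (fun k hk => by
      rw [Function.update_of_ne (Finset.ne_of_mem_erase hk)])
  rw [← Finset.add_sum_erase Finset.univ (fun k => a k * Function.update w j c k)
      (Finset.mem_univ j),
    ← Finset.add_sum_erase Finset.univ (fun k => a k * w k) (Finset.mem_univ j)]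
  simp only [Function.update_self, h3]
  ring

lemma cell_measurable (y : Fin n → Esp) (w : Fin n → ℝ) (j : Fin n) :
    MeasurableSet {x : Esp | ∀ k, ‖x - y j‖ - w j ≤ ‖x - y k‖ - w k} := by
  have : {x : Esp | ∀ k, ‖x - y j‖ - w j ≤ ‖x - y k‖ - w k}
      = ⋂ k, {x : Esp | ‖x - y j‖ - w j ≤ ‖x - y k‖ - w k} := by
    ext x; simp [Set.mem_iInter]
  rw [this]
  exact MeasurableSet.iInter (fun k =>
    measurableSet_le (by fun_prop) (by fun_prop))

lemma strict_cell_measurable (y : Fin n → Esp) (w : Fin n → ℝ) (j : Fin n) :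
    MeasurableSet {x : Esp | ∀ k, k ≠ j → ‖x - y j‖ - w j < ‖x - y k‖ - w k} := by
  have : {x : Esp | ∀ k, k ≠ j → ‖x - y j‖ - w j < ‖x - y k‖ - w k}
      = ⋂ k, {x : Esp | k ≠ j → ‖x - y j‖ - w j < ‖x - y k‖ - w k} := by
    ext x; simp [Set.mem_iInter]
  rw [this]
  refine MeasurableSet.iInter (fun k => ?_)
  rcases eq_or_ne k j with rfl | hkj
  · simp
  · have : {x : Esp | k ≠ j → ‖x - y j‖ - w j < ‖x - y k‖ - w k}
        = {x : Esp | ‖x - y j‖ - w j < ‖x - y k‖ - w k} := by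
      ext x; simp [hkj]
    rw [this]
    exact measurableSet_lt (by fun_prop) (by fun_prop)

lemma le_measure_cell (y : Fin n → Esp) (a : Fin n → ℝ)
    (hn : (Finset.univ : Finset (Fin n)).Nonempty)
    (μ : Measure Esp) [IsProbabilityMeasure μ] (hμint : Integrable (fun x => ‖x‖) μ)
    (w : Fin n → ℝ)
    (hmax : ∀ v : Fin n → ℝ,
      (∑ k, a k * v k) + ∫ x, fm y v hn x ∂μ ≤ (∑ k, a k * w k) + ∫ x, fm y w hn x ∂μ)
    (j : Fin n) :
    a j ≤ (μ {x | ∀ k, ‖x - y j‖ - w j ≤ ‖x - y k‖ - w k}).toReal := by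
  set V := {x : Esp | ∀ k, ‖x - y j‖ - w j ≤ ‖x - y k‖ - w k} with hV
  have hVmeas := cell_measurable y w j
  set q : ℝ → Esp → ℝ :=
    fun t x => (fm y w hn x - fm y (Function.update w j (w j + t)) hn x) / t with hq
  -- the inequality at each positive t
  have hqle : ∀ t : ℝ, 0 < t → a j ≤ ∫ x, q t x ∂μ := by
    intro t ht
    have h1 := hmax (Function.update w j (w j + t))
    rw [sum_update_mul a w j (w j + t)] at h1
    have h2 : a j * t ≤ ∫ x, fm y w hn x ∂μ - ∫ x, fm y (Function.update w j (w j + t)) hn x ∂μ := by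
      have : a j * (w j + t - w j) = a j * t := by ring
      linarith [h1, this.symm.le, this.le]
    rw [hq]
    simp only
    rw [integral_div]
    rw [le_div_iff₀ ht]
    rw [integral_sub (fm_integrable y w hn μ hμint)
      (fm_integrable y (Function.update w j (w j + t)) hn μ hμint)]
    linarith
  -- dominated convergence
  have htend : Filter.Tendsto (fun t => ∫ x, q t x ∂μ) (nhdsWithin 0 (Set.Ioi 0))
      (nhds (∫ x, V.indicator (fun _ => (1:ℝ)) x ∂μ)) := by
    apply MeasureTheory.tendsto_integral_filter_of_dominated_convergence
      (bound := fun _ => (1:ℝ))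
    · refine Filter.Eventually.of_forall (fun t => ?_)
      apply Continuous.aestronglyMeasurable
      exact ((fm_continuous y w hn).sub
        (fm_continuous y (Function.update w j (w j + t)) hn)).div_const t
    · filter_upwards [self_mem_nhdsWithin] with t ht
      rw [Set.mem_Ioi] at ht
      filter_upwards with x
      rw [Real.norm_eq_abs, hq]
      simp only
      rw [abs_div, abs_of_pos ht, div_le_one ht]
      rw [fm_update_pos y w hn j t ht.le x]
      have h1 : fm y w hn x ≤ ‖x - y j‖ - w j := fm_le y w hn x j
      rw [abs_le]
      constructor
      · have : min (fm y w hn x) (‖x - y j‖ - w j - t) ≤ fm y w hn x := min_le_left _ _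
        linarith
      · have : fm y w hn x - t ≤ min (fm y w hn x) (‖x - y j‖ - w j - t) := by
          apply le_min <;> linarith
        linarith
    · exact integrable_const 1
    · refine Filter.Eventually.of_forall (fun x => ?_)
      by_cases hxV : x ∈ V
      · have hfmx : fm y w hn x = ‖x - y j‖ - w j := by
          apply le_antisymm (fm_le y w hn x j)
          exact Finset.le_inf' hn _ (fun k _ => hxV k)
        have : ∀ᶠ t in nhdsWithin 0 (Set.Ioi 0), q t x = 1 := by
          filter_upwards [self_mem_nhdsWithin] with t ht
          rw [Set.mem_Ioi] at ht
          rw [hq]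
          simp only
          rw [fm_update_pos y w hn j t ht.le x, ← hfmx,
            min_eq_right (by linarith : fm y w hn x - t ≤ fm y w hn x)]
          field_simp
          ring
        rw [Set.indicator_of_mem hxV]
        exact Filter.Tendsto.congr' (this.mono fun t h => h.symm) tendsto_const_nhds
      · have hr : 0 < (‖x - y j‖ - w j) - fm y w hn x := by
          rw [hV, Set.mem_setOf_eq] at hxV
          push_neg at hxV
          obtain ⟨k, hk⟩ := hxV
          have h2 : fm y w hn x ≤ ‖x - y k‖ - w k := fm_le y w hn x k
          linarith
        have : ∀ᶠ t in nhdsWithin 0 (Set.Ioi 0), q t x = 0 := by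
          have hmem : Set.Ioo 0 ((‖x - y j‖ - w j) - fm y w hn x) ∈ nhdsWithin 0 (Set.Ioi 0) :=
            Ioo_mem_nhdsGT_of_mem ⟨le_refl _, hr⟩
          filter_upwards [hmem] with t ht
          obtain ⟨ht0, htr⟩ := ht
          rw [hq]
          simp only
          rw [fm_update_pos y w hn j t ht0.le x,
            min_eq_left (by linarith : fm y w hn x ≤ ‖x - y j‖ - w j - t)]
          simp
        rw [Set.indicator_of_notMem hxV]
        exact Filter.Tendsto.congr' (this.mono fun t h => h.symm) tendsto_const_nhds
  have hind : ∫ x, V.indicator (fun _ => (1:ℝ)) x ∂μ = (μ V).toReal := by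
    rw [MeasureTheory.integral_indicator_const (1:ℝ) hVmeas, smul_eq_mul, mul_one]
    rfl
  rw [hind] at htend
  exact ge_of_tendsto htend (by
    filter_upwards [self_mem_nhdsWithin] with t ht
    exact hqle t (Set.mem_Ioi.mp ht))

lemma measure_strict_cell_le (y : Fin n → Esp) (a : Fin n → ℝ)
    (hn : (Finset.univ : Finset (Fin n)).Nonempty)
    (μ : Measure Esp) [IsProbabilityMeasure μ] (hμint : Integrable (fun x => ‖x‖) μ)
    (w : Fin n → ℝ)
    (hmax : ∀ v : Fin n → ℝ,
      (∑ k, a k * v k) + ∫ x, fm y v hn x ∂μ ≤ (∑ k, a k * w k) + ∫ x, fm y w hn x ∂μ)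
    (j : Fin n) :
    (μ {x | ∀ k, k ≠ j → ‖x - y j‖ - w j < ‖x - y k‖ - w k}).toReal ≤ a j := by
  set U := {x : Esp | ∀ k, k ≠ j → ‖x - y j‖ - w j < ‖x - y k‖ - w k} with hU
  have hUmeas := strict_cell_measurable y w j
  set p : ℝ → Esp → ℝ :=
    fun t x => (fm y (Function.update w j (w j - t)) hn x - fm y w hn x) / t with hp
  have hmono : ∀ t : ℝ, 0 ≤ t → ∀ x, fm y w hn x ≤ fm y (Function.update w j (w j - t)) hn x := by
    intro t ht x
    have := inf'_le_inf'_add Finset.univ hn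
      (fun k => ‖x - y k‖ - w k)
      (fun k => ‖x - y k‖ - Function.update w j (w j - t) k) 0 (fun k _ => ?_)
    · rw [add_zero] at this; exact this
    · rcases eq_or_ne k j with rfl | hkj
      · simp only [Function.update_self]; linarith
      · simp only [Function.update_of_ne hkj]; linarith
  have hub : ∀ t : ℝ, 0 ≤ t → ∀ x,
      fm y (Function.update w j (w j - t)) hn x ≤ fm y w hn x + t := by
    intro t ht x
    refine inf'_le_inf'_add Finset.univ hn _ _ t (fun k _ => ?_)
    rcases eq_or_ne k j with rfl | hkj
    · simp only [Function.update_self]; linarith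
    · simp only [Function.update_of_ne hkj]; linarith
  have hple : ∀ t : ℝ, 0 < t → ∫ x, p t x ∂μ ≤ a j := by
    intro t ht
    have h1 := hmax (Function.update w j (w j - t))
    rw [sum_update_mul a w j (w j - t)] at h1
    have h2 : ∫ x, fm y (Function.update w j (w j - t)) hn x ∂μ - ∫ x, fm y w hn x ∂μ
        ≤ a j * t := by nlinarith [h1]
    rw [hp]
    simp only
    rw [integral_div, div_le_iff₀ ht,
      integral_sub (fm_integrable y (Function.update w j (w j - t)) hn μ hμint)
        (fm_integrable y w hn μ hμint)]
    linarith
  have htend : Filter.Tendsto (fun t => ∫ x, p t x ∂μ) (nhdsWithin 0 (Set.Ioi 0))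
      (nhds (∫ x, U.indicator (fun _ => (1:ℝ)) x ∂μ)) := by
    apply MeasureTheory.tendsto_integral_filter_of_dominated_convergence
      (bound := fun _ => (1:ℝ))
    · refine Filter.Eventually.of_forall (fun t => ?_)
      apply Continuous.aestronglyMeasurable
      exact ((fm_continuous y (Function.update w j (w j - t)) hn).sub
        (fm_continuous y w hn)).div_const t
    · filter_upwards [self_mem_nhdsWithin] with t ht
      rw [Set.mem_Ioi] at ht
      filter_upwards with x
      rw [Real.norm_eq_abs, hp]
      simp only
      rw [abs_div, abs_of_pos ht, div_le_one ht, abs_le]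
      constructor
      · have := hmono t ht.le x; linarith
      · have := hub t ht.le x; linarith
    · exact integrable_const 1
    · refine Filter.Eventually.of_forall (fun x => ?_)
      by_cases hxU : x ∈ U
      · -- eventually p t x = 1
        have heventually : ∀ᶠ t in nhdsWithin 0 (Set.Ioi 0), p t x = 1 := by
          rcases Finset.eq_empty_or_nonempty (Finset.univ.erase j) with herase | herase
          · -- n = 1 : the update always attains the inf
            filter_upwards [self_mem_nhdsWithin] with t ht
            rw [Set.mem_Ioi] at ht
            have hall : ∀ k : Fin n, k = j := by
              intro k
              by_contra hkj
              exact absurd herase (Finset.ne_empty_of_mem (Finset.mem_erase.mpr ⟨hkj, Finset.mem_univ k⟩))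
            have h1 : fm y (Function.update w j (w j - t)) hn x = ‖x - y j‖ - w j + t := by
              apply le_antisymm
              · have := fm_le y (Function.update w j (w j - t)) hn x j
                rw [Function.update_self] at this
                linarith
              · refine Finset.le_inf' hn _ (fun k _ => ?_)
                rw [hall k]; simp only [Function.update_self]; linarith
            have h2 : fm y w hn x = ‖x - y j‖ - w j := by
              apply le_antisymm (fm_le y w hn x j)
              refine Finset.le_inf' hn _ (fun k _ => ?_)
              rw [hall k]
            rw [hp]; simp only
            rw [h1, h2]
            field_simp
            ring
          · set δ : ℝ := (Finset.univ.erase j).inf' herase (fun k => ‖x - y k‖ - w k)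
              - (‖x - y j‖ - w j) with hδ
            have hδpos : 0 < δ := by
              rw [hδ, sub_pos, Finset.lt_inf'_iff]
              intro k hk
              exact hxU k (Finset.mem_erase.mp hk).1
            have hmem : Set.Ioo 0 δ ∈ nhdsWithin 0 (Set.Ioi 0) :=
              Ioo_mem_nhdsGT_of_mem ⟨le_refl _, hδpos⟩
            filter_upwards [hmem] with t htm
            obtain ⟨ht0, htδ⟩ := htm
            have h2 : fm y w hn x = ‖x - y j‖ - w j := by
              apply le_antisymm (fm_le y w hn x j)
              refine Finset.le_inf' hn _ (fun k _ => ?_)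
              rcases eq_or_ne k j with rfl | hkj
              · exact le_refl _
              · exact (hxU k hkj).le
            have h1 : fm y (Function.update w j (w j - t)) hn x = ‖x - y j‖ - w j + t := by
              apply le_antisymm
              · have := fm_le y (Function.update w j (w j - t)) hn x j
                rw [Function.update_self] at this
                linarith
              · refine Finset.le_inf' hn _ (fun k _ => ?_)
                rcases eq_or_ne k j with rfl | hkj
                · simp only [Function.update_self]; linarith
                · simp only [Function.update_of_ne hkj]
                  have : (Finset.univ.erase j).inf' herase (fun k => ‖x - y k‖ - w k)
                      ≤ ‖x - y k‖ - w k :=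
                    Finset.inf'_le _ (Finset.mem_erase.mpr ⟨hkj, Finset.mem_univ k⟩)
                  linarith
            rw [hp]; simp only
            rw [h1, h2]
            field_simp
            ring
        rw [Set.indicator_of_mem hxU]
        exact Filter.Tendsto.congr' (heventually.mono fun t h => h.symm) tendsto_const_nhds
      · -- p t x = 0 for all t > 0
        have heventually : ∀ᶠ t in nhdsWithin 0 (Set.Ioi 0), p t x = 0 := by
          filter_upwards [self_mem_nhdsWithin] with t ht
          rw [Set.mem_Ioi] at ht
          rw [hU, Set.mem_setOf_eq] at hxU
          push_neg at hxU
          obtain ⟨k, hkj, hk⟩ := hxU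
          have heq : fm y (Function.update w j (w j - t)) hn x = fm y w hn x := by
            apply le_antisymm
            · obtain ⟨k₀, _, hk₀⟩ := Finset.exists_mem_eq_inf' hn (fun m => ‖x - y m‖ - w m)
              rcases eq_or_ne j k₀ with rfl | hk₀j
              · -- the min of fm w is attained at j; but also at k ≠ j
                have h3 : fm y w hn x = ‖x - y j‖ - w j := hk₀
                have h4 : fm y w hn x ≤ ‖x - y k‖ - w k := fm_le y w hn x k
                have h5 : ‖x - y k‖ - w k = fm y w hn x := by linarith
                have := fm_le y (Function.update w j (w j - t)) hn x k
                simp only [Function.update_of_ne hkj] at this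
                linarith
              · have := fm_le y (Function.update w j (w j - t)) hn x k₀
                simp only [Function.update_of_ne (Ne.symm hk₀j)] at this
                rw [← hk₀] at this
                exact this
            · exact hmono t ht.le x
          rw [hp]; simp only
          rw [heq]
          simp
        rw [Set.indicator_of_notMem hxU]
        exact Filter.Tendsto.congr' (heventually.mono fun t h => h.symm) tendsto_const_nhds
  have hind : ∫ x, U.indicator (fun _ => (1:ℝ)) x ∂μ = (μ U).toReal := by
    rw [MeasureTheory.integral_indicator_const (1:ℝ) hUmeas, smul_eq_mul, mul_one]
    rfl
  rw [hind] at htend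
  exact le_of_tendsto htend (by
    filter_upwards [self_mem_nhdsWithin] with t ht
    exact hple t (Set.mem_Ioi.mp ht))

lemma exists_weights (hd : 2 ≤ d)
    (hn : (Finset.univ : Finset (Fin n)).Nonempty)
    (μ : Measure Esp) [IsProbabilityMeasure μ] (hac : μ ≪ volume)
    (hμint : Integrable (fun x => ‖x‖) μ)
    (y : Fin n → Esp) (hy : Function.Injective y)
    (a : Fin n → ℝ) (hapos : ∀ j, 0 < a j) (hsum : ∑ j, a j = 1) :
    ∃ w : Fin n → ℝ, ∀ j,
      μ {x | ∀ k, ‖x - y j‖ - w j ≤ ‖x - y k‖ - w k} = ENNReal.ofReal (a j) := by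
  obtain ⟨w, hmax⟩ := exists_global_max y a hn μ hμint hapos hsum
  refine ⟨w, fun j => ?_⟩
  have h1 := le_measure_cell y a hn μ hμint w hmax j
  have h2 := measure_strict_cell_le y a hn μ hμint w hmax j
  set V := {x : Esp | ∀ k, ‖x - y j‖ - w j ≤ ‖x - y k‖ - w k} with hV
  set U := {x : Esp | ∀ k, k ≠ j → ‖x - y j‖ - w j < ‖x - y k‖ - w k} with hU
  have hUV : U ⊆ V := by
    intro x hx k
    rcases eq_or_ne k j with rfl | hkj
    · exact le_refl _
    · exact (hx k hkj).le
  have hdiff : μ (V \ U) = 0 := by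
    have hsubset : V \ U ⊆
        ⋃ k : Fin n, {x : Esp | k ≠ j ∧ ‖x - y j‖ - ‖x - y k‖ = w j - w k} := by
      rintro x ⟨hxV, hxU⟩
      rw [hU, Set.mem_setOf_eq] at hxU
      push_neg at hxU
      obtain ⟨k, hkj, hk⟩ := hxU
      refine Set.mem_iUnion.mpr ⟨k, hkj, ?_⟩
      have := hxV k
      linarith
    refine measure_mono_null hsubset (measure_iUnion_null fun k => ?_)
    rcases eq_or_ne k j with rfl | hkj
    · convert measure_empty
      · ext x; simp
      · infer_instance
    · refine measure_mono_null (fun x hx => hx.2) (hac ?_)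
      exact tie_null hd (y j) (y k) (fun h => hkj (hy h).symm) (w j - w k)
  have hVU : μ U = μ V := measure_eq_measure_of_null_diff hUV hdiff
  have hfin : μ V ≠ ⊤ := measure_ne_top μ V
  have htr : (μ V).toReal = a j := by
    have h3 : (μ U).toReal = (μ V).toReal := congrArg ENNReal.toReal hVU
    linarith
  rw [← ENNReal.ofReal_toReal hfin, htr]

/-- In the semi-discrete setting with Euclidean cost there is a
solution to Monge's problem, unique up to `μ`-null sets: a measurable map `T` with
`T₋#μ = ν` minimizing `∫ ‖x - T x‖ dμ` over all transport maps, and any other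
minimizer agrees with `T` `μ`-almost everywhere. -/
theorem semidiscrete_monge_exists_unique
    {d n : ℕ} (hd : 2 ≤ d)
    (μ : Measure (EuclideanSpace ℝ (Fin d))) [IsProbabilityMeasure μ]
    (hac : μ ≪ volume)
    (hμint : Integrable (fun x => ‖x‖) μ)
    (y : Fin n → EuclideanSpace ℝ (Fin d)) (hy : Function.Injective y)
    (a : Fin n → ℝ) (ha : ∀ j, a j ∈ Set.Ioc (0 : ℝ) 1) (hsum : ∑ j, a j = 1)
    (ν : Measure (EuclideanSpace ℝ (Fin d)))
    (hν : ν = ∑ j, ENNReal.ofReal (a j) • Measure.dirac (y j)) :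
    ∃ T : EuclideanSpace ℝ (Fin d) → EuclideanSpace ℝ (Fin d),
      Measurable T ∧ μ.map T = ν ∧
      (∀ S : EuclideanSpace ℝ (Fin d) → EuclideanSpace ℝ (Fin d),
        Measurable S → μ.map S = ν →
        ∫ x, ‖x - T x‖ ∂μ ≤ ∫ x, ‖x - S x‖ ∂μ) ∧
      (∀ S : EuclideanSpace ℝ (Fin d) → EuclideanSpace ℝ (Fin d),
        Measurable S → μ.map S = ν →
        ∫ x, ‖x - S x‖ ∂μ = ∫ x, ‖x - T x‖ ∂μ → S =ᵐ[μ] T) := by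
  classical
  -- n is positive
  have hn0 : n ≠ 0 := by
    rintro rfl
    simp at hsum
  have : Nonempty (Fin n) := ⟨⟨0, Nat.pos_of_ne_zero hn0⟩⟩
  have hne : (Finset.univ : Finset (Fin n)).Nonempty := Finset.univ_nonempty
  have hapos : ∀ j, 0 < a j := fun j => (ha j).1
  -- optimal weights
  obtain ⟨w, hw⟩ := exists_weights hd hne μ hac hμint y hy a hapos hsum
  set V : Fin n → Set (EuclideanSpace ℝ (Fin d)) := fun j => {x | ∀ k, ‖x - y j‖ - w j ≤ ‖x - y k‖ - w k} with hV
  have hVmeas : ∀ j, MeasurableSet (V j) := fun j => cell_measurable y w j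
  have htie : ∀ j k, j ≠ k → μ {x : (EuclideanSpace ℝ (Fin d)) | ‖x - y j‖ - ‖x - y k‖ = w j - w k} = 0 :=
    fun j k hjk => hac (tie_null hd (y j) (y k) (hy.ne hjk) (w j - w k))
  -- the partition into cells with ties broken by smallest index
  set B : Fin n → Set (EuclideanSpace ℝ (Fin d)) := fun j => V j \ ⋃ k : Fin n, ⋃ (_ : k < j), V k with hB
  have hBmeas : ∀ j, MeasurableSet (B j) := fun j =>
    (hVmeas j).diff (MeasurableSet.iUnion fun k => MeasurableSet.iUnion fun _ => hVmeas k)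
  have hBV : ∀ j, B j ⊆ V j := fun j => Set.diff_subset
  have hBdisj : ∀ j k, j ≠ k → ∀ x, x ∈ B j → x ∈ B k → False := by
    intro j k hjk x hxj hxk
    rcases lt_or_gt_of_ne hjk with h | h
    · exact hxk.2 (Set.mem_iUnion.mpr ⟨j, Set.mem_iUnion.mpr ⟨h, hxj.1⟩⟩)
    · exact hxj.2 (Set.mem_iUnion.mpr ⟨k, Set.mem_iUnion.mpr ⟨h, hxk.1⟩⟩)
  have hex : ∀ x : (EuclideanSpace ℝ (Fin d)), ∃ j, x ∈ B j := by
    intro x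
    have hF : (Finset.univ.filter (fun j => x ∈ V j)).Nonempty := by
      obtain ⟨j₀, _, hj₀⟩ := Finset.exists_mem_eq_inf' hne (fun k => ‖x - y k‖ - w k)
      refine ⟨j₀, Finset.mem_filter.mpr ⟨Finset.mem_univ _, fun k => ?_⟩⟩
      rw [← hj₀]
      exact Finset.inf'_le _ (Finset.mem_univ k)
    set j₁ := (Finset.univ.filter (fun j => x ∈ V j)).min' hF with hj₁
    have hj₁V : x ∈ V j₁ :=
      (Finset.mem_filter.mp ((Finset.univ.filter (fun j => x ∈ V j)).min'_mem hF)).2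
    refine ⟨j₁, hj₁V, ?_⟩
    intro hmem
    obtain ⟨k, hk⟩ := Set.mem_iUnion.mp hmem
    obtain ⟨hklt, hkV⟩ := Set.mem_iUnion.mp hk
    have : j₁ ≤ k := Finset.min'_le _ k (Finset.mem_filter.mpr ⟨Finset.mem_univ _, hkV⟩)
    exact absurd hklt (not_lt.mpr this)
  -- the transport map
  set T : (EuclideanSpace ℝ (Fin d)) → (EuclideanSpace ℝ (Fin d)) := fun x => ∑ j, Set.indicator (B j) (fun _ => (1:ℝ)) x • y j with hT
  have hTB : ∀ j, ∀ x ∈ B j, T x = y j := by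
    intro j x hx
    rw [hT]
    simp only
    rw [Finset.sum_eq_single_of_mem j (Finset.mem_univ j)]
    · rw [Set.indicator_of_mem hx, one_smul]
    · intro k _ hkj
      rw [Set.indicator_of_notMem (fun hxk => hBdisj k j hkj x hxk hx), zero_smul]
  have hTmeas : Measurable T := by
    rw [hT]
    refine Finset.measurable_sum _ (fun j _ => ?_)
    exact (measurable_const.indicator (hBmeas j)).smul_const (y j)
  -- μ (B j) = ofReal (a j)
  have hμB : ∀ j, μ (B j) = ENNReal.ofReal (a j) := by
    intro j
    rw [← hw j]
    refine measure_eq_measure_of_null_diff (hBV j) ?_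
    have hsubset : V j \ B j ⊆
        ⋃ k : Fin n, {x : (EuclideanSpace ℝ (Fin d)) | k ≠ j ∧ ‖x - y j‖ - ‖x - y k‖ = w j - w k} := by
      rintro x ⟨hxV, hxB⟩
      have hxmem : x ∈ ⋃ k : Fin n, ⋃ (_ : k < j), V k := by
        by_contra hcon
        exact hxB ⟨hxV, hcon⟩
      obtain ⟨k, hk⟩ := Set.mem_iUnion.mp hxmem
      obtain ⟨hklt, hkV⟩ := Set.mem_iUnion.mp hk
      refine Set.mem_iUnion.mpr ⟨k, ne_of_lt hklt, ?_⟩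
      have h1 := hxV k
      have h2 := hkV j
      linarith
    refine measure_mono_null hsubset (measure_iUnion_null fun k => ?_)
    rcases eq_or_ne k j with rfl | hkj
    · convert measure_empty
      · ext x; simp
      · infer_instance
    · exact measure_mono_null (fun x hx => hx.2) (htie j k (Ne.symm hkj))
  -- pushforward is ν
  have hmapT : μ.map T = ν := by
    refine Measure.ext fun s hs => ?_
    rw [Measure.map_apply hTmeas hs, hν]
    have hpre : T ⁻¹' s = ⋃ j ∈ Finset.univ.filter (fun j => y j ∈ s), B j := by
      ext x
      obtain ⟨j₀, hj₀⟩ := hex x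
      simp only [Set.mem_preimage, Set.mem_iUnion, Finset.mem_filter, Finset.mem_univ, true_and]
      constructor
      · intro hTx
        exact ⟨j₀, by rwa [hTB j₀ x hj₀] at hTx, hj₀⟩
      · rintro ⟨k, hk, hxk⟩
        rwa [hTB k x hxk]
    rw [hpre, measure_biUnion_finset ?_ (fun j _ => hBmeas j)]
    · rw [Measure.finset_sum_apply]
      rw [Finset.sum_filter]
      refine Finset.sum_congr rfl (fun j _ => ?_)
      rw [Measure.smul_apply, Measure.dirac_apply' _ hs, smul_eq_mul]
      by_cases hyj : y j ∈ s
      · rw [if_pos hyj, Set.indicator_of_mem hyj, hμB j]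
        simp
      · rw [if_neg hyj, Set.indicator_of_notMem hyj]
        simp
    · intro j _ k _ hjk
      exact Set.disjoint_left.mpr (fun x hxj hxk => hBdisj j k hjk x hxj hxk)
  -- the weight function on the target points
  set wf : (EuclideanSpace ℝ (Fin d)) → ℝ := fun z => ∑ j, if z = y j then w j else 0 with hwf
  have hwf_meas : Measurable wf := by
    refine Finset.measurable_sum _ (fun j _ => ?_)
    refine Measurable.ite ?_ measurable_const measurable_const
    have : {z : (EuclideanSpace ℝ (Fin d)) | z = y j} = {y j} := by ext z; simp
    rw [this]
    exact measurableSet_singleton _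
  have hwf_y : ∀ j, wf (y j) = w j := by
    intro j
    rw [hwf]
    simp only
    rw [Finset.sum_eq_single_of_mem j (Finset.mem_univ j)]
    · rw [if_pos rfl]
    · intro k _ hkj
      rw [if_neg (fun h => hkj (hy h).symm)]
  have hwf_bd : ∀ z, |wf z| ≤ ∑ j, |w j| := by
    intro z
    refine le_trans (Finset.abs_sum_le_sum_abs _ _) (Finset.sum_le_sum (fun j _ => ?_))
    by_cases h : z = y j
    · rw [if_pos h]
    · rw [if_neg h]; simp [abs_nonneg]
  -- facts about an arbitrary transport map S
  have hSfacts : ∀ S : (EuclideanSpace ℝ (Fin d)) → (EuclideanSpace ℝ (Fin d)), Measurable S → μ.map S = ν →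
      (∀ᵐ x ∂μ, ∃ j, S x = y j) ∧ Integrable (fun x => ‖x - S x‖) μ ∧
      Integrable (fun x => wf (S x)) μ ∧
      ∫ x, wf (S x) ∂μ = ∑ j, a j * w j := by
    intro S hS hmapS
    have hrange : μ (S ⁻¹' (Set.range y)ᶜ) = 0 := by
      have hmr : MeasurableSet ((Set.range y)ᶜ) := (Set.finite_range y).measurableSet.compl
      rw [← Measure.map_apply hS hmr, hmapS, hν, Measure.finset_sum_apply]
      refine Finset.sum_eq_zero (fun j _ => ?_)
      rw [Measure.smul_apply, Measure.dirac_apply' _ hmr,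
        Set.indicator_of_notMem (by simp [Set.mem_range_self])]
      simp
    have hA : ∀ᵐ x ∂μ, ∃ j, S x = y j := by
      rw [ae_iff]
      convert hrange using 2
      ext x
      simp only [Set.mem_setOf_eq, Set.mem_preimage, Set.mem_compl_iff, Set.mem_range]
      push_neg
      constructor
      · intro h j hj; exact h j hj.symm
      · intro h j hj; exact h j hj.symm
    have hB1 : Integrable (fun x => ‖x - S x‖) μ := by
      refine Integrable.mono' (hμint.add (integrable_const
        (Finset.univ.sup' hne (fun j => ‖y j‖))))
        ((measurable_id.sub hS).norm.aestronglyMeasurable) ?_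
      filter_upwards [hA] with x hx
      obtain ⟨j, hj⟩ := hx
      rw [Real.norm_eq_abs, abs_of_nonneg (norm_nonneg _), hj]
      exact le_trans (norm_sub_le _ _) (add_le_add_right
        (Finset.le_sup' (fun j => ‖y j‖) (Finset.mem_univ j)) _)
    have hB2 : Integrable (fun x => wf (S x)) μ := by
      refine Integrable.mono' (integrable_const (∑ j, |w j|))
        ((hwf_meas.comp hS).aestronglyMeasurable) ?_
      filter_upwards with x
      rw [Real.norm_eq_abs]
      exact hwf_bd (S x)
    have hC : ∫ x, wf (S x) ∂μ = ∑ j, a j * w j := by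
      have h1 : ∫ x, wf (S x) ∂μ = ∫ z, wf z ∂(μ.map S) :=
        (integral_map hS.aemeasurable hwf_meas.aestronglyMeasurable).symm
      rw [h1, hmapS, hν]
      have hint_dirac : ∀ j : Fin n, Integrable wf
          (ENNReal.ofReal (a j) • Measure.dirac (y j)) := by
        intro j
        refine Integrable.smul_measure ?_ ENNReal.ofReal_ne_top
        refine Integrable.mono' (integrable_const (∑ j, |w j|))
          hwf_meas.aestronglyMeasurable ?_
        filter_upwards with z
        rw [Real.norm_eq_abs]
        exact hwf_bd z
      rw [integral_finset_sum_measure (fun j _ => hint_dirac j)]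
      refine Finset.sum_congr rfl (fun j _ => ?_)
      rw [integral_smul_measure, integral_dirac' wf (y j) hwf_meas.stronglyMeasurable,
        hwf_y j, ENNReal.toReal_ofReal (hapos j).le, smul_eq_mul]
    exact ⟨hA, hB1, hB2, hC⟩
  -- cost of T equals the dual value
  have hTf : ∀ x, ‖x - T x‖ - wf (T x) = fm y w hne x := by
    intro x
    obtain ⟨j₀, hj₀⟩ := hex x
    rw [hTB j₀ x hj₀, hwf_y j₀]
    apply le_antisymm
    · apply Finset.le_inf' hne
      intro k _
      exact hBV j₀ hj₀ k
    · exact fm_le y w hne x j₀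
  have hTcost : ∫ x, ‖x - T x‖ ∂μ = (∫ x, fm y w hne x ∂μ) + ∑ j, a j * w j := by
    obtain ⟨_, hTint, hTwint, hTwf⟩ := hSfacts T hTmeas hmapT
    have h1 : ∫ x, (‖x - T x‖ - wf (T x)) ∂μ = ∫ x, fm y w hne x ∂μ :=
      integral_congr_ae (Filter.Eventually.of_forall hTf)
    rw [integral_sub hTint hTwint] at h1
    rw [← hTwf]
    linarith
  refine ⟨T, hTmeas, hmapT, ?_, ?_⟩
  · -- optimality
    intro S hS hmapS
    obtain ⟨hA, hB1, hB2, hC⟩ := hSfacts S hS hmapS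
    have hpt : ∀ᵐ x ∂μ, fm y w hne x ≤ ‖x - S x‖ - wf (S x) := by
      filter_upwards [hA] with x hx
      obtain ⟨j, hj⟩ := hx
      rw [hj, hwf_y j]
      exact fm_le y w hne x j
    have h2 : ∫ x, fm y w hne x ∂μ ≤ ∫ x, (‖x - S x‖ - wf (S x)) ∂μ :=
      integral_mono_ae (fm_integrable y w hne μ hμint) (hB1.sub hB2) hpt
    rw [integral_sub hB1 hB2] at h2
    rw [hTcost]
    linarith
  · -- uniqueness
    intro S hS hmapS hcost
    obtain ⟨hA, hB1, hB2, hC⟩ := hSfacts S hS hmapS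
    have hGf : (fun x => (‖x - S x‖ - wf (S x)) - fm y w hne x) =ᵐ[μ] 0 := by
      rw [← integral_eq_zero_iff_of_nonneg_ae]
      · have h1 : ∫ x, ((‖x - S x‖ - wf (S x)) - fm y w hne x) ∂μ
            = (∫ x, (‖x - S x‖ - wf (S x)) ∂μ) - ∫ x, fm y w hne x ∂μ :=
          integral_sub (hB1.sub hB2) (fm_integrable y w hne μ hμint)
        rw [h1, integral_sub hB1 hB2]
        rw [hTcost] at hcost
        linarith
      · filter_upwards [hA] with x hx
        obtain ⟨j, hj⟩ := hx
        simp only [Pi.zero_apply]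
        rw [hj, hwf_y j]
        have := fm_le y w hne x j
        linarith
      · exact (hB1.sub hB2).sub (fm_integrable y w hne μ hμint)
    have hnotie : ∀ᵐ x ∂μ, ∀ j k, j ≠ k → ‖x - y j‖ - ‖x - y k‖ ≠ w j - w k := by
      rw [ae_iff]
      refine measure_mono_null
        (t := ⋃ j : Fin n, ⋃ k : Fin n,
          {x : EuclideanSpace ℝ (Fin d) | j ≠ k ∧ ‖x - y j‖ - ‖x - y k‖ = w j - w k})
        (fun x hx => ?_)
        (measure_iUnion_null (fun j => measure_iUnion_null (fun k => ?_)))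
      · simp only [Set.mem_setOf_eq] at hx
        push_neg at hx
        obtain ⟨j, k, hjk, hx⟩ := hx
        exact Set.mem_iUnion.mpr ⟨j, Set.mem_iUnion.mpr
          ⟨k, Set.mem_setOf_eq ▸ ⟨hjk, hx⟩⟩⟩
      · rcases eq_or_ne j k with rfl | hjk
        · convert measure_empty
          · ext x; simp
          · infer_instance
        · exact measure_mono_null (fun x hx => hx.2) (htie j k hjk)
    filter_upwards [hA, hGf, hnotie] with x hx hGx htiex
    obtain ⟨j, hj⟩ := hx
    obtain ⟨j₀, hj₀⟩ := hex x
    have hTx : T x = y j₀ := hTB j₀ x hj₀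
    have hfmj : ‖x - y j‖ - w j = fm y w hne x := by
      simp only [Pi.zero_apply] at hGx
      rw [hj, hwf_y j] at hGx
      linarith
    have hfmj₀ : ‖x - y j₀‖ - w j₀ = fm y w hne x := by
      apply le_antisymm ?_ (fm_le y w hne x j₀)
      apply Finset.le_inf' hne
      intro k _
      exact hBV j₀ hj₀ k
    rcases eq_or_ne j j₀ with rfl | hjj₀
    · rw [hj, hTx]
    · exfalso
      exact htiex j j₀ hjj₀ (by linarith)
end
end

section
/- In the semi-discrete setting with Euclidean cost, the Monge–Kantorovich problem has a unique optimal transport plan, and this plan is deterministic: there is a measurable map T* with T*_{#}μ = ν such that the coupling π_{T*} defined by π_{T*}(A × B) = μ(A ∩ T*^{−1}(B)) is the unique minimizer of ∫ ‖x − y‖ dπ(x,y) over all couplings π of μ and ν, and W_1(μ,ν) = ∫ ‖x − T*(x)‖ dμ(x). -/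
open MeasureTheory ENNReal

noncomputable section


/-- If every line in direction `u` (a unit vector) meets `S` in a finite set, then `S` is null. -/
lemma null_of_finite_line_slices {d' : ℕ} {S : Set (EuclideanSpace ℝ (Fin (d' + 1)))}
    (hS : MeasurableSet S) (u : EuclideanSpace ℝ (Fin (d' + 1))) (hu : ‖u‖ = 1)
    (h : ∀ x, {t : ℝ | x + t • u ∈ S}.Finite) : volume S = 0 := by
  -- build an orthonormal basis whose 0-th vector is `u`
  obtain ⟨b, hb⟩ : ∃ b : OrthonormalBasis (Fin (d' + 1)) ℝ (EuclideanSpace ℝ (Fin (d' + 1))),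
      ∀ i ∈ ({0} : Set (Fin (d' + 1))), b i = (fun _ => u) i := by
    apply Orthonormal.exists_orthonormalBasis_extension_of_card_eq
    · simp [finrank_euclideanSpace]
    · constructor
      · rintro ⟨i, hi⟩
        simpa [Set.restrict] using hu
      · rintro ⟨i, hi⟩ ⟨j, hj⟩ hij
        exact absurd (Subtype.ext (hi.trans hj.symm)) hij
  have hb0 : b 0 = u := hb 0 rfl
  set me : EuclideanSpace ℝ (Fin (d' + 1)) ≃ᵐ ℝ × (Fin d' → ℝ) :=
    (b.measurableEquiv.trans ((MeasurableEquiv.toLp 2 (Fin (d' + 1) → ℝ)).symm)).trans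
      (MeasurableEquiv.piFinSuccAbove (fun _ => ℝ) 0) with hme
  have mp : MeasurePreserving me volume volume := by
    have h1 := b.measurePreserving_measurableEquiv
    have h2 := EuclideanSpace.volume_preserving_symm_measurableEquiv_toLp (Fin (d' + 1))
    have h3 := volume_preserving_piFinSuccAbove (fun _ : Fin (d' + 1) => ℝ) 0
    have : ⇑me = (MeasurableEquiv.piFinSuccAbove (fun _ => ℝ) 0) ∘
        ((MeasurableEquiv.toLp 2 (Fin (d' + 1) → ℝ)).symm) ∘ b.measurableEquiv := by
      rw [hme]; rfl
    rw [this]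
    exact h3.comp (h2.comp h1)
  -- key formula : `me` maps translates along `u` to translates in the first coordinate
  have key : ∀ (x : EuclideanSpace ℝ (Fin (d' + 1))) (t : ℝ),
      me (x + t • u) = ((me x).1 + t, (me x).2) := by
    intro x t
    have hrepr : b.repr (x + t • u) = b.repr x + t • EuclideanSpace.single 0 1 := by
      rw [map_add, LinearIsometryEquiv.map_smul, ← hb0, b.repr_self]
    have : ∀ z : EuclideanSpace ℝ (Fin (d' + 1)),
        me z = ((b.repr z) 0, fun j => (b.repr z) ((0 : Fin (d' + 1)).succAbove j)) := by
      intro z; rfl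
    rw [this, this, hrepr]
    have hne : ∀ j : Fin d', (0 : Fin (d' + 1)).succAbove j ≠ 0 := fun j => Fin.succAbove_ne _ j
    refine Prod.ext ?_ (funext fun j => ?_)
    · simp [PiLp.add_apply, PiLp.smul_apply, EuclideanSpace.single_apply]
    · simp [PiLp.add_apply, PiLp.smul_apply, EuclideanSpace.single_apply, Fin.succ_ne_zero j]
  have hsymm : ∀ (t : ℝ) (r : Fin d' → ℝ), me.symm (t, r) = me.symm (0, r) + t • u := by
    intro t r
    apply me.injective
    rw [key (me.symm (0, r)) t, me.apply_symm_apply, me.apply_symm_apply, zero_add]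
  set S1 : Set (ℝ × (Fin d' → ℝ)) := me.symm ⁻¹' S with hS1
  have hS1m : MeasurableSet S1 := me.symm.measurable hS
  have hvol : volume S1 = volume S := (mp.symm me).measure_preimage hS.nullMeasurableSet
  set S2 : Set ((Fin d' → ℝ) × ℝ) := Prod.swap ⁻¹' S1 with hS2
  have hS2m : MeasurableSet S2 := measurable_swap hS1m
  have hswap : volume S2 = volume S1 := by
    rw [Measure.volume_eq_prod, Measure.volume_eq_prod]
    exact Measure.measurePreserving_swap.measure_preimage hS1m.nullMeasurableSet
  rw [← hvol, ← hswap, Measure.volume_eq_prod, Measure.measure_prod_null hS2m]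
  refine Filter.Eventually.of_forall (fun r => ?_)
  have hset : Prod.mk r ⁻¹' S2 = {t : ℝ | me.symm (0, r) + t • u ∈ S} := by
    ext t
    simp only [hS2, hS1, Set.mem_preimage, Set.mem_setOf_eq, Prod.swap_prod_mk, hsymm t r]
  show volume (Prod.mk r ⁻¹' S2) = 0
  rw [hset]
  exact Set.Finite.measure_zero (h _) volume

/-- Level sets of differences of distances to two distinct points are Lebesgue-null (d ≥ 2). -/
lemma norm_diff_level_null {d : ℕ} (hd : 2 ≤ d) (p q : EuclideanSpace ℝ (Fin d))
    (hpq : p ≠ q) (c : ℝ) : volume {x : EuclideanSpace ℝ (Fin d) | ‖x - p‖ - ‖x - q‖ = c} = 0 := by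
  obtain ⟨d', rfl⟩ : ∃ d', d = d' + 1 := ⟨d - 1, (Nat.succ_pred_eq_of_pos (by omega)).symm⟩
  set v : EuclideanSpace ℝ (Fin (d' + 1)) := q - p with hv
  have hv0 : v ≠ 0 := sub_ne_zero.2 (Ne.symm hpq)
  by_cases hc : c = 0
  · -- the level set is contained in a hyperplane
    subst hc
    set u : EuclideanSpace ℝ (Fin (d' + 1)) := ‖v‖⁻¹ • v with hu
    have hun : ‖u‖ = 1 := by
      rw [hu, norm_smul, norm_inv, norm_norm, inv_mul_cancel₀ (norm_ne_zero_iff.2 hv0)]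
    set β : ℝ := (‖q‖ ^ 2 - ‖p‖ ^ 2) / 2 with hβ
    have hsub : {x : EuclideanSpace ℝ (Fin (d' + 1)) | ‖x - p‖ - ‖x - q‖ = 0} ⊆
        {x | inner ℝ x v = β} := by
      intro x hx
      simp only [Set.mem_setOf_eq, sub_eq_zero] at hx
      have h2 : ‖x - p‖ ^ 2 = ‖x - q‖ ^ 2 := by rw [hx]
      rw [@norm_sub_sq_real, @norm_sub_sq_real] at h2
      simp only [Set.mem_setOf_eq, hβ, hv]
      rw [inner_sub_right]
      linarith [h2]
    refine measure_mono_null hsub ?_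
    apply null_of_finite_line_slices ?_ u hun
    · intro x
      have : ∀ t : ℝ, (inner ℝ (x + t • u) v : ℝ) = inner ℝ x v + t * ‖v‖ := by
        intro t
        rw [inner_add_left, real_inner_smul_left, hu, real_inner_smul_left,
          real_inner_self_eq_norm_sq]
        field_simp [norm_ne_zero_iff.2 hv0]
      apply Set.Finite.subset (Set.finite_singleton ((β - inner ℝ x v) / ‖v‖))
      intro t ht
      simp only [Set.mem_setOf_eq, this t] at ht
      have hvn : (‖v‖ : ℝ) ≠ 0 := norm_ne_zero_iff.2 hv0
      simp only [Set.mem_singleton_iff]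
      rw [eq_div_iff hvn]
      linarith
    · exact measurableSet_eq_fun ((continuous_id.inner continuous_const).measurable)
        measurable_const
  · -- contained in a quadric with nonzero pure second-order coefficient along u ⊥ v
    obtain ⟨u', hu'v, hu'0⟩ : ∃ u' : EuclideanSpace ℝ (Fin (d' + 1)), inner ℝ u' v = (0:ℝ) ∧ u' ≠ 0 := by
      have hne : (ℝ ∙ v)ᗮ ≠ ⊥ := by
        intro hbot
        have htop : (ℝ ∙ v) = ⊤ := by
          have := Submodule.orthogonal_orthogonal (ℝ ∙ v)
          rw [hbot] at this
          simpa [Submodule.bot_orthogonal_eq_top] using this.symm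
        have h1 : Module.finrank ℝ (ℝ ∙ v) = 1 := finrank_span_singleton hv0
        have h2 : Module.finrank ℝ (EuclideanSpace ℝ (Fin (d' + 1))) = d' + 1 :=
          finrank_euclideanSpace_fin
        rw [htop, finrank_top] at h1
        omega
      obtain ⟨u', hu'mem, hu'0⟩ := Submodule.exists_mem_ne_zero_of_ne_bot hne
      exact ⟨u', Submodule.mem_orthogonal_singleton_iff_inner_left.1 hu'mem, hu'0⟩
    set u : EuclideanSpace ℝ (Fin (d' + 1)) := ‖u'‖⁻¹ • u' with hu
    have hun : ‖u‖ = 1 := by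
      rw [hu, norm_smul, norm_inv, norm_norm, inv_mul_cancel₀ (norm_ne_zero_iff.2 hu'0)]
    have huv : inner ℝ u v = (0:ℝ) := by rw [hu, real_inner_smul_left, hu'v, mul_zero]
    set g : EuclideanSpace ℝ (Fin (d' + 1)) → ℝ :=
      fun x => (‖x - p‖ ^ 2 - ‖x - q‖ ^ 2 - c ^ 2) ^ 2 - 4 * c ^ 2 * ‖x - q‖ ^ 2 with hg
    have hsub : {x : EuclideanSpace ℝ (Fin (d' + 1)) | ‖x - p‖ - ‖x - q‖ = c} ⊆ {x | g x = 0} := by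
      intro x hx
      simp only [Set.mem_setOf_eq] at hx ⊢
      have h1 : ‖x - p‖ = ‖x - q‖ + c := by linarith
      have h2 : ‖x - p‖ ^ 2 - ‖x - q‖ ^ 2 - c ^ 2 = 2 * c * ‖x - q‖ := by rw [h1]; ring
      show (‖x - p‖ ^ 2 - ‖x - q‖ ^ 2 - c ^ 2) ^ 2 - 4 * c ^ 2 * ‖x - q‖ ^ 2 = 0
      rw [h2]; ring
    refine measure_mono_null hsub (null_of_finite_line_slices ?_ u hun ?_)
    · exact measurableSet_eq_fun (by fun_prop) measurable_const
    · intro x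
      -- along the line `t ↦ x + t u`, `g` is a quadratic polynomial with leading coeff `-4c²`
      have hexp : ∀ (w : EuclideanSpace ℝ (Fin (d' + 1))) (t : ℝ),
          ‖x + t • u - w‖ ^ 2 = ‖x - w‖ ^ 2 + 2 * t * inner ℝ (x - w) u + t ^ 2 := by
        intro w t
        have : x + t • u - w = (x - w) + t • u := by abel
        rw [this, @norm_add_sq_real, real_inner_smul_right, norm_smul]
        simp [hun, mul_pow]
        ring
      have hconst : ∀ t : ℝ, ‖x + t • u - p‖ ^ 2 - ‖x + t • u - q‖ ^ 2
          = ‖x - p‖ ^ 2 - ‖x - q‖ ^ 2 := by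
        intro t
        rw [hexp p t, hexp q t]
        have hdiff : (inner ℝ (x - p) u : ℝ) - inner ℝ (x - q) u = inner ℝ v u := by
          rw [← inner_sub_left]
          congr 1
          rw [hv]; abel
        have h0 : (inner ℝ v u : ℝ) = 0 := by rw [real_inner_comm]; exact huv
        have h1 : (inner ℝ (x - p) u : ℝ) = inner ℝ (x - q) u := by
          rw [h0, sub_eq_zero] at hdiff; exact hdiff
        rw [h1]; ring
      -- so the slice is contained in the root set of a nonzero polynomial
      set A : ℝ := ‖x - p‖ ^ 2 - ‖x - q‖ ^ 2 - c ^ 2 with hA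
      set B : ℝ := 2 * inner ℝ (x - q) u with hB
      set P : Polynomial ℝ := Polynomial.C ((A) ^ 2 - 4 * c ^ 2 * ‖x - q‖ ^ 2)
        + Polynomial.C (-(4 * c ^ 2 * B)) * Polynomial.X
        + Polynomial.C (-(4 * c ^ 2)) * Polynomial.X ^ 2 with hP
      have hP0 : P ≠ 0 := by
        intro h0
        have h2 : (0:ℝ) = -(4 * c ^ 2) := by
          rw [← Polynomial.coeff_zero 2, ← h0]
          simp only [hP, Polynomial.coeff_add, Polynomial.coeff_C_mul,
            Polynomial.coeff_X_pow, Polynomial.coeff_C, Polynomial.coeff_X]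
          norm_num
        have hcc : c ^ 2 = 0 := by linarith
        exact hc (pow_eq_zero_iff (n := 2) (by norm_num) |>.1 hcc)
      apply Set.Finite.subset (Polynomial.finite_setOf_isRoot hP0)
      intro t ht
      simp only [Set.mem_setOf_eq] at ht
      have hgt : g (x + t • u) = A ^ 2 - 4 * c ^ 2 * ‖x - q‖ ^ 2 - (4 * c ^ 2 * B) * t
          - (4 * c ^ 2) * t ^ 2 := by
        show (‖x + t • u - p‖ ^ 2 - ‖x + t • u - q‖ ^ 2 - c ^ 2) ^ 2
            - 4 * c ^ 2 * ‖x + t • u - q‖ ^ 2 = _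
        rw [hconst t, hexp q t, hA, hB]
        ring
      simp only [Set.mem_setOf_eq, Polynomial.IsRoot, hP]
      rw [hgt] at ht
      simp only [Polynomial.eval_add, Polynomial.eval_mul, Polynomial.eval_C,
        Polynomial.eval_X, Polynomial.eval_pow]
      linarith

section Dual

variable {d n : ℕ}

/-- The "weighted distance" min function of semi-discrete transport. -/
def cmin (hn : 0 < n) (y : Fin n → EuclideanSpace ℝ (Fin d)) (w : Fin n → ℝ)
    (x : EuclideanSpace ℝ (Fin d)) : ℝ :=
  Finset.univ.inf' (by
    haveI : Nonempty (Fin n) := Fin.pos_iff_nonempty.1 hn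
    exact Finset.univ_nonempty) (fun j => ‖x - y j‖ - w j)

variable (hn : 0 < n) (y : Fin n → EuclideanSpace ℝ (Fin d)) (w : Fin n → ℝ)

lemma cmin_le (x : EuclideanSpace ℝ (Fin d)) (j : Fin n) :
    cmin hn y w x ≤ ‖x - y j‖ - w j :=
  Finset.inf'_le _ (Finset.mem_univ j)

lemma le_cmin (x : EuclideanSpace ℝ (Fin d)) {b : ℝ} (h : ∀ j, b ≤ ‖x - y j‖ - w j) :
    b ≤ cmin hn y w x :=
  Finset.le_inf' _ _ (fun j _ => h j)

lemma exists_cmin_eq (x : EuclideanSpace ℝ (Fin d)) :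
    ∃ j, cmin hn y w x = ‖x - y j‖ - w j := by
  obtain ⟨j, _, hj⟩ := Finset.exists_mem_eq_inf' (s := (Finset.univ : Finset (Fin n)))
    (by haveI : Nonempty (Fin n) := Fin.pos_iff_nonempty.1 hn; exact Finset.univ_nonempty)
    (fun j => ‖x - y j‖ - w j)
  exact ⟨j, hj⟩

lemma cmin_continuous : Continuous (cmin hn y w) := by
  rw [continuous_iff_continuousAt]
  intro x
  exact ContinuousAt.finset_inf'_apply _ (fun j _ => by fun_prop)

/-- A uniform bound for `cmin`. -/
lemma abs_cmin_le (x : EuclideanSpace ℝ (Fin d)) :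
    |cmin hn y w x| ≤ ‖x‖ + Finset.univ.sup' (by
      haveI : Nonempty (Fin n) := Fin.pos_iff_nonempty.1 hn
      exact Finset.univ_nonempty) (fun j => ‖y j‖ + |w j|) := by
  haveI : Nonempty (Fin n) := Fin.pos_iff_nonempty.1 hn
  have hMle : ∀ j : Fin n, ‖y j‖ + |w j| ≤ Finset.univ.sup'
      (by haveI : Nonempty (Fin n) := Fin.pos_iff_nonempty.1 hn; exact Finset.univ_nonempty)
      (fun j => ‖y j‖ + |w j|) := fun j => Finset.le_sup' (fun j => ‖y j‖ + |w j|) (Finset.mem_univ j)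
  rw [abs_le]
  constructor
  · apply le_cmin
    intro j
    have h1 := hMle j
    have h2 : (0:ℝ) ≤ ‖x - y j‖ := norm_nonneg _
    have h3 : w j ≤ |w j| := le_abs_self _
    have h4 : (0:ℝ) ≤ ‖x‖ := norm_nonneg _
    have h5 : (0:ℝ) ≤ ‖y j‖ := norm_nonneg _
    linarith
  · obtain ⟨j, hj⟩ := exists_cmin_eq hn y w x
    rw [hj]
    have h1 := hMle j
    have h2 : ‖x - y j‖ ≤ ‖x‖ + ‖y j‖ := norm_sub_le x (y j)
    have h3 : -w j ≤ |w j| := neg_le_abs _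
    linarith

/-- `cmin` is 1-Lipschitz in the weight vector (sup-norm). -/
lemma abs_cmin_sub_cmin_le (w' : Fin n → ℝ) (x : EuclideanSpace ℝ (Fin d)) :
    |cmin hn y w x - cmin hn y w' x| ≤ ‖w - w'‖ := by
  have key : ∀ (v v' : Fin n → ℝ), cmin hn y v x - cmin hn y v' x ≤ ‖v - v'‖ := by
    intro v v'
    obtain ⟨j, hj⟩ := exists_cmin_eq hn y v' x
    have h1 : cmin hn y v x ≤ ‖x - y j‖ - v j := cmin_le hn y v x j
    have h2 : |v j - v' j| ≤ ‖v - v'‖ := by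
      have := norm_le_pi_norm (v - v') j
      simpa [Real.norm_eq_abs] using this
    have h3 : v' j - v j ≤ |v j - v' j| := by
      rw [abs_sub_comm]; exact le_abs_self _
    linarith
  rw [abs_le]
  constructor
  · have := key w' w
    rw [← norm_neg (w' - w)] at this
    simp only [neg_sub] at this
    linarith
  · exact key w w'

end Dual

section DualF

variable {d n : ℕ}

/-- The dual (Kantorovich) functional of semi-discrete transport. -/
def dualF (hn : 0 < n) (y : Fin n → EuclideanSpace ℝ (Fin d)) (a : Fin n → ℝ)
    (μ : Measure (EuclideanSpace ℝ (Fin d))) (w : Fin n → ℝ) : ℝ :=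
  ∑ j, a j * w j + ∫ x, cmin hn y w x ∂μ

variable (hn : 0 < n) (y : Fin n → EuclideanSpace ℝ (Fin d)) (a : Fin n → ℝ)
    (μ : Measure (EuclideanSpace ℝ (Fin d))) [IsProbabilityMeasure μ]

lemma cmin_integrable (hμint : Integrable (fun x => ‖x‖) μ) (w : Fin n → ℝ) :
    Integrable (cmin hn y w) μ := by
  haveI : Nonempty (Fin n) := Fin.pos_iff_nonempty.1 hn
  apply Integrable.mono' (g := fun x => ‖x‖ + Finset.univ.sup'
    (by haveI : Nonempty (Fin n) := Fin.pos_iff_nonempty.1 hn; exact Finset.univ_nonempty)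
    (fun j => ‖y j‖ + |w j|))
  · exact hμint.add (integrable_const _)
  · exact (cmin_continuous hn y w).aestronglyMeasurable
  · exact Filter.Eventually.of_forall (fun x => by
      simpa [Real.norm_eq_abs] using abs_cmin_le hn y w x)

lemma dualF_continuous (hμint : Integrable (fun x => ‖x‖) μ) (ha : ∀ j, 0 < a j) (hasum : ∑ j, a j = 1) :
    Continuous (dualF hn y a μ) := by
  have hlip : LipschitzWith 2 (dualF hn y a μ) := by
    apply LipschitzWith.of_dist_le_mul
    intro w w'
    rw [Real.dist_eq, dualF, dualF]
    have h1 : |∑ j, a j * w j - ∑ j, a j * w' j| ≤ ‖w - w'‖ := by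
      rw [← Finset.sum_sub_distrib]
      calc |∑ j, (a j * w j - a j * w' j)| ≤ ∑ j, |a j * w j - a j * w' j| :=
            Finset.abs_sum_le_sum_abs _ _
        _ ≤ ∑ j, a j * ‖w - w'‖ := by
            apply Finset.sum_le_sum
            intro j _
            rw [← mul_sub, abs_mul, abs_of_pos (ha j)]
            apply mul_le_mul_of_nonneg_left _ (ha j).le
            have := norm_le_pi_norm (w - w') j
            simpa [Real.norm_eq_abs] using this
        _ = ‖w - w'‖ := by rw [← Finset.sum_mul, hasum, one_mul]
    have h2 : |∫ x, cmin hn y w x ∂μ - ∫ x, cmin hn y w' x ∂μ| ≤ ‖w - w'‖ := by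
      rw [← integral_sub (cmin_integrable hn y μ hμint w) (cmin_integrable hn y μ hμint w')]
      calc |∫ x, (cmin hn y w x - cmin hn y w' x) ∂μ|
          ≤ ∫ x, |cmin hn y w x - cmin hn y w' x| ∂μ := by
            simpa [Real.norm_eq_abs] using
              norm_integral_le_integral_norm (μ := μ) (fun x => cmin hn y w x - cmin hn y w' x)
        _ ≤ ∫ _, ‖w - w'‖ ∂μ := by
            apply integral_mono_of_nonneg (Filter.Eventually.of_forall (fun x => abs_nonneg _))
              (integrable_const _)
            exact Filter.Eventually.of_forall (fun x => abs_cmin_sub_cmin_le hn y w w' x)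
        _ = ‖w - w'‖ := by simp
    calc |(∑ j, a j * w j + ∫ x, cmin hn y w x ∂μ) - (∑ j, a j * w' j + ∫ x, cmin hn y w' x ∂μ)|
        ≤ |∑ j, a j * w j - ∑ j, a j * w' j| + |∫ x, cmin hn y w x ∂μ - ∫ x, cmin hn y w' x ∂μ| := by
          have := abs_add_le (∑ j, a j * w j - ∑ j, a j * w' j)
            (∫ x, cmin hn y w x ∂μ - ∫ x, cmin hn y w' x ∂μ)
          apply le_trans _ this
          apply le_of_eq
          congr 1
          ring
      _ ≤ 2 * dist w w' := by
          rw [dist_eq_norm]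
          push_cast
          linarith
  exact hlip.continuous

lemma cmin_shift (w : Fin n → ℝ) (c : ℝ) (x : EuclideanSpace ℝ (Fin d)) :
    cmin hn y (w + fun _ => c) x = cmin hn y w x - c := by
  apply le_antisymm
  · obtain ⟨j, hj⟩ := exists_cmin_eq hn y w x
    calc cmin hn y (w + fun _ => c) x ≤ ‖x - y j‖ - (w j + c) := cmin_le hn y _ x j
      _ = cmin hn y w x - c := by rw [hj]; ring
  · apply le_cmin
    intro j
    have := cmin_le hn y w x j
    simp only [Pi.add_apply]
    linarith

lemma dualF_shift (hμint : Integrable (fun x => ‖x‖) μ) (hasum : ∑ j, a j = 1) (w : Fin n → ℝ) (c : ℝ) :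
    dualF hn y a μ (w + fun _ => c) = dualF hn y a μ w := by
  rw [dualF, dualF]
  have h1 : ∑ j, a j * ((w + fun _ => c : Fin n → ℝ) j) = ∑ j, a j * w j + c := by
    simp only [Pi.add_apply]
    simp_rw [mul_add]
    rw [Finset.sum_add_distrib, ← Finset.sum_mul, hasum, one_mul]
  have h2 : ∫ x, cmin hn y (w + fun _ => c) x ∂μ = ∫ x, cmin hn y w x ∂μ - c := by
    simp_rw [cmin_shift hn y w c]
    rw [integral_sub (cmin_integrable hn y μ hμint w) (integrable_const _)]
    simp
  rw [h1, h2]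
  ring

end DualF

lemma exists_dualF_max {d n : ℕ} (hn : 0 < n) (y : Fin n → EuclideanSpace ℝ (Fin d))
    (a : Fin n → ℝ) (μ : Measure (EuclideanSpace ℝ (Fin d))) [IsProbabilityMeasure μ]
    (hμint : Integrable (fun x => ‖x‖) μ) (ha : ∀ j, 0 < a j) (hasum : ∑ j, a j = 1) :
    ∃ w : Fin n → ℝ, ∀ w', dualF hn y a μ w' ≤ dualF hn y a μ w := by
  haveI : Nonempty (Fin n) := Fin.pos_iff_nonempty.1 hn
  have hune : (Finset.univ : Finset (Fin n)).Nonempty := Finset.univ_nonempty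
  set α : ℝ := Finset.univ.inf' hune a with hα
  have hα0 : 0 < α := by
    obtain ⟨j, _, hj⟩ := Finset.exists_mem_eq_inf' hune a
    rw [hα, hj]; exact ha j
  have hαle : ∀ j, α ≤ a j := fun j => Finset.inf'_le a (Finset.mem_univ j)
  set Ysup : ℝ := Finset.univ.sup' hune (fun j => ‖y j‖) with hYsup
  set C₀ : ℝ := ∫ x, ‖x‖ ∂μ + Ysup with hC₀
  set Mx : (Fin n → ℝ) → ℝ := fun w => Finset.univ.sup' hune w with hMx
  set mn : (Fin n → ℝ) → ℝ := fun w => Finset.univ.inf' hune w with hmn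
  -- the coercivity bound
  have bound : ∀ w : Fin n → ℝ, dualF hn y a μ w ≤ C₀ + (∑ j, a j * w j) - Mx w := by
    intro w
    obtain ⟨jm, _, hjm⟩ := Finset.exists_mem_eq_sup' hune w
    have hpt : ∀ x, cmin hn y w x ≤ ‖x‖ + Ysup - Mx w := by
      intro x
      calc cmin hn y w x ≤ ‖x - y jm‖ - w jm := cmin_le hn y w x jm
        _ ≤ ‖x‖ + ‖y jm‖ - w jm := by linarith [norm_sub_le x (y jm)]
        _ ≤ ‖x‖ + Ysup - Mx w := by
            have h1 : ‖y jm‖ ≤ Ysup := Finset.le_sup' (fun j => ‖y j‖) (Finset.mem_univ jm)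
            have h2 : Mx w = w jm := by rw [hMx]; exact hjm
            linarith
    have hint : ∫ x, cmin hn y w x ∂μ ≤ C₀ - Mx w := by
      calc ∫ x, cmin hn y w x ∂μ ≤ ∫ x, (‖x‖ + (Ysup - Mx w)) ∂μ := by
            apply integral_mono (cmin_integrable hn y μ hμint w)
              (hμint.add (integrable_const _))
            intro x
            have := hpt x
            simp only [Pi.add_apply]
            linarith
        _ = C₀ - Mx w := by
            rw [integral_add hμint (integrable_const _)]
            simp [hC₀]
            ring
    rw [dualF]
    linarith
  have claim2 : ∀ w : Fin n → ℝ, (∑ j, a j * w j) - Mx w ≤ -α * (Mx w - mn w) := by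
    intro w
    obtain ⟨jn, _, hjn⟩ := Finset.exists_mem_eq_inf' hune w
    have hrw : (∑ j, a j * w j) - Mx w = ∑ j, a j * (w j - Mx w) := by
      simp_rw [mul_sub]
      rw [Finset.sum_sub_distrib, ← Finset.sum_mul, hasum, one_mul]
    have hterm : ∀ j, a j * (w j - Mx w) ≤ 0 := by
      intro j
      apply mul_nonpos_of_nonneg_of_nonpos (ha j).le
      have : w j ≤ Mx w := Finset.le_sup' w (Finset.mem_univ j)
      linarith
    have hsum_le : ∑ j, a j * (w j - Mx w) ≤ a jn * (w jn - Mx w) := by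
      rw [← Finset.sum_erase_add Finset.univ (fun j => a j * (w j - Mx w)) (Finset.mem_univ jn)]
      have hneg : ∑ j ∈ Finset.univ.erase jn, a j * (w j - Mx w) ≤ 0 :=
        Finset.sum_nonpos (fun j _ => hterm j)
      linarith
    have hjn' : w jn = mn w := by rw [hmn]; exact hjn.symm
    have hmle : mn w ≤ Mx w := by
      have h1 : mn w ≤ w jn := Finset.inf'_le w (Finset.mem_univ jn)
      have h2 : w jn ≤ Mx w := Finset.le_sup' w (Finset.mem_univ jn)
      linarith
    have : a jn * (w jn - Mx w) ≤ α * (mn w - Mx w) := by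
      rw [hjn']
      have ht : mn w - Mx w ≤ 0 := by linarith
      exact mul_le_mul_of_nonpos_right (hαle jn) ht
    calc (∑ j, a j * w j) - Mx w = ∑ j, a j * (w j - Mx w) := hrw
      _ ≤ a jn * (w jn - Mx w) := hsum_le
      _ ≤ α * (mn w - Mx w) := this
      _ = -α * (Mx w - mn w) := by ring
  -- on the slice `w 0 = 0` the functional is coercive
  set jfix : Fin n := ⟨0, hn⟩ with hjfix
  set V : Set (Fin n → ℝ) := {w | w jfix = 0} with hV
  have hcoer : ∀ w ∈ V, dualF hn y a μ w ≤ C₀ - α * ‖w‖ := by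
    intro w hw
    have h0max : 0 ≤ Mx w := by
      have := Finset.le_sup' w (Finset.mem_univ jfix)
      rw [hw] at this; exact this
    have h0min : mn w ≤ 0 := by
      have := Finset.inf'_le w (Finset.mem_univ jfix)
      rw [hw] at this; exact this
    have hnrm : ‖w‖ ≤ Mx w - mn w := by
      apply pi_norm_le_iff_of_nonneg (by linarith) |>.2
      intro j
      rw [Real.norm_eq_abs, abs_le]
      constructor
      · have := Finset.inf'_le w (Finset.mem_univ j); linarith
      · have := Finset.le_sup' w (Finset.mem_univ j); linarith
    have := bound w
    have := claim2 w
    nlinarith [hα0]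
  set R : ℝ := max ((C₀ - dualF hn y a μ 0) / α) 0 with hR
  have hR0 : 0 ≤ R := le_max_right _ _
  set K : Set (Fin n → ℝ) := Metric.closedBall 0 R ∩ V with hK
  have hKc : IsCompact K := (isCompact_closedBall 0 R).inter_right
    (isClosed_eq (continuous_apply jfix) continuous_const)
  have h0K : (0 : Fin n → ℝ) ∈ K := by
    constructor
    · simpa using hR0
    · simp [hV]
  obtain ⟨wstar, hwK, hwmax⟩ := hKc.exists_isMaxOn ⟨0, h0K⟩
    ((dualF_continuous hn y a μ hμint ha hasum).continuousOn)
  refine ⟨wstar, fun w' => ?_⟩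
  -- first reduce to the slice V
  have hsliceV : ∀ w ∈ V, dualF hn y a μ w ≤ dualF hn y a μ wstar := by
    intro w hw
    by_cases hcase : ‖w‖ ≤ R
    · exact hwmax (Set.mem_inter (by simpa [Metric.mem_closedBall] using hcase) hw)
    · push_neg at hcase
      have h1 : dualF hn y a μ w ≤ C₀ - α * ‖w‖ := hcoer w hw
      have h2 : C₀ - α * ‖w‖ < dualF hn y a μ 0 := by
        have hRge : (C₀ - dualF hn y a μ 0) / α ≤ R := le_max_left _ _
        have : C₀ - dualF hn y a μ 0 ≤ α * R := by
          rw [div_le_iff₀ hα0] at hRge; linarith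
        have : α * R < α * ‖w‖ := by
          exact mul_lt_mul_of_pos_left hcase hα0
        linarith
      have h3 : dualF hn y a μ 0 ≤ dualF hn y a μ wstar := hwmax h0K
      linarith
  -- general w' via shift invariance
  have hshift := dualF_shift hn y a μ hμint hasum (w' - fun _ => w' jfix) (w' jfix)
  have heq : (w' - fun _ => w' jfix) + (fun _ => w' jfix) = w' := by
    funext i; simp
  rw [heq] at hshift
  rw [hshift]
  apply hsliceV
  simp [hV]

section Cells

variable {d n : ℕ}

/-- The (strict) Laguerre cell of the point `y j` with weights `w`. -/
def cell (y : Fin n → EuclideanSpace ℝ (Fin d)) (w : Fin n → ℝ) (j : Fin n) :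
    Set (EuclideanSpace ℝ (Fin d)) :=
  {x | ∀ i, i ≠ j → ‖x - y j‖ - w j < ‖x - y i‖ - w i}

/-- The set of points where two weighted distances tie. -/
def tieSet (y : Fin n → EuclideanSpace ℝ (Fin d)) (w : Fin n → ℝ) :
    Set (EuclideanSpace ℝ (Fin d)) :=
  ⋃ (i) (j) (_ : i ≠ j), {x | ‖x - y i‖ - ‖x - y j‖ = w i - w j}

lemma tieSet_null (hd : 2 ≤ d) (y : Fin n → EuclideanSpace ℝ (Fin d)) (w : Fin n → ℝ)
    (hy : Function.Injective y) (μ : Measure (EuclideanSpace ℝ (Fin d))) (hac : μ ≪ volume) :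
    μ (tieSet y w) = 0 := by
  rw [tieSet]
  rw [measure_iUnion_null_iff]
  intro i
  rw [measure_iUnion_null_iff]
  intro j
  rw [measure_iUnion_null_iff]
  intro hij
  apply hac
  exact norm_diff_level_null hd (y i) (y j) (fun h => hij (hy h)) (w i - w j)

lemma cell_isOpen (y : Fin n → EuclideanSpace ℝ (Fin d)) (w : Fin n → ℝ) (j : Fin n) :
    IsOpen (cell y w j) := by
  have : cell y w j = ⋂ i, {x | i ≠ j → ‖x - y j‖ - w j < ‖x - y i‖ - w i} := by
    ext x; simp [cell]
  rw [this]
  apply isOpen_iInter_of_finite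
  intro i
  by_cases hij : i = j
  · subst hij
    have huniv : {x : EuclideanSpace ℝ (Fin d) | i ≠ i → ‖x - y i‖ - w i < ‖x - y i‖ - w i}
        = Set.univ := by ext x; simp
    rw [huniv]
    exact isOpen_univ
  · have : {x : EuclideanSpace ℝ (Fin d) | i ≠ j → ‖x - y j‖ - w j < ‖x - y i‖ - w i}
        = {x | ‖x - y j‖ - w j < ‖x - y i‖ - w i} := by
      ext x; simp [hij]
    rw [this]
    exact isOpen_lt (by fun_prop) (by fun_prop)

lemma cell_disjoint (y : Fin n → EuclideanSpace ℝ (Fin d)) (w : Fin n → ℝ) {i j : Fin n}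
    {x : EuclideanSpace ℝ (Fin d)} (hi : x ∈ cell y w i) (hj : x ∈ cell y w j) : i = j := by
  by_contra hij
  have h1 := hi j (fun h => hij h.symm)
  have h2 := hj i hij
  linarith

lemma cell_cmin (hn : 0 < n) (y : Fin n → EuclideanSpace ℝ (Fin d)) (w : Fin n → ℝ) {j : Fin n}
    {x : EuclideanSpace ℝ (Fin d)} (hx : x ∈ cell y w j) : cmin hn y w x = ‖x - y j‖ - w j := by
  apply le_antisymm (cmin_le hn y w x j)
  apply le_cmin
  intro i
  by_cases hij : i = j
  · subst hij; exact le_rfl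
  · exact (hx i hij).le

lemma mem_cell_of_not_tie (hn : 0 < n) (y : Fin n → EuclideanSpace ℝ (Fin d)) (w : Fin n → ℝ)
    {x : EuclideanSpace ℝ (Fin d)} (hx : x ∉ tieSet y w) : ∃ j, x ∈ cell y w j := by
  obtain ⟨j, hj⟩ := exists_cmin_eq hn y w x
  refine ⟨j, fun i hij => ?_⟩
  have h1 : cmin hn y w x ≤ ‖x - y i‖ - w i := cmin_le hn y w x i
  rcases lt_or_eq_of_le (hj ▸ h1) with h | h
  · exact h
  · exfalso
    apply hx
    rw [tieSet]
    have hmem : x ∈ {x : EuclideanSpace ℝ (Fin d) | ‖x - y i‖ - ‖x - y j‖ = w i - w j} := by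
      simp only [Set.mem_setOf_eq]
      linarith
    exact Set.mem_iUnion.2 ⟨i, Set.mem_iUnion.2 ⟨j, Set.mem_iUnion.2 ⟨hij, hmem⟩⟩⟩

end Cells

/-- At a maximizer of the dual functional, the cells have the prescribed masses. -/
lemma cell_measure {d n : ℕ} (hd : 2 ≤ d) (hn : 0 < n) (y : Fin n → EuclideanSpace ℝ (Fin d))
    (hy : Function.Injective y) (a : Fin n → ℝ)
    (μ : Measure (EuclideanSpace ℝ (Fin d))) [IsProbabilityMeasure μ] (hac : μ ≪ volume)
    (hμint : Integrable (fun x => ‖x‖) μ) (ha : ∀ j, 0 < a j)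
    (w : Fin n → ℝ) (hmax : ∀ w', dualF hn y a μ w' ≤ dualF hn y a μ w) (j : Fin n) :
    μ (cell y w j) = ENNReal.ofReal (a j) := by
  classical
  set F : ℝ → EuclideanSpace ℝ (Fin d) → ℝ :=
    fun t x => cmin hn y (w + t • (Pi.single j 1 : Fin n → ℝ)) x with hF
  set F' : EuclideanSpace ℝ (Fin d) → ℝ :=
    (cell y w j).indicator (fun _ => (-1 : ℝ)) with hF'
  have hmeasS : MeasurableSet (cell y w j) := (cell_isOpen y w j).measurableSet
  have htie : μ (tieSet y w) = 0 := tieSet_null hd y w hy μ hac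
  have hw0 : w + (0 : ℝ) • (Pi.single j 1 : Fin n → ℝ) = w := by simp
  -- the pointwise derivative off the tie set
  have h_diff : ∀ᵐ x ∂μ, HasDerivAt (F · x) (F' x) 0 := by
    rw [ae_iff]
    apply measure_mono_null _ htie
    intro x hx
    simp only [Set.mem_setOf_eq] at hx
    by_contra hxt
    apply hx
    obtain ⟨k, hk⟩ := mem_cell_of_not_tie hn y w hxt
    set ind : Fin n → ℝ := fun i => if i = j then 1 else 0 with hind
    -- eventual formula for F
    have hev : ∀ᶠ t in nhds (0:ℝ), F t x = (‖x - y k‖ - w k) - t * ind k := by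
      have hev2 : ∀ᶠ t in nhds (0:ℝ), ∀ i, i ≠ k →
          ‖x - y k‖ - (w k + t * ind k) < ‖x - y i‖ - (w i + t * ind i) := by
        rw [Filter.eventually_all]
        intro i
        by_cases hik : i = k
        · exact Filter.Eventually.of_forall (fun t h => absurd hik h)
        · have hcont1 : Continuous (fun t : ℝ => ‖x - y k‖ - (w k + t * ind k)) := by fun_prop
          have hcont2 : Continuous (fun t : ℝ => ‖x - y i‖ - (w i + t * ind i)) := by fun_prop
          have hlt0 : ‖x - y k‖ - (w k + (0:ℝ) * ind k) < ‖x - y i‖ - (w i + (0:ℝ) * ind i) := by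
            have := hk i hik
            simpa using this
          have := hcont1.continuousAt (x := (0:ℝ)) |>.eventually_lt
            (hcont2.continuousAt (x := (0:ℝ))) hlt0
          exact this.mono (fun t ht _ => ht)
      refine hev2.mono (fun t ht => ?_)
      have happ : ∀ i, (w + t • (Pi.single j 1 : Fin n → ℝ)) i = w i + t * ind i := by
        intro i
        simp [hind, Pi.single_apply, Pi.add_apply]
      have hcell : x ∈ cell y (w + t • (Pi.single j 1 : Fin n → ℝ)) k := by
        intro i hik
        rw [happ i, happ k]
        exact ht i hik
      have hcc := cell_cmin hn y _ hcell
      rw [hF]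
      simp only
      rw [hcc, happ k]
      ring
    have hFx : F' x = -(ind k) := by
      by_cases hkj : k = j
      · subst hkj
        rw [hF', Set.indicator_of_mem hk]
        simp [hind]
      · rw [hF', Set.indicator_of_notMem (fun hmem => hkj (cell_disjoint y w hk hmem))]
        simp [hind, hkj]
    have hbase : HasDerivAt (fun t : ℝ => (‖x - y k‖ - w k) - t * ind k) (-(ind k)) 0 :=
      (hasDerivAt_mul_const (ind k)).const_sub (‖x - y k‖ - w k)
    rw [hFx]
    exact hbase.congr_of_eventuallyEq hev
  -- Lipschitz in the parameter
  haveI : Nonempty (Fin n) := Fin.pos_iff_nonempty.1 hn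
  have hsingle : ‖(Pi.single j 1 : Fin n → ℝ)‖ = 1 := by
    rw [Pi.norm_single]; norm_num
  have h_lip : ∀ᵐ x ∂μ, LipschitzOnWith (Real.nnabs 1) (F · x) (Metric.ball (0:ℝ) 1) := by
    refine Filter.Eventually.of_forall (fun x => ?_)
    apply LipschitzOnWith.of_dist_le_mul
    intro t _ s _
    have hdiff := abs_cmin_sub_cmin_le hn y (w + t • (Pi.single j 1 : Fin n → ℝ))
      (w + s • (Pi.single j 1 : Fin n → ℝ)) x
    have hsub : (w + t • (Pi.single j 1 : Fin n → ℝ)) - (w + s • (Pi.single j 1 : Fin n → ℝ))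
        = (t - s) • (Pi.single j 1 : Fin n → ℝ) := by
      rw [add_sub_add_left_eq_sub, ← sub_smul]
    rw [hsub, norm_smul, hsingle, Real.norm_eq_abs, mul_one] at hdiff
    rw [Real.dist_eq, Real.dist_eq]
    calc |F t x - F s x| ≤ |t - s| := hdiff
      _ ≤ ↑(Real.nnabs 1) * |t - s| := by
          simp
  have hF_meas : ∀ᶠ t in nhds (0:ℝ), AEStronglyMeasurable (F t) μ :=
    Filter.Eventually.of_forall (fun t => (cmin_continuous hn y _).aestronglyMeasurable)
  have hF0 : F 0 = cmin hn y w := by funext x; rw [hF]; simp only [hw0]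
  have hF_int : Integrable (F 0) μ := by
    rw [hF0]; exact cmin_integrable hn y μ hμint w
  have hF'_meas : AEStronglyMeasurable F' μ :=
    (measurable_const.indicator hmeasS).aestronglyMeasurable
  obtain ⟨-, hderiv⟩ := hasDerivAt_integral_of_dominated_loc_of_lip (Metric.ball_mem_nhds 0 one_pos)
    hF_meas hF_int hF'_meas h_lip (integrable_const 1) h_diff
  have hintF' : ∫ x, F' x ∂μ = -(μ (cell y w j)).toReal := by
    rw [hF', integral_indicator_const (-1 : ℝ) hmeasS]
    simp [measureReal_def]
  -- the one-dimensional slice of the dual functional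
  set φ : ℝ → ℝ := fun t => dualF hn y a μ (w + t • (Pi.single j 1 : Fin n → ℝ)) with hφdef
  have hφeq : ∀ t, φ t = ((∑ i, a i * w i) + a j * t) + ∫ x, F t x ∂μ := by
    intro t
    rw [hφdef]
    simp only [dualF]
    congr 1
    have hterm : ∀ i, a i * ((w + t • (Pi.single j 1 : Fin n → ℝ)) i)
        = a i * w i + (if i = j then a j * t else 0) := by
      intro i
      by_cases hij : i = j
      · subst hij; simp [Pi.single_apply]; ring
      · simp [Pi.single_apply, hij]
    calc ∑ i, a i * ((w + t • (Pi.single j 1 : Fin n → ℝ)) i)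
        = ∑ i, (a i * w i + (if i = j then a j * t else 0)) :=
          Finset.sum_congr rfl (fun i _ => hterm i)
      _ = (∑ i, a i * w i) + a j * t := by
          rw [Finset.sum_add_distrib, Finset.sum_ite_eq' Finset.univ j (fun _ => a j * t)]
          simp
  have hφderiv : HasDerivAt φ (a j + ∫ x, F' x ∂μ) 0 := by
    have h1 : HasDerivAt (fun t : ℝ => (∑ i, a i * w i) + a j * t) (a j) 0 := by
      simpa using (((hasDerivAt_id (0:ℝ)).const_mul (a j)).const_add (∑ i, a i * w i))
    have h2 := h1.add hderiv
    exact h2.congr_of_eventuallyEq (Filter.Eventually.of_forall (fun t => hφeq t))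
  have hφ0 : φ 0 = dualF hn y a μ w := by rw [hφdef]; simp only [hw0]
  have hloc : IsLocalMax φ 0 :=
    Filter.Eventually.of_forall (fun t => by rw [hφ0]; exact hmax _)
  have h0 := hloc.hasDerivAt_eq_zero hφderiv
  rw [hintF'] at h0
  have htr : (μ (cell y w j)).toReal = a j := by linarith
  rw [← htr, ENNReal.ofReal_toReal (measure_ne_top μ _)]

section Argmin

variable {d n : ℕ}

/-- The smallest index attaining the minimum weighted distance. -/
def argmin (hn : 0 < n) (y : Fin n → EuclideanSpace ℝ (Fin d)) (w : Fin n → ℝ)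
    (x : EuclideanSpace ℝ (Fin d)) : Fin n :=
  (Finset.univ.filter (fun j => ‖x - y j‖ - w j = cmin hn y w x)).min' (by
    obtain ⟨j, hj⟩ := exists_cmin_eq hn y w x
    exact ⟨j, Finset.mem_filter.2 ⟨Finset.mem_univ j, hj.symm⟩⟩)

lemma argmin_eq_iff (hn : 0 < n) (y : Fin n → EuclideanSpace ℝ (Fin d)) (w : Fin n → ℝ)
    (x : EuclideanSpace ℝ (Fin d)) (j : Fin n) :
    argmin hn y w x = j ↔ (‖x - y j‖ - w j = cmin hn y w x ∧
      ∀ i, ‖x - y i‖ - w i = cmin hn y w x → j ≤ i) := by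
  constructor
  · rintro rfl
    constructor
    · have := Finset.min'_mem (Finset.univ.filter
        (fun j => ‖x - y j‖ - w j = cmin hn y w x)) (by
          obtain ⟨j, hj⟩ := exists_cmin_eq hn y w x
          exact ⟨j, Finset.mem_filter.2 ⟨Finset.mem_univ j, hj.symm⟩⟩)
      exact (Finset.mem_filter.1 this).2
    · intro i hi
      exact Finset.min'_le _ i (Finset.mem_filter.2 ⟨Finset.mem_univ i, hi⟩)
  · rintro ⟨h1, h2⟩
    apply le_antisymm
    · exact Finset.min'_le _ j (Finset.mem_filter.2 ⟨Finset.mem_univ j, h1⟩)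
    · apply Finset.le_min'
      intro i hi
      exact h2 i (Finset.mem_filter.1 hi).2

lemma measurable_argmin (hn : 0 < n) (y : Fin n → EuclideanSpace ℝ (Fin d)) (w : Fin n → ℝ) :
    Measurable (argmin hn y w) := by
  apply measurable_to_countable'
  intro j
  have hset : argmin hn y w ⁻¹' {j} =
      {x | ‖x - y j‖ - w j = cmin hn y w x} ∩
      ⋂ i, {x | ‖x - y i‖ - w i = cmin hn y w x → j ≤ i} := by
    ext x
    simp only [Set.mem_preimage, Set.mem_singleton_iff, argmin_eq_iff, Set.mem_inter_iff,
      Set.mem_setOf_eq, Set.mem_iInter]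
  rw [hset]
  have hc : Continuous (cmin hn y w) := cmin_continuous hn y w
  apply MeasurableSet.inter
  · exact measurableSet_eq_fun (by fun_prop) hc.measurable
  · apply MeasurableSet.iInter
    intro i
    by_cases hji : j ≤ i
    · have : {x : EuclideanSpace ℝ (Fin d) | ‖x - y i‖ - w i = cmin hn y w x → j ≤ i}
          = Set.univ := by ext x; simp [hji]
      rw [this]; exact MeasurableSet.univ
    · have : {x : EuclideanSpace ℝ (Fin d) | ‖x - y i‖ - w i = cmin hn y w x → j ≤ i}
          = {x | ¬ (‖x - y i‖ - w i = cmin hn y w x)} := by ext x; simp [hji]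
      rw [this]
      exact (measurableSet_eq_fun (by fun_prop) hc.measurable).compl

lemma argmin_cell (hn : 0 < n) (y : Fin n → EuclideanSpace ℝ (Fin d)) (w : Fin n → ℝ)
    {x : EuclideanSpace ℝ (Fin d)} {j : Fin n} (hx : x ∈ cell y w j) :
    argmin hn y w x = j := by
  rw [argmin_eq_iff]
  have hcc := cell_cmin hn y w hx
  constructor
  · exact hcc.symm
  · intro i hi
    by_cases hij : i = j
    · exact le_of_eq hij.symm
    · exfalso
      have := hx i hij
      rw [hi, hcc] at this
      exact lt_irrefl _ this

end Argmin

/-- In the semi-discrete setting with Euclidean cost, the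
Monge–Kantorovich problem has a unique optimal transport plan, and this plan is
deterministic: it is induced by a transport map `T`, i.e. equals the push-forward
of `μ` under `x ↦ (x, T x)`, and `W₁(μ,ν) = ∫ ‖x - T x‖ dμ`. -/
theorem semidiscrete_kantorovich_unique_deterministic
    {d n : ℕ} (hd : 2 ≤ d)
    (μ : Measure (EuclideanSpace ℝ (Fin d))) [IsProbabilityMeasure μ]
    (hac : μ ≪ volume)
    (hμint : Integrable (fun x => ‖x‖) μ)
    (y : Fin n → EuclideanSpace ℝ (Fin d)) (hy : Function.Injective y)
    (a : Fin n → ℝ) (ha : ∀ j, a j ∈ Set.Ioc (0 : ℝ) 1) (hsum : ∑ j, a j = 1)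
    (ν : Measure (EuclideanSpace ℝ (Fin d)))
    (hν : ν = ∑ j, ENNReal.ofReal (a j) • Measure.dirac (y j)) :
    ∃ T : EuclideanSpace ℝ (Fin d) → EuclideanSpace ℝ (Fin d),
      Measurable T ∧ μ.map T = ν ∧
      -- the coupling induced by `T` minimizes the transport cost over all couplings
      (∀ π : Measure (EuclideanSpace ℝ (Fin d) × EuclideanSpace ℝ (Fin d)),
        π.map Prod.fst = μ → π.map Prod.snd = ν →
        ∫⁻ z, ENNReal.ofReal ‖z.1 - z.2‖ ∂(μ.map (fun x => (x, T x))) ≤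
          ∫⁻ z, ENNReal.ofReal ‖z.1 - z.2‖ ∂π) ∧
      -- it is the unique minimizer
      (∀ π : Measure (EuclideanSpace ℝ (Fin d) × EuclideanSpace ℝ (Fin d)),
        π.map Prod.fst = μ → π.map Prod.snd = ν →
        ∫⁻ z, ENNReal.ofReal ‖z.1 - z.2‖ ∂π ≤
          ∫⁻ z, ENNReal.ofReal ‖z.1 - z.2‖ ∂(μ.map (fun x => (x, T x))) →
        π = μ.map (fun x => (x, T x))) ∧
      -- and `W₁(μ,ν) = ∫ ‖x - T x‖ dμ`
      (⨅ (π : Measure (EuclideanSpace ℝ (Fin d) × EuclideanSpace ℝ (Fin d)))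
          (_ : π.map Prod.fst = μ) (_ : π.map Prod.snd = ν),
          ∫⁻ z, ENNReal.ofReal ‖z.1 - z.2‖ ∂π)
        = ENNReal.ofReal (∫ x, ‖x - T x‖ ∂μ) := by
  classical
  have hn : 0 < n := by
    by_contra h
    push_neg at h
    have : n = 0 := by omega
    subst this
    simp at hsum
  haveI : Nonempty (Fin n) := Fin.pos_iff_nonempty.1 hn
  have hune : (Finset.univ : Finset (Fin n)).Nonempty := Finset.univ_nonempty
  have ha' : ∀ j, 0 < a j := fun j => (ha j).1
  obtain ⟨w, hmax⟩ := exists_dualF_max hn y a μ hμint ha' hsum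
  have hcellμ : ∀ j, μ (cell y w j) = ENNReal.ofReal (a j) :=
    cell_measure hd hn y hy a μ hac hμint ha' w hmax
  set T : EuclideanSpace ℝ (Fin d) → EuclideanSpace ℝ (Fin d) :=
    fun x => y (argmin hn y w x) with hT
  have hTmeas : Measurable T := by
    apply Measurable.comp (f := argmin hn y w) (g := y) ?_ (measurable_argmin hn y w)
    exact measurable_from_top
  have hTcell : ∀ j, ∀ x ∈ cell y w j, T x = y j := by
    intro j x hx
    rw [hT]
    simp only
    rw [argmin_cell hn y w hx]
  have htie : μ (tieSet y w) = 0 := tieSet_null hd y w hy μ hac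
  have hcover : μ (⋃ j, cell y w j)ᶜ = 0 := by
    apply measure_mono_null _ htie
    intro x hx
    simp only [Set.mem_compl_iff, Set.mem_iUnion, not_exists] at hx
    by_contra hxt
    obtain ⟨j, hj⟩ := mem_cell_of_not_tie hn y w hxt
    exact hx j hj
  have hcellmeas : ∀ j, MeasurableSet (cell y w j) := fun j => (cell_isOpen y w j).measurableSet
  have hcelldisj : Pairwise (Function.onFun Disjoint (cell y w)) := by
    intro i j hij
    rw [Function.onFun, Set.disjoint_left]
    intro x hxi hxj
    exact hij (cell_disjoint y w hxi hxj)
  have hν_single : ∀ j, ν {y j} = ENNReal.ofReal (a j) := by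
    intro j
    rw [hν, Measure.finset_sum_apply]
    have hterm : ∀ i, (ENNReal.ofReal (a i) • Measure.dirac (y i)) {y j}
        = if i = j then ENNReal.ofReal (a i) else 0 := by
      intro i
      rw [Measure.smul_apply, smul_eq_mul, Measure.dirac_apply]
      by_cases hij : i = j
      · subst hij; simp
      · have hnm : y i ∉ ({y j} : Set _) := by
          simp only [Set.mem_singleton_iff]
          exact fun h => hij (hy h)
        simp [Set.indicator_of_notMem hnm, hij]
    simp_rw [hterm]
    simp
  have hmapT : μ.map T = ν := by
    apply Measure.ext
    intro B hB
    rw [Measure.map_apply hTmeas hB]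
    have h1 : μ (T ⁻¹' B) = μ ((T ⁻¹' B) ∩ ⋃ j, cell y w j) := (measure_inter_conull hcover).symm
    have h2 : (T ⁻¹' B) ∩ ⋃ j, cell y w j = ⋃ j, (T ⁻¹' B ∩ cell y w j) := by
      rw [Set.inter_iUnion]
    have h3 : ∀ j, T ⁻¹' B ∩ cell y w j = if y j ∈ B then cell y w j else ∅ := by
      intro j
      by_cases hyB : y j ∈ B
      · rw [if_pos hyB]
        ext x
        constructor
        · rintro ⟨-, hx⟩; exact hx
        · intro hx
          refine ⟨?_, hx⟩
          rw [Set.mem_preimage, hTcell j x hx]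
          exact hyB
      · rw [if_neg hyB]
        ext x
        constructor
        · rintro ⟨hxB, hx⟩
          rw [Set.mem_preimage, hTcell j x hx] at hxB
          exact absurd hxB hyB
        · exact fun h => absurd h (Set.notMem_empty x)
    rw [h1, h2, measure_iUnion ?_ (fun j => (hTmeas hB).inter (hcellmeas j))]
    · rw [tsum_fintype, hν, Measure.finset_sum_apply]
      apply Finset.sum_congr rfl
      intro j _
      rw [h3 j, Measure.smul_apply, smul_eq_mul, Measure.dirac_apply]
      by_cases hyB : y j ∈ B
      · rw [if_pos hyB, hcellμ j, Set.indicator_of_mem hyB]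
        simp
      · rw [if_neg hyB, Set.indicator_of_notMem hyB]
        simp
    · intro i j hij
      exact ((hcelldisj hij).mono Set.inter_subset_right Set.inter_subset_right)
  -- cost of the T-plan
  have hTint : Integrable (fun x => ‖x - T x‖) μ := by
    apply Integrable.mono' (g := fun x => ‖x‖ + Finset.univ.sup' hune (fun j => ‖y j‖))
    · exact hμint.add (integrable_const _)
    · exact ((measurable_id.sub hTmeas).norm).aestronglyMeasurable
    · refine Filter.Eventually.of_forall (fun x => ?_)
      rw [Real.norm_eq_abs, abs_of_nonneg (norm_nonneg _)]
      calc ‖x - T x‖ ≤ ‖x‖ + ‖T x‖ := norm_sub_le _ _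
        _ ≤ ‖x‖ + Finset.univ.sup' hune (fun j => ‖y j‖) := by
            have : ‖T x‖ ≤ Finset.univ.sup' hune (fun j => ‖y j‖) :=
              Finset.le_sup' (fun j => ‖y j‖) (Finset.mem_univ (argmin hn y w x))
            linarith
  have hTcost : ∫ x, ‖x - T x‖ ∂μ = dualF hn y a μ w := by
    have hU : ∀ᵐ x ∂μ, x ∈ ⋃ j, cell y w j := by
      have heq : {x | ¬ x ∈ ⋃ j, cell y w j} = (⋃ j, cell y w j)ᶜ := rfl
      rw [ae_iff, heq]
      exact hcover
    have haeeq : (fun x => ‖x - T x‖) =ᵐ[μ]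
        (fun x => cmin hn y w x + ∑ j, (cell y w j).indicator (fun _ => w j) x) := by
      filter_upwards [hU] with x hx
      obtain ⟨s, ⟨j, rfl⟩, hxj⟩ := hx
      have hTx : T x = y j := hTcell j x hxj
      have hcc : cmin hn y w x = ‖x - y j‖ - w j := cell_cmin hn y w hxj
      have hind : ∑ i, (cell y w i).indicator (fun _ => w i) x = w j := by
        rw [Finset.sum_eq_single j]
        · exact Set.indicator_of_mem hxj _
        · intro i _ hij
          apply Set.indicator_of_notMem
          intro hxi
          exact hij (cell_disjoint y w hxi hxj)
        · intro h
          exact absurd (Finset.mem_univ j) h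
      rw [hTx, hcc, hind]
      ring
    rw [integral_congr_ae haeeq]
    have hindint : ∀ j : Fin n, Integrable ((cell y w j).indicator (fun _ => w j)) μ :=
      fun j => (integrable_const (w j)).indicator (hcellmeas j)
    rw [integral_add (cmin_integrable hn y μ hμint w) (integrable_finset_sum _
      (fun j _ => hindint j))]
    rw [integral_finset_sum _ (fun j _ => hindint j)]
    have hindval : ∀ j : Fin n, ∫ x, (cell y w j).indicator (fun _ => w j) x ∂μ
        = a j * w j := by
      intro j
      rw [integral_indicator_const (w j) (hcellmeas j), measureReal_def, hcellμ j, smul_eq_mul,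
        ENNReal.toReal_ofReal (ha' j).le]
    simp_rw [hindval]
    rw [dualF]
    ring
  have hcostmeas : Measurable (fun z : EuclideanSpace ℝ (Fin d) × EuclideanSpace ℝ (Fin d) =>
      ENNReal.ofReal ‖z.1 - z.2‖) :=
    ENNReal.measurable_ofReal.comp ((measurable_fst.sub measurable_snd).norm)
  have hpairmeas : Measurable (fun x => (x, T x)) := measurable_id.prodMk hTmeas
  have hLT : ∫⁻ z, ENNReal.ofReal ‖z.1 - z.2‖ ∂(μ.map (fun x => (x, T x)))
      = ENNReal.ofReal (dualF hn y a μ w) := by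
    rw [lintegral_map hcostmeas hpairmeas]
    have : ∫⁻ x, ENNReal.ofReal ‖(x, T x).1 - (x, T x).2‖ ∂μ
        = ∫⁻ x, ENNReal.ofReal ‖x - T x‖ ∂μ := rfl
    rw [this, ← ofReal_integral_eq_lintegral_ofReal hTint
      (Filter.Eventually.of_forall (fun x => norm_nonneg _)), hTcost]
  -- setup for weak duality
  set M : ℝ := Finset.univ.sup' hune (fun j => ‖y j‖ + |w j|) with hMdef
  have hMw : ∀ j, |w j| ≤ M := by
    intro j
    have h1 : ‖y j‖ + |w j| ≤ M := Finset.le_sup' (fun j => ‖y j‖ + |w j|) (Finset.mem_univ j)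
    have h2 : (0:ℝ) ≤ ‖y j‖ := norm_nonneg _
    linarith
  have hM0 : 0 ≤ M := le_trans (abs_nonneg _) (hMw ⟨0, hn⟩)
  have hclb : ∀ x, -M ≤ cmin hn y w x := by
    intro x
    apply le_cmin
    intro i
    have h1 := hMw i
    have h2 : (0:ℝ) ≤ ‖x - y i‖ := norm_nonneg _
    have h3 : w i ≤ |w i| := le_abs_self _
    linarith
  have hwMnn : ∀ j, 0 ≤ w j + M := by
    intro j
    have h1 := hMw j
    have h3 : -w j ≤ |w j| := neg_le_abs _
    linarith
  set Yset : Set (EuclideanSpace ℝ (Fin d)) := ⋃ j, ({y j} : Set _) with hYsetdef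
  have hYmeas : MeasurableSet Yset := MeasurableSet.iUnion (fun j => measurableSet_singleton _)
  set g1 : EuclideanSpace ℝ (Fin d) → ℝ≥0∞ :=
    fun x => ENNReal.ofReal (cmin hn y w x + M) with hg1def
  set g2 : EuclideanSpace ℝ (Fin d) → ℝ≥0∞ :=
    fun z => ∑ j, Set.indicator {y j} (fun _ => ENNReal.ofReal (w j + M)) z with hg2def
  have hg1meas : Measurable g1 :=
    ENNReal.measurable_ofReal.comp (((cmin_continuous hn y w).measurable).add measurable_const)
  have hg2meas : Measurable g2 :=
    Finset.measurable_sum _ (fun j _ => measurable_const.indicator (measurableSet_singleton _))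
  have hg2val : ∀ j, g2 (y j) = ENNReal.ofReal (w j + M) := by
    intro j
    rw [hg2def]
    simp only
    rw [Finset.sum_eq_single j]
    · exact Set.indicator_of_mem (Set.mem_singleton _)
        (fun _ => ENNReal.ofReal (w j + M))
    · intro i _ hij
      apply Set.indicator_of_notMem
      simp only [Set.mem_singleton_iff]
      exact fun h => hij (hy h.symm)
    · exact fun h => absurd (Finset.mem_univ j) h
  have hcomp : ∀ z : EuclideanSpace ℝ (Fin d) × EuclideanSpace ℝ (Fin d), z.2 ∈ Yset →
      g1 z.1 + g2 z.2 ≤ ENNReal.ofReal (‖z.1 - z.2‖ + (M + M)) := by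
    intro z hz
    obtain ⟨s, ⟨i, rfl⟩, hzi⟩ := hz
    rw [Set.mem_singleton_iff] at hzi
    rw [hzi, hg2val i, hg1def]
    simp only
    rw [← ENNReal.ofReal_add (by linarith [hclb z.1]) (hwMnn i)]
    apply ENNReal.ofReal_le_ofReal
    have := cmin_le hn y w z.1 i
    linarith
  have hdnn : 0 ≤ dualF hn y a μ w := by
    have h0 : dualF hn y a μ 0 ≤ dualF hn y a μ w := hmax 0
    have : dualF hn y a μ 0 = ∫ x, cmin hn y 0 x ∂μ := by
      rw [dualF]; simp
    rw [this] at h0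
    refine le_trans (integral_nonneg (fun x => ?_)) h0
    apply le_cmin
    intro i
    simp only [Pi.zero_apply, sub_zero]
    exact norm_nonneg _
  have hsetup : ∀ π : Measure (EuclideanSpace ℝ (Fin d) × EuclideanSpace ℝ (Fin d)),
      π.map Prod.fst = μ → π.map Prod.snd = ν →
      (∀ᵐ z ∂π, z.2 ∈ Yset) ∧
      (∫⁻ z, (g1 z.1 + g2 z.2) ∂π = ENNReal.ofReal (dualF hn y a μ w + (M + M))) ∧
      (∫⁻ z, ENNReal.ofReal (‖z.1 - z.2‖ + (M + M)) ∂π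
        = ∫⁻ z, ENNReal.ofReal ‖z.1 - z.2‖ ∂π + ENNReal.ofReal (M + M)) := by
    intro π h1 h2
    have hπuniv : π Set.univ = 1 := by
      have h := congrArg (fun m : Measure (EuclideanSpace ℝ (Fin d)) => m Set.univ) h1
      rw [Measure.map_apply measurable_fst MeasurableSet.univ, Set.preimage_univ] at h
      rw [h, measure_univ]
    refine ⟨?_, ?_, ?_⟩
    · rw [ae_iff]
      have hpre : {z : EuclideanSpace ℝ (Fin d) × EuclideanSpace ℝ (Fin d) | ¬ z.2 ∈ Yset}
          = Prod.snd ⁻¹' Ysetᶜ := rfl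
      rw [hpre, ← Measure.map_apply measurable_snd hYmeas.compl, h2, hν]
      rw [Measure.finset_sum_apply]
      apply Finset.sum_eq_zero
      intro j _
      rw [Measure.smul_apply, smul_eq_mul, Measure.dirac_apply]
      have : y j ∈ Yset := Set.mem_iUnion.2 ⟨j, rfl⟩
      rw [Set.indicator_of_notMem (by simpa using this)]
      simp
    · have hm1 : Measurable (fun z : EuclideanSpace ℝ (Fin d) × EuclideanSpace ℝ (Fin d) =>
          g1 z.1) := hg1meas.comp measurable_fst
      rw [lintegral_add_left hm1]
      have hInt1 : ∫⁻ z, g1 z.1 ∂π = ENNReal.ofReal ((∫ x, cmin hn y w x ∂μ) + M) := by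
        rw [← lintegral_map hg1meas measurable_fst, h1, hg1def]
        simp only
        have hintc : Integrable (fun x => cmin hn y w x + M) μ :=
          (cmin_integrable hn y μ hμint w).add (integrable_const M)
        rw [← ofReal_integral_eq_lintegral_ofReal hintc
          (Filter.Eventually.of_forall (fun x => by
            show (0:ℝ) ≤ cmin hn y w x + M
            linarith [hclb x]))]
        rw [integral_add (cmin_integrable hn y μ hμint w) (integrable_const M)]
        simp
      have hInt2 : ∫⁻ z, g2 z.2 ∂π = ENNReal.ofReal ((∑ j, a j * w j) + M) := by
        rw [← lintegral_map hg2meas measurable_snd, h2, hg2def]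
        simp only
        rw [lintegral_finset_sum _
          (fun j _ => measurable_const.indicator (measurableSet_singleton _))]
        have hterm : ∀ j : Fin n, ∫⁻ z, Set.indicator {y j}
            (fun _ => ENNReal.ofReal (w j + M)) z ∂ν = ENNReal.ofReal ((w j + M) * a j) := by
          intro j
          rw [lintegral_indicator_const (measurableSet_singleton _), hν_single j,
            ← ENNReal.ofReal_mul (hwMnn j)]
        simp_rw [hterm]
        rw [← ENNReal.ofReal_sum_of_nonneg
          (fun j _ => mul_nonneg (hwMnn j) (ha' j).le)]
        congr 1
        have : ∑ j, (w j + M) * a j = (∑ j, a j * w j) + M * ∑ j, a j := by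
          rw [Finset.mul_sum, ← Finset.sum_add_distrib]
          apply Finset.sum_congr rfl
          intro j _
          ring
        rw [this, hsum]
        ring
      rw [hInt1, hInt2]
      have hnn1 : 0 ≤ (∫ x, cmin hn y w x ∂μ) + M := by
        have : 0 ≤ ∫ x, (cmin hn y w x + M) ∂μ :=
          integral_nonneg (fun x => by
            show (0:ℝ) ≤ cmin hn y w x + M
            linarith [hclb x])
        rwa [integral_add (cmin_integrable hn y μ hμint w) (integrable_const M),
          integral_const, measureReal_def, measure_univ, ENNReal.toReal_one, smul_eq_mul, one_mul] at this
      have hnn2 : 0 ≤ (∑ j, a j * w j) + M := by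
        have : ∀ j, 0 ≤ a j * (w j + M) := fun j => mul_nonneg (ha' j).le (hwMnn j)
        have hsum2 : 0 ≤ ∑ j, a j * (w j + M) := Finset.sum_nonneg (fun j _ => this j)
        have heq2 : ∑ j, a j * (w j + M) = (∑ j, a j * w j) + M := by
          simp_rw [mul_add]
          rw [Finset.sum_add_distrib, ← Finset.sum_mul, hsum, one_mul]
        linarith [hsum2, heq2.le, heq2.ge]
      rw [← ENNReal.ofReal_add hnn1 hnn2]
      congr 1
      rw [dualF]
      ring
    · have hsplit : ∀ z : EuclideanSpace ℝ (Fin d) × EuclideanSpace ℝ (Fin d),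
          ENNReal.ofReal (‖z.1 - z.2‖ + (M + M))
            = ENNReal.ofReal ‖z.1 - z.2‖ + ENNReal.ofReal (M + M) :=
        fun z => ENNReal.ofReal_add (norm_nonneg _) (by linarith)
      simp_rw [hsplit]
      rw [lintegral_add_right _ measurable_const, lintegral_const, hπuniv, mul_one]
  have hweak : ∀ π : Measure (EuclideanSpace ℝ (Fin d) × EuclideanSpace ℝ (Fin d)),
      π.map Prod.fst = μ → π.map Prod.snd = ν →
      ENNReal.ofReal (dualF hn y a μ w) ≤ ∫⁻ z, ENNReal.ofReal ‖z.1 - z.2‖ ∂π := by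
    intro π h1 h2
    obtain ⟨hae, hH, hG⟩ := hsetup π h1 h2
    have hle : ∫⁻ z, (g1 z.1 + g2 z.2) ∂π
        ≤ ∫⁻ z, ENNReal.ofReal (‖z.1 - z.2‖ + (M + M)) ∂π :=
      lintegral_mono_ae (hae.mono (fun z hz => hcomp z hz))
    rw [hH, hG] at hle
    rw [ENNReal.ofReal_add hdnn (by linarith)] at hle
    exact (ENNReal.add_le_add_iff_right ENNReal.ofReal_ne_top).1 hle
  -- uniqueness
  have huniq : ∀ π : Measure (EuclideanSpace ℝ (Fin d) × EuclideanSpace ℝ (Fin d)),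
      π.map Prod.fst = μ → π.map Prod.snd = ν →
      (∫⁻ z, ENNReal.ofReal ‖z.1 - z.2‖ ∂π ≤ ENNReal.ofReal (dualF hn y a μ w)) →
      π = μ.map (fun x => (x, T x)) := by
    intro π h1 h2 hle
    obtain ⟨haeY, hH, hG⟩ := hsetup π h1 h2
    set Gf : EuclideanSpace ℝ (Fin d) × EuclideanSpace ℝ (Fin d) → ℝ≥0∞ :=
      fun z => ENNReal.ofReal (‖z.1 - z.2‖ + (M + M)) with hGfdef
    set Hf : EuclideanSpace ℝ (Fin d) × EuclideanSpace ℝ (Fin d) → ℝ≥0∞ :=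
      fun z => g1 z.1 + g2 z.2 with hHfdef
    have hHmeas : Measurable Hf :=
      (hg1meas.comp measurable_fst).add (hg2meas.comp measurable_snd)
    have hGmeas : Measurable Gf :=
      ENNReal.measurable_ofReal.comp
        (((measurable_fst.sub measurable_snd).norm).add measurable_const)
    have hHG : ∀ᵐ z ∂π, Hf z ≤ Gf z := haeY.mono (fun z hz => hcomp z hz)
    have hHfin : ∫⁻ z, Hf z ∂π ≠ ⊤ := by rw [hH]; exact ENNReal.ofReal_ne_top
    have hGH : ∫⁻ z, Gf z ∂π ≤ ∫⁻ z, Hf z ∂π := by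
      rw [hH, hG]
      calc ∫⁻ z, ENNReal.ofReal ‖z.1 - z.2‖ ∂π + ENNReal.ofReal (M + M)
          ≤ ENNReal.ofReal (dualF hn y a μ w) + ENNReal.ofReal (M + M) :=
            add_le_add_left hle _
        _ = ENNReal.ofReal (dualF hn y a μ w + (M + M)) :=
            (ENNReal.ofReal_add hdnn (by linarith)).symm
    have hsub0 : ∫⁻ z, (Gf z - Hf z) ∂π = 0 := by
      rw [lintegral_sub hHmeas hHfin hHG]
      exact tsub_eq_zero_of_le hGH
    have haeGH : ∀ᵐ z ∂π, Gf z = Hf z := by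
      have h0 := (lintegral_eq_zero_iff (hGmeas.sub hHmeas)).1 hsub0
      filter_upwards [h0, hHG] with z hz0 hzle
      have hz0' : Gf z - Hf z = 0 := hz0
      exact le_antisymm (tsub_eq_zero_iff_le.1 hz0') hzle
    have htiemeas : MeasurableSet (tieSet y w) := by
      apply MeasurableSet.iUnion
      intro i
      apply MeasurableSet.iUnion
      intro j
      apply MeasurableSet.iUnion
      intro _
      exact measurableSet_eq_fun (by fun_prop) measurable_const
    have htieπ : ∀ᵐ z ∂π, z.1 ∉ tieSet y w := by
      rw [ae_iff]
      have hpre : {z : EuclideanSpace ℝ (Fin d) × EuclideanSpace ℝ (Fin d) |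
          ¬ z.1 ∉ tieSet y w} = Prod.fst ⁻¹' (tieSet y w) := by
        ext z; simp
      rw [hpre, ← Measure.map_apply measurable_fst htiemeas, h1]
      exact htie
    have hgr : ∀ᵐ z ∂π, z.2 = T z.1 := by
      filter_upwards [haeY, haeGH, htieπ] with z hzY hzGH hzT
      obtain ⟨s, ⟨i, rfl⟩, hzi⟩ := hzY
      rw [Set.mem_singleton_iff] at hzi
      obtain ⟨k, hk⟩ := mem_cell_of_not_tie hn y w hzT
      have hcc : cmin hn y w z.1 = ‖z.1 - y k‖ - w k := cell_cmin hn y w hk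
      have hH2 : Hf z = ENNReal.ofReal ((cmin hn y w z.1 + M) + (w i + M)) := by
        rw [hHfdef]
        simp only
        rw [hzi, hg2val i, hg1def]
        simp only
        rw [← ENNReal.ofReal_add (by linarith [hclb z.1]) (hwMnn i)]
      have h3 : ENNReal.ofReal (‖z.1 - z.2‖ + (M + M))
          = ENNReal.ofReal ((cmin hn y w z.1 + M) + (w i + M)) := by
        rw [← hH2]
        exact hzGH
      have hne : ‖z.1 - z.2‖ + (M + M) = (cmin hn y w z.1 + M) + (w i + M) := by
        refine (ENNReal.ofReal_eq_ofReal_iff ?_ ?_).1 h3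
        · have := norm_nonneg (z.1 - z.2); linarith
        · have := hclb z.1; have := hwMnn i; linarith
      have heqn : ‖z.1 - y i‖ = cmin hn y w z.1 + w i := by
        rw [← hzi]; linarith
      by_cases hik : i = k
      · subst hik
        rw [hzi, hTcell i z.1 hk]
      · exfalso
        have hlt := hk i hik
        rw [← hcc] at hlt
        rw [heqn] at hlt
        linarith
    have hgrset : MeasurableSet {z : EuclideanSpace ℝ (Fin d) × EuclideanSpace ℝ (Fin d) |
        z.2 = T z.1} := by
      have heq : {z : EuclideanSpace ℝ (Fin d) × EuclideanSpace ℝ (Fin d) | z.2 = T z.1}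
          = (fun z : EuclideanSpace ℝ (Fin d) × EuclideanSpace ℝ (Fin d) => z.2 - T z.1)
            ⁻¹' {0} := by
        ext z; simp [sub_eq_zero]
      rw [heq]
      exact (measurable_snd.sub (hTmeas.comp measurable_fst)) (measurableSet_singleton 0)
    have hgrnull : π ({z : EuclideanSpace ℝ (Fin d) × EuclideanSpace ℝ (Fin d) |
        z.2 = T z.1})ᶜ = 0 := by
      have := hgr
      rw [ae_iff] at this
      exact this
    apply Measure.ext
    intro C hC
    have hA : MeasurableSet ((fun x => (x, T x)) ⁻¹' C) := hpairmeas hC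
    rw [Measure.map_apply hpairmeas hC]
    have e1 : π C = π (C ∩ {z | z.2 = T z.1}) := (measure_inter_conull hgrnull).symm
    have e2 : C ∩ {z | z.2 = T z.1}
        = (Prod.fst ⁻¹' ((fun x => (x, T x)) ⁻¹' C)) ∩ {z | z.2 = T z.1} := by
      ext z
      simp only [Set.mem_inter_iff, Set.mem_setOf_eq, Set.mem_preimage]
      constructor
      · rintro ⟨hzC, hzg⟩
        refine ⟨?_, hzg⟩
        have hzz : (z.1, T z.1) = z := by rw [← hzg]
        rw [hzz]
        exact hzC
      · rintro ⟨hzA, hzg⟩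
        have hzz : (z.1, T z.1) = z := by rw [← hzg]
        exact ⟨hzz ▸ hzA, hzg⟩
    rw [e1, e2, measure_inter_conull hgrnull, ← Measure.map_apply measurable_fst hA, h1]
  -- marginals of the T-plan
  have hplanfst : (μ.map (fun x => (x, T x))).map Prod.fst = μ := by
    rw [Measure.map_map measurable_fst hpairmeas]
    have hid : (Prod.fst ∘ fun x => (x, T x)) = id := rfl
    rw [hid, Measure.map_id]
  have hplansnd : (μ.map (fun x => (x, T x))).map Prod.snd = ν := by
    rw [Measure.map_map measurable_snd hpairmeas]
    have hid : (Prod.snd ∘ fun x => (x, T x)) = T := rfl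
    rw [hid, hmapT]
  refine ⟨T, hTmeas, hmapT, ?_, ?_, ?_⟩
  · intro π h1 h2
    rw [hLT]
    exact hweak π h1 h2
  · intro π h1 h2 hle
    rw [hLT] at hle
    exact huniq π h1 h2 hle
  · apply le_antisymm
    · have : ENNReal.ofReal (∫ x, ‖x - T x‖ ∂μ)
          = ∫⁻ z, ENNReal.ofReal ‖z.1 - z.2‖ ∂(μ.map (fun x => (x, T x))) := by
        rw [hLT, hTcost]
      rw [this]
      exact iInf_le_of_le (μ.map (fun x => (x, T x)))
        (iInf_le_of_le hplanfst (iInf_le_of_le hplansnd le_rfl))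
    · apply le_iInf
      intro π
      apply le_iInf
      intro h1
      apply le_iInf
      intro h2
      rw [hTcost, ← hLT, hLT]
      exact hweak π h1 h2
end
end

section
/- If the weight vector w ∈ ℝ^n is adapted to (μ, ν), i.e. μ(Vor_w(j)) = ν_j for every j ∈ {1, …, n}, then the map T_w sending (μ-almost) every point of Vor_w(j) to y_j is an optimal transport map from μ to ν for the Euclidean cost: it minimizes ∫ ‖x − T(x)‖ dμ(x) over all measurable T with T_{#}μ = ν, and any optimal transport map coincides with T_w μ-almost everywhere. -/
open MeasureTheory ENNReal

noncomputable section

/-- The additively weighted Voronoi cell of the site `y j` with weights `w`. -/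
def Vor {d n : ℕ} (y : Fin n → EuclideanSpace ℝ (Fin d)) (w : Fin n → ℝ) (j : Fin n) :
    Set (EuclideanSpace ℝ (Fin d)) :=
  {x | ∀ k, k ≠ j → ‖x - y j‖ - w j ≤ ‖x - y k‖ - w k}

lemma Vor_meas {d n : ℕ} (y : Fin n → EuclideanSpace ℝ (Fin d)) (w : Fin n → ℝ) (j : Fin n) :
    MeasurableSet (Vor y w j) := by
  have : Vor y w j = ⋂ k, ⋂ (_ : k ≠ j), {x | ‖x - y j‖ - w j ≤ ‖x - y k‖ - w k} := by
    ext x; simp [Vor]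
  rw [this]
  refine MeasurableSet.iInter fun k => MeasurableSet.iInter fun _ => ?_
  exact measurableSet_le (by fun_prop) (by fun_prop)

lemma Vor_cover {d n : ℕ} [NeZero n] (y : Fin n → EuclideanSpace ℝ (Fin d)) (w : Fin n → ℝ)
    (x : EuclideanSpace ℝ (Fin d)) : ∃ j, x ∈ Vor y w j := by
  obtain ⟨j, -, hj⟩ := Finset.exists_min_image Finset.univ (fun k => ‖x - y k‖ - w k)
    ⟨Classical.arbitrary (Fin n), Finset.mem_univ _⟩
  exact ⟨j, fun k _ => hj k (Finset.mem_univ k)⟩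

lemma Vor_mem_of_eq {d n : ℕ} (y : Fin n → EuclideanSpace ℝ (Fin d)) (w : Fin n → ℝ)
    {j k : Fin n} {x : EuclideanSpace ℝ (Fin d)} (hx : x ∈ Vor y w j)
    (h : ‖x - y k‖ - w k = ‖x - y j‖ - w j) : x ∈ Vor y w k := by
  intro m hm
  rcases eq_or_ne m j with rfl | hmj
  · exact h.le
  · exact h.le.trans (hx m hmj)

lemma overlap_null {α : Type*} [MeasurableSpace α] {n : ℕ} (μ : Measure α)
    [IsProbabilityMeasure μ] (F : Fin n → Set α) (hF : ∀ j, MeasurableSet (F j))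
    (hcov : ∀ x, ∃ j, x ∈ F j) (hsum : ∑ j, μ (F j) = 1) :
    ∀ j k, j ≠ k → μ (F j ∩ F k) = 0 := by
  intro j k hjk
  have huniv : (⋃ m, F m) = Set.univ := Set.eq_univ_of_forall fun x => Set.mem_iUnion.2 (hcov x)
  have h1 : (1 : ℝ≥0∞) + μ (F j ∩ F k) ≤ 1 := by
    have hle : μ Set.univ ≤ μ (F j ∪ F k) + ∑ m ∈ Finset.univ \ {j, k}, μ (F m) := by
      rw [← huniv]
      have hsub : (⋃ m, F m) ⊆ (F j ∪ F k) ∪ ⋃ m ∈ Finset.univ \ ({j, k} : Finset (Fin n)), F m := by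
        intro x hx
        rcases Set.mem_iUnion.1 hx with ⟨m, hm⟩
        by_cases hmjk : m = j ∨ m = k
        · rcases hmjk with rfl | rfl
          · exact Or.inl (Or.inl hm)
          · exact Or.inl (Or.inr hm)
        · push_neg at hmjk
          exact Or.inr (Set.mem_biUnion
            (Finset.mem_sdiff.2 ⟨Finset.mem_univ m, by
              simp only [Finset.mem_insert, Finset.mem_singleton]
              push_neg; exact hmjk⟩) hm)
      calc μ (⋃ m, F m) ≤ μ ((F j ∪ F k) ∪ ⋃ m ∈ Finset.univ \ ({j, k} : Finset (Fin n)), F m) :=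
            measure_mono hsub
        _ ≤ μ (F j ∪ F k) + μ (⋃ m ∈ Finset.univ \ ({j, k} : Finset (Fin n)), F m) :=
            measure_union_le _ _
        _ ≤ μ (F j ∪ F k) + ∑ m ∈ Finset.univ \ {j, k}, μ (F m) := by
            gcongr; exact measure_biUnion_finset_le _ _
    have hmu : μ Set.univ = 1 := measure_univ
    calc (1 : ℝ≥0∞) + μ (F j ∩ F k)
        ≤ (μ (F j ∪ F k) + ∑ m ∈ Finset.univ \ {j, k}, μ (F m)) + μ (F j ∩ F k) := by
          rw [← hmu]; gcongr
      _ = (μ (F j ∪ F k) + μ (F j ∩ F k)) + ∑ m ∈ Finset.univ \ {j, k}, μ (F m) := by ring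
      _ = (μ (F j) + μ (F k)) + ∑ m ∈ Finset.univ \ {j, k}, μ (F m) := by
          rw [measure_union_add_inter _ (hF k)]
      _ = ∑ m, μ (F m) := by
          rw [← Finset.sum_sdiff (Finset.subset_univ ({j, k} : Finset (Fin n))),
            Finset.sum_pair hjk]
          ring
      _ = 1 := hsum
  by_contra h
  exact absurd h1 (not_le.2 (ENNReal.lt_add_right one_ne_top h))

lemma integrable_dirac'' {α : Type*} [MeasurableSpace α] {f : α → ℝ} (hf : Measurable f)
    (a : α) : Integrable f (Measure.dirac a) := by
  refine ⟨hf.aestronglyMeasurable, ?_⟩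
  rw [HasFiniteIntegral, lintegral_dirac' a (by fun_prop)]
  exact ENNReal.coe_lt_top

/-- If `w` is adapted to `(μ, ν)`, i.e. `μ(Vor_w(j)) = ν_j` for all `j`,
then any map `T` sending `μ`-almost every point of `Vor_w(j)` to `y j` is an optimal
transport map from `μ` to `ν` for the Euclidean cost, and every optimal transport map
coincides with `T` `μ`-almost everywhere. -/
theorem adapted_weights_give_optimal_transport_partition
    {d n : ℕ} (hd : 2 ≤ d)
    (μ : Measure (EuclideanSpace ℝ (Fin d))) [IsProbabilityMeasure μ]
    (hac : μ ≪ volume)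
    (hμint : Integrable (fun x => ‖x‖) μ)
    (y : Fin n → EuclideanSpace ℝ (Fin d)) (hy : Function.Injective y)
    (a : Fin n → ℝ) (ha : ∀ j, a j ∈ Set.Ioc (0 : ℝ) 1) (hsum : ∑ j, a j = 1)
    (ν : Measure (EuclideanSpace ℝ (Fin d)))
    (hν : ν = ∑ j, ENNReal.ofReal (a j) • Measure.dirac (y j))
    (w : Fin n → ℝ)
    (hadapted : ∀ j, μ (Vor y w j) = ENNReal.ofReal (a j))
    (T : EuclideanSpace ℝ (Fin d) → EuclideanSpace ℝ (Fin d))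
    (hT : Measurable T)
    (hTVor : ∀ j, ∀ᵐ x ∂μ, x ∈ Vor y w j → T x = y j) :
    μ.map T = ν ∧
    (∀ S : EuclideanSpace ℝ (Fin d) → EuclideanSpace ℝ (Fin d),
      Measurable S → μ.map S = ν →
      ∫ x, ‖x - T x‖ ∂μ ≤ ∫ x, ‖x - S x‖ ∂μ) ∧
    (∀ S : EuclideanSpace ℝ (Fin d) → EuclideanSpace ℝ (Fin d),
      Measurable S → μ.map S = ν →
      ∫ x, ‖x - S x‖ ∂μ = ∫ x, ‖x - T x‖ ∂μ → S =ᵐ[μ] T) := by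
  classical
  have hn : NeZero n := ⟨by rintro rfl; simp at hsum⟩
  set F : Fin n → Set (EuclideanSpace ℝ (Fin d)) := Vor y w with hF
  have hFmeas : ∀ j, MeasurableSet (F j) := Vor_meas y w
  have hcov : ∀ x, ∃ j, x ∈ F j := Vor_cover y w
  have hsumF : ∑ j, μ (F j) = 1 := by
    simp only [hadapted]
    rw [← ENNReal.ofReal_sum_of_nonneg fun j _ => (ha j).1.le, hsum, ofReal_one]
  have hover : ∀ j k, j ≠ k → μ (F j ∩ F k) = 0 := overlap_null μ F hFmeas hcov hsumF
  -- the disjointified cells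
  set D : Fin n → Set (EuclideanSpace ℝ (Fin d)) :=
    fun j => F j \ ⋃ k, ⋃ (_ : k ≠ j), F k with hD
  have hDsub : ∀ j, D j ⊆ F j := fun j => Set.diff_subset
  have hDnot : ∀ j k (x : EuclideanSpace ℝ (Fin d)), x ∈ D j → k ≠ j → x ∉ F k := by
    intro j k x hx hk hxk
    exact hx.2 (Set.mem_iUnion.2 ⟨k, Set.mem_iUnion.2 ⟨hk, hxk⟩⟩)
  have hDmeas : ∀ j, MeasurableSet (D j) := fun j =>
    (hFmeas j).diff (MeasurableSet.iUnion fun k => MeasurableSet.iUnion fun _ => hFmeas k)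
  have hDdisj : Pairwise (Function.onFun Disjoint D) := by
    intro j k hjk
    rw [Function.onFun, Set.disjoint_left]
    intro x hxj hxk
    exact hDnot j k x hxj (Ne.symm hjk) (hDsub k hxk)
  have hFD : ∀ j, μ (F j \ D j) = 0 := by
    intro j
    refine measure_mono_null ?_
      (measure_iUnion_null fun k => measure_iUnion_null fun hk => hover j k (Ne.symm hk))
    intro x hx
    have : x ∈ ⋃ k, ⋃ (_ : k ≠ j), F k := by
      by_contra h
      exact hx.2 ⟨hx.1, h⟩
    rcases Set.mem_iUnion.1 this with ⟨k, hk⟩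
    rcases Set.mem_iUnion.1 hk with ⟨hkj, hxk⟩
    exact Set.mem_iUnion.2 ⟨k, Set.mem_iUnion.2 ⟨hkj, hx.1, hxk⟩⟩
  have hDm : ∀ j, μ (D j) = ENNReal.ofReal (a j) := by
    intro j
    refine le_antisymm (hadapted j ▸ measure_mono (hDsub j)) ?_
    rw [← hadapted j]
    calc μ (F j) ≤ μ (D j ∪ (F j \ D j)) := measure_mono (by
          intro x hx; by_cases h : x ∈ D j
          · exact Or.inl h
          · exact Or.inr ⟨hx, h⟩)
      _ ≤ μ (D j) + μ (F j \ D j) := measure_union_le _ _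
      _ = μ (D j) := by rw [hFD j, add_zero]
  have hUD : ∀ᵐ x ∂μ, ∃ j, x ∈ D j := by
    rw [ae_iff]
    refine measure_mono_null ?_ (measure_iUnion_null hFD)
    intro x hx
    simp only [Set.mem_setOf_eq, not_exists] at hx
    obtain ⟨j, hj⟩ := hcov x
    exact Set.mem_iUnion.2 ⟨j, hj, hx j⟩
  have hG : ∀ᵐ x ∂μ, ∀ j, x ∈ F j → T x = y j := ae_all_iff.2 hTVor
  -- Part 1: μ.map T = ν
  have hmapT : μ.map T = ν := by
    refine Measure.ext fun s hs => ?_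
    rw [Measure.map_apply hT hs, hν, Measure.finset_sum_apply]
    simp only [Measure.smul_apply, Measure.dirac_apply' _ hs, smul_eq_mul]
    have hGc : μ {x | ∀ j, x ∈ F j → T x = y j}ᶜ = 0 := by
      rw [Set.compl_setOf]
      exact ae_iff.mp hG
    have hstep1 : μ (T ⁻¹' s) = μ (T ⁻¹' s ∩ ⋃ j, D j) := by
      refine (measure_inter_conull ?_).symm
      have hc : (⋃ j, D j)ᶜ = {x | ¬∃ j, x ∈ D j} := by ext x; simp
      rw [hc]
      exact ae_iff.mp hUD
    have hstep2 : μ (T ⁻¹' s ∩ ⋃ j, D j) = ∑' j, μ (T ⁻¹' s ∩ D j) := by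
      rw [Set.inter_iUnion]
      exact measure_iUnion
        (fun j k hjk => ((hDdisj hjk).inter_left' _).inter_right' _)
        (fun j => (hT hs).inter (hDmeas j))
    have hpiece : ∀ j, μ (T ⁻¹' s ∩ D j) = if y j ∈ s then ENNReal.ofReal (a j) else 0 := by
      intro j
      have hDG : μ (D j ∩ {x | ∀ j, x ∈ F j → T x = y j}) = μ (D j) :=
        measure_inter_conull hGc
      by_cases hyj : y j ∈ s
      · simp only [hyj, if_true]
        refine le_antisymm ((hDm j) ▸ measure_mono Set.inter_subset_right) ?_
        rw [← hDm j, ← hDG]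
        refine measure_mono fun x hx => ⟨?_, hx.1⟩
        have := hx.2 j (hDsub j hx.1)
        simp only [Set.mem_preimage, this]
        exact hyj
      · simp only [hyj, if_false]
        have : μ (T ⁻¹' s ∩ D j) = μ ((T ⁻¹' s ∩ D j) ∩ {x | ∀ j, x ∈ F j → T x = y j}) :=
          (measure_inter_conull hGc).symm
        rw [this]
        convert measure_empty (μ := μ)
        ext x
        simp only [Set.mem_inter_iff, Set.mem_preimage, Set.mem_setOf_eq, Set.mem_empty_iff_false,
          iff_false, not_and]
        intro hxs hxG
        exact hyj (hxG j (hDsub j hxs.2) ▸ hxs.1)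
    rw [hstep1, hstep2, tsum_fintype]
    refine Finset.sum_congr rfl fun j _ => ?_
    rw [hpiece j]
    by_cases hyj : y j ∈ s <;> simp [hyj, Set.indicator]
  refine ⟨hmapT, ?_⟩
  -- the weight function W
  set W : EuclideanSpace ℝ (Fin d) → ℝ :=
    fun z => ∑ k, Set.indicator ({y k} : Set (EuclideanSpace ℝ (Fin d))) (fun _ => w k) z
    with hWdef
  have hWmeas : Measurable W :=
    Finset.measurable_sum _ fun k _ => measurable_const.indicator (measurableSet_singleton _)
  have hWy : ∀ j, W (y j) = w j := by
    intro j
    show (∑ k, Set.indicator ({y k} : Set (EuclideanSpace ℝ (Fin d))) (fun _ => w k) (y j)) = w j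
    rw [Finset.sum_eq_single j]
    · simp
    · intro k _ hk
      apply Set.indicator_of_notMem
      simp only [Set.mem_singleton_iff]
      intro h
      exact hk (hy h.symm)
    · simp
  have hWbd : ∀ z, ‖W z‖ ≤ ∑ k, |w k| := by
    intro z
    rw [Real.norm_eq_abs]
    refine (Finset.abs_sum_le_sum_abs _ _).trans (Finset.sum_le_sum fun k _ => ?_)
    by_cases h : z ∈ ({y k} : Set (EuclideanSpace ℝ (Fin d)))
    · rw [Set.indicator_of_mem h]
    · rw [Set.indicator_of_notMem h]; simp
  -- facts for any transport map S
  have facts : ∀ S : EuclideanSpace ℝ (Fin d) → EuclideanSpace ℝ (Fin d),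
      Measurable S → μ.map S = ν →
      Integrable (fun x => ‖x - S x‖) μ ∧ Integrable (fun x => W (S x)) μ ∧
      (∫ x, W (S x) ∂μ = ∫ z, W z ∂ν) ∧ (∀ᵐ x ∂μ, ∃ k, S x = y k) := by
    intro S hS hSmap
    have hnormν : Integrable (fun z => ‖z‖) ν := by
      rw [hν, integrable_finset_sum_measure]
      intro j _
      exact (integrable_dirac'' (by fun_prop) _).smul_measure ofReal_ne_top
    have hnormS : Integrable (fun x => ‖S x‖) μ := by
      exact (integrable_map_measure
        (g := fun z : EuclideanSpace ℝ (Fin d) => ‖z‖)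
        measurable_norm.aestronglyMeasurable hS.aemeasurable).mp (by rwa [hSmap])
    have h1 : Integrable (fun x => ‖x - S x‖) μ := by
      refine Integrable.mono' (hμint.add hnormS) ?_ ?_
      · exact ((measurable_id.sub hS).norm).aestronglyMeasurable
      · refine ae_of_all _ fun x => ?_
        simp only [Real.norm_eq_abs, abs_norm]
        exact (norm_sub_le _ _)
    have h2 : Integrable (fun x => W (S x)) μ := by
      refine Integrable.mono' (integrable_const (∑ k, |w k|)) ?_ (ae_of_all _ fun x => hWbd _)
      exact (hWmeas.comp hS).aestronglyMeasurable
    have h3 : ∫ x, W (S x) ∂μ = ∫ z, W z ∂ν := by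
      rw [← hSmap, integral_map hS.aemeasurable hWmeas.aestronglyMeasurable]
    have h4 : ∀ᵐ x ∂μ, ∃ k, S x = y k := by
      rw [ae_iff]
      have hR : MeasurableSet (Set.range y) := (Set.finite_range y).measurableSet
      have : {x | ¬∃ k, S x = y k} = S ⁻¹' (Set.range y)ᶜ := by
        ext x
        simp [Set.range, eq_comm]
      rw [this, ← Measure.map_apply hS hR.compl, hSmap, hν, Measure.finset_sum_apply]
      refine Finset.sum_eq_zero fun j _ => ?_
      simp [Measure.dirac_apply' _ hR.compl]
    exact ⟨h1, h2, h3, h4⟩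
  obtain ⟨intT, intWT, hWeqT, -⟩ := facts T hT hmapT
  have key : ∀ S : EuclideanSpace ℝ (Fin d) → EuclideanSpace ℝ (Fin d),
      Measurable S → μ.map S = ν →
      ∀ᵐ x ∂μ, ‖x - T x‖ - W (T x) ≤ ‖x - S x‖ - W (S x) := by
    intro S hS hSmap
    obtain ⟨-, -, -, hSr⟩ := facts S hS hSmap
    filter_upwards [hUD, hG, hSr] with x hx hGx hSx
    obtain ⟨j, hj⟩ := hx
    obtain ⟨k, hk⟩ := hSx
    have hTx : T x = y j := hGx j (hDsub j hj)
    rw [hTx, hk, hWy, hWy]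
    rcases eq_or_ne k j with rfl | hkj
    · exact le_refl _
    · exact hDsub j hj k hkj
  constructor
  · -- optimality
    intro S hS hSmap
    obtain ⟨intS, intWS, hWeqS, -⟩ := facts S hS hSmap
    have intT' : Integrable (fun x => ‖x - T x‖ - W (T x)) μ := intT.sub intWT
    have intS' : Integrable (fun x => ‖x - S x‖ - W (S x)) μ := intS.sub intWS
    have e1 : ∫ x, (‖x - T x‖ - W (T x)) ∂μ ≤ ∫ x, (‖x - S x‖ - W (S x)) ∂μ :=
      integral_mono_ae intT' intS' (key S hS hSmap)
    rw [integral_sub intT intWT, integral_sub intS intWS] at e1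
    have := hWeqS
    have := hWeqT
    linarith
  · -- uniqueness
    intro S hS hSmap heq
    obtain ⟨intS, intWS, hWeqS, hSr⟩ := facts S hS hSmap
    set g : EuclideanSpace ℝ (Fin d) → ℝ :=
      fun x => (‖x - S x‖ - W (S x)) - (‖x - T x‖ - W (T x)) with hg
    have intT' : Integrable (fun x => ‖x - T x‖ - W (T x)) μ := intT.sub intWT
    have intS' : Integrable (fun x => ‖x - S x‖ - W (S x)) μ := intS.sub intWS
    have hg0 : 0 ≤ᵐ[μ] g :=
      (key S hS hSmap).mono fun x hx => by simp only [hg, Pi.zero_apply]; linarith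
    have hgint : Integrable g μ := intS'.sub intT'
    have hgzero : ∫ x, g x ∂μ = 0 := by
      simp only [hg]
      rw [integral_sub intS' intT', integral_sub intS intWS, integral_sub intT intWT,
        hWeqS, hWeqT]
      linarith
    have hgae : g =ᵐ[μ] 0 := (integral_eq_zero_iff_of_nonneg_ae hg0 hgint).mp hgzero
    filter_upwards [hgae, hUD, hG, hSr] with x hgx hx hGx hSx
    obtain ⟨j, hj⟩ := hx
    obtain ⟨k, hk⟩ := hSx
    have hTx : T x = y j := hGx j (hDsub j hj)
    rw [hg] at hgx
    simp only [Pi.zero_apply] at hgx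
    rw [hTx, hk, hWy, hWy] at hgx
    have heqx : ‖x - y k‖ - w k = ‖x - y j‖ - w j := by linarith
    have hxk : x ∈ Vor y w k := Vor_mem_of_eq y w (hDsub j hj) heqx
    have hkj : k = j := by
      by_contra hkj
      exact hDnot j k x hj hkj hxk
    rw [hk, hTx, hkj]
end
end

section
/- The function Φ : ℝ^n → ℝ defined by Φ(w) = Σ_{j=1}^n ( −ν_j w_j − ∫_{Vor_w(j)} (‖x − y_j‖ − w_j) dμ(x) ) is continuously differentiable, with partial derivatives ∂Φ/∂w_j (w) = −ν_j + μ(Vor_w(j)) for all j ∈ {1, …, n} and all w ∈ ℝ^n. -/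
open MeasureTheory ENNReal

noncomputable section

open Set Filter Topology

lemma gDeriv {s : ℝ} (hs : 0 < s) (t : ℝ) :
    HasDerivAt (fun t : ℝ => t / Real.sqrt (t ^ 2 + s))
      ((Real.sqrt (t ^ 2 + s) - t * (t / Real.sqrt (t ^ 2 + s))) / (Real.sqrt (t ^ 2 + s)) ^ 2) t := by
  have hq : 0 < t ^ 2 + s := by positivity
  have hsq : 0 < Real.sqrt (t ^ 2 + s) := Real.sqrt_pos.mpr hq
  have h1 : HasDerivAt (fun t : ℝ => t ^ 2 + s) (2 * t) t := by
    simpa using ((hasDerivAt_pow 2 t).add_const s)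
  have h2 : HasDerivAt (fun t : ℝ => Real.sqrt (t ^ 2 + s)) (t / Real.sqrt (t ^ 2 + s)) t := by
    have := (Real.hasDerivAt_sqrt hq.ne').comp t h1
    refine this.congr_deriv ?_
    field_simp
  have := (hasDerivAt_id t).div h2 hsq.ne'
  exact this.congr_deriv (by simp)

lemma gStrictMono {s : ℝ} (hs : 0 < s) :
    StrictMono (fun t : ℝ => t / Real.sqrt (t ^ 2 + s)) := by
  apply strictMono_of_deriv_pos
  intro t
  rw [(gDeriv hs t).deriv]
  have hq : 0 < t ^ 2 + s := by positivity
  have hsq : 0 < Real.sqrt (t ^ 2 + s) := Real.sqrt_pos.mpr hq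
  have h2 : Real.sqrt (t ^ 2 + s) ^ 2 = t ^ 2 + s := Real.sq_sqrt hq.le
  apply div_pos _ (by positivity)
  have : t * (t / Real.sqrt (t ^ 2 + s)) = t ^ 2 / Real.sqrt (t ^ 2 + s) := by ring
  rw [this]
  rw [sub_pos, div_lt_iff₀ hsq, Real.mul_self_sqrt hq.le]
  nlinarith [sq_nonneg t]

lemma phiStrictMono {s r : ℝ} (hs : 0 < s) (hr : 0 < r) :
    StrictMono (fun t : ℝ => Real.sqrt (t ^ 2 + s) - Real.sqrt ((t - r) ^ 2 + s)) := by
  apply strictMono_of_deriv_pos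
  intro t
  have hq1 : 0 < t ^ 2 + s := by positivity
  have hq2 : 0 < (t - r) ^ 2 + s := by positivity
  have h1 : HasDerivAt (fun t : ℝ => Real.sqrt (t ^ 2 + s)) (t / Real.sqrt (t ^ 2 + s)) t := by
    have hp : HasDerivAt (fun t : ℝ => t ^ 2 + s) (2 * t) t := by
      simpa using ((hasDerivAt_pow 2 t).add_const s)
    have := (Real.hasDerivAt_sqrt hq1.ne').comp t hp
    refine this.congr_deriv ?_
    field_simp
  have h2 : HasDerivAt (fun t : ℝ => Real.sqrt ((t - r) ^ 2 + s))
      ((t - r) / Real.sqrt ((t - r) ^ 2 + s)) t := by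
    have hp : HasDerivAt (fun t : ℝ => (t - r) ^ 2 + s) (2 * (t - r)) t := by
      have hi : HasDerivAt (fun t : ℝ => t - r) 1 t := (hasDerivAt_id t).sub_const r
      have := ((hasDerivAt_pow 2 (t - r)).comp t hi).add_const s
      simpa using this
    have := (Real.hasDerivAt_sqrt hq2.ne').comp t hp
    refine this.congr_deriv ?_
    field_simp
  rw [show deriv (fun t => √(t ^ 2 + s) - √((t - r) ^ 2 + s)) t = _ from (h1.sub h2).deriv]
  have := gStrictMono hs (show t - r < t by linarith)
  simpa using this

lemma pi_zero_null {k : ℕ} : volume ({0} : Set (Fin (k + 1) → ℝ)) = 0 := by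
  have : ({0} : Set (Fin (k + 1) → ℝ)) = Set.pi Set.univ (fun _ => ({0} : Set ℝ)) := by
    ext f; simp [funext_iff]
  rw [this, volume_pi_pi]
  simp

lemma slice_null {k : ℕ} {r c : ℝ} (hr : 0 < r) :
    volume {tg : ℝ × (Fin (k + 1) → ℝ) |
      Real.sqrt (tg.1 ^ 2 + ∑ i, tg.2 i ^ 2) - Real.sqrt ((tg.1 - r) ^ 2 + ∑ i, tg.2 i ^ 2) = c} = 0 := by
  set B := {tg : ℝ × (Fin (k + 1) → ℝ) |
      Real.sqrt (tg.1 ^ 2 + ∑ i, tg.2 i ^ 2) - Real.sqrt ((tg.1 - r) ^ 2 + ∑ i, tg.2 i ^ 2) = c}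
  have hBc : IsClosed B := by
    have h1 : Continuous fun tg : ℝ × (Fin (k + 1) → ℝ) => ∑ i, tg.2 i ^ 2 :=
      continuous_finset_sum _ fun i _ => ((continuous_apply i).comp continuous_snd).pow 2
    have h2 : Continuous fun tg : ℝ × (Fin (k + 1) → ℝ) =>
        Real.sqrt (tg.1 ^ 2 + ∑ i, tg.2 i ^ 2) -
          Real.sqrt ((tg.1 - r) ^ 2 + ∑ i, tg.2 i ^ 2) := by
      exact ((Real.continuous_sqrt.comp ((continuous_fst.pow 2).add h1)).sub
        (Real.continuous_sqrt.comp (((continuous_fst.sub continuous_const).pow 2).add h1)))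
    exact isClosed_eq h2 continuous_const
  have hBm : MeasurableSet B := hBc.measurableSet
  have : (volume : Measure (ℝ × (Fin (k + 1) → ℝ))) B
      = ∫⁻ g, volume ((fun t => (t, g)) ⁻¹' B) ∂(volume : Measure (Fin (k + 1) → ℝ)) := by
    rw [Measure.volume_eq_prod, Measure.prod_apply_symm hBm]
  rw [this]
  have hae : ∀ᵐ g ∂(volume : Measure (Fin (k + 1) → ℝ)),
      volume ((fun t => (t, g)) ⁻¹' B) = 0 := by
    rw [ae_iff]
    refine measure_mono_null ?_ pi_zero_null
    intro g hg
    simp only [Set.mem_setOf_eq] at hg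
    by_contra hg0
    apply hg
    have hgne : g ≠ 0 := by simpa using hg0
    have hs : 0 < ∑ i, g i ^ 2 := by
      rcases Function.ne_iff.mp hgne with ⟨i, hi⟩
      have : (0:ℝ) < g i ^ 2 := pow_two_pos_of_ne_zero hi
      exact Finset.sum_pos' (fun j _ => sq_nonneg _) ⟨i, Finset.mem_univ i, this⟩
    have hmono := phiStrictMono hs hr
    have hsub : ((fun t => (t, g)) ⁻¹' B).Subsingleton := by
      intro t1 h1 t2 h2
      exact hmono.injective (h1.trans h2.symm)
    exact hsub.measure_zero _
  calc ∫⁻ g, volume ((fun t => (t, g)) ⁻¹' B) ∂(volume : Measure (Fin (k + 1) → ℝ))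
      = ∫⁻ _, 0 ∂(volume : Measure (Fin (k + 1) → ℝ)) := lintegral_congr_ae hae
    _ = 0 := lintegral_zero

lemma bisector_null {d : ℕ} (hd : 2 ≤ d) {p q : EuclideanSpace ℝ (Fin d)} (hpq : p ≠ q) (c : ℝ) :
    volume {x : EuclideanSpace ℝ (Fin d) | ‖x - p‖ - ‖x - q‖ = c} = 0 := by
  obtain ⟨m, rfl⟩ : ∃ m, d = m + 2 := ⟨d - 2, by omega⟩
  set v : EuclideanSpace ℝ (Fin (m + 2)) := q - p with hv_def
  have hv : v ≠ 0 := sub_ne_zero.mpr (Ne.symm hpq)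
  set r : ℝ := ‖v‖ with hr_def
  have hr : 0 < r := norm_pos_iff.mpr hv
  set u : EuclideanSpace ℝ (Fin (m + 2)) := r⁻¹ • v with hu_def
  have hu : ‖u‖ = 1 := by
    rw [hu_def, norm_smul, norm_inv, norm_norm, ← hr_def, inv_mul_cancel₀ hr.ne']
  obtain ⟨b, hb⟩ : ∃ b : OrthonormalBasis (Fin (m + 2)) ℝ (EuclideanSpace ℝ (Fin (m + 2))),
      ∀ i ∈ ({0} : Set (Fin (m + 2))), b i = (fun _ => u) i := by
    apply Orthonormal.exists_orthonormalBasis_extension_of_card_eq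
    · simp [finrank_euclideanSpace]
    · constructor
      · rintro ⟨i, hi⟩
        simpa using hu
      · rintro ⟨i, hi⟩ ⟨j, hj⟩ hij
        exact absurd (Subtype.ext ((hi.trans hj.symm : (i : Fin (m+2)) = j))) hij
  have hb0 : b 0 = u := hb 0 rfl
  set S₀ : Set (EuclideanSpace ℝ (Fin (m + 2))) := {z | ‖z‖ - ‖z - v‖ = c} with hS₀
  have hS₀c : IsClosed S₀ :=
    isClosed_eq (continuous_norm.sub ((continuous_id.sub continuous_const).norm)) continuous_const
  have h1 : {x : EuclideanSpace ℝ (Fin (m + 2)) | ‖x - p‖ - ‖x - q‖ = c}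
      = (fun x => x + -p) ⁻¹' S₀ := by
    ext x
    simp only [Set.mem_setOf_eq, Set.mem_preimage, hS₀]
    have e1 : x + -p = x - p := by abel
    have e2 : x - p - v = x - q := by rw [hv_def]; abel
    rw [e1, e2]
  rw [h1, measure_preimage_add_right]
  -- step 2 : rotate with the basis
  have h2 : volume ((b.repr.symm : EuclideanSpace ℝ (Fin (m + 2)) → _) ⁻¹' S₀) = volume S₀ :=
    b.measurePreserving_repr_symm.measure_preimage hS₀c.measurableSet.nullMeasurableSet
  rw [← h2]
  set er : EuclideanSpace ℝ (Fin (m + 2)) := EuclideanSpace.single 0 r with her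
  have hbv : b.repr v = er := by
    have : v = r • u := by rw [hu_def, smul_smul, mul_inv_cancel₀ hr.ne', one_smul]
    rw [this, _root_.map_smul, ← hb0, b.repr_self, her]
    ext i
    simp [EuclideanSpace.single_apply]
  have h3 : (b.repr.symm : EuclideanSpace ℝ (Fin (m + 2)) → _) ⁻¹' S₀
      = {z : EuclideanSpace ℝ (Fin (m + 2)) | ‖z‖ - ‖z - er‖ = c} := by
    ext z
    simp only [Set.mem_preimage, Set.mem_setOf_eq, hS₀]
    have n1 : ‖b.repr.symm z‖ = ‖z‖ := b.repr.symm.norm_map z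
    have n2 : b.repr.symm z - v = b.repr.symm (z - er) := by
      rw [_root_.map_sub, ← hbv]
      simp
    rw [n2, n1, b.repr.symm.norm_map]
  rw [h3]
  set A : Set (Fin (m + 2) → ℝ) := {f | Real.sqrt (f 0 ^ 2 + ∑ i : Fin (m + 1), f (Fin.succAbove 0 i) ^ 2)
      - Real.sqrt ((f 0 - r) ^ 2 + ∑ i : Fin (m + 1), f (Fin.succAbove 0 i) ^ 2) = c} with hA
  set B : Set (ℝ × (Fin (m + 1) → ℝ)) := {tg | Real.sqrt (tg.1 ^ 2 + ∑ i, tg.2 i ^ 2)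
      - Real.sqrt ((tg.1 - r) ^ 2 + ∑ i, tg.2 i ^ 2) = c} with hB
  have hBm : MeasurableSet B := by
    have h1 : Continuous fun tg : ℝ × (Fin (m + 1) → ℝ) => ∑ i, tg.2 i ^ 2 :=
      continuous_finset_sum _ fun i _ => ((continuous_apply i).comp continuous_snd).pow 2
    exact (isClosed_eq (((Real.continuous_sqrt.comp ((continuous_fst.pow 2).add h1)).sub
      (Real.continuous_sqrt.comp (((continuous_fst.sub continuous_const).pow 2).add h1))))
      continuous_const).measurableSet
  have hAB : (MeasurableEquiv.piFinSuccAbove (fun _ : Fin (m + 2) => ℝ) 0) ⁻¹' B = A := by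
    ext f
    simp [hA, hB, MeasurableEquiv.piFinSuccAbove, Fin.tail, Fin.zero_succAbove]
  have hAm : MeasurableSet A := by
    rw [← hAB]
    exact (MeasurableEquiv.piFinSuccAbove (fun _ : Fin (m + 2) => ℝ) 0).measurable hBm
  have hmeq : (MeasurableEquiv.toLp 2 (Fin (m + 2) → ℝ)).symm ⁻¹' A
      = {z : EuclideanSpace ℝ (Fin (m + 2)) | ‖z‖ - ‖z - er‖ = c} := by
    ext z
    simp only [Set.mem_preimage, Set.mem_setOf_eq, hA]
    have hnorm : ∀ w : EuclideanSpace ℝ (Fin (m + 2)),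
        ‖w‖ = Real.sqrt (w 0 ^ 2 + ∑ i : Fin (m + 1), w (Fin.succAbove 0 i) ^ 2) := by
      intro w
      rw [EuclideanSpace.norm_eq]
      congr 1
      rw [Fin.sum_univ_succAbove (fun i => ‖w i‖ ^ 2) 0]
      simp [Real.norm_eq_abs, sq_abs]
    rw [hnorm z, hnorm (z - er)]
    have hz0 : (z - er) 0 = z 0 - r := by
      simp [her, PiLp.sub_apply, EuclideanSpace.single_apply]
    have hzi : ∀ i : Fin (m + 1), (z - er) (Fin.succAbove 0 i) = z (Fin.succAbove 0 i) := by
      intro i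
      simp [her, PiLp.sub_apply, EuclideanSpace.single_apply, Fin.zero_succAbove, Fin.succ_ne_zero i]
    rw [hz0]
    simp_rw [hzi]
    constructor <;> intro h <;> convert h using 3 <;> rfl
  rw [← hmeq]
  rw [(EuclideanSpace.volume_preserving_symm_measurableEquiv_toLp (Fin (m + 2))).measure_preimage
    hAm.nullMeasurableSet]
  rw [← hAB]
  rw [(volume_preserving_piFinSuccAbove (fun _ : Fin (m + 2) => ℝ) 0).measure_preimage
    hBm.nullMeasurableSet]
  exact slice_null hr

section Main

variable {d n : ℕ} [Nonempty (Fin n)]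
  (y : Fin n → EuclideanSpace ℝ (Fin d)) (w : Fin n → ℝ)

def fmin (x : EuclideanSpace ℝ (Fin d)) : ℝ :=
  Finset.univ.inf' Finset.univ_nonempty fun j => ‖x - y j‖ - w j

def VorP (j : Fin n) : Set (EuclideanSpace ℝ (Fin d)) :=
  Vor y w j ∩ ⋂ (k : Fin n) (_ : k < j), (Vor y w k)ᶜ

lemma isClosed_Vor (j : Fin n) : IsClosed (Vor y w j) := by
  have : Vor y w j = ⋂ k, {x : EuclideanSpace ℝ (Fin d) |
      k ≠ j → ‖x - y j‖ - w j ≤ ‖x - y k‖ - w k} := by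
    ext x; simp [Vor]
  rw [this]
  refine isClosed_iInter fun k => ?_
  by_cases hk : k = j
  · simp [hk]
  · have : {x : EuclideanSpace ℝ (Fin d) | k ≠ j → ‖x - y j‖ - w j ≤ ‖x - y k‖ - w k}
        = {x | ‖x - y j‖ - w j ≤ ‖x - y k‖ - w k} := by
      ext x; simp [hk]
    rw [this]
    exact isClosed_le (((continuous_id.sub continuous_const).norm).sub continuous_const)
      (((continuous_id.sub continuous_const).norm).sub continuous_const)

lemma measurableSet_VorP (j : Fin n) : MeasurableSet (VorP y w j) := by
  refine ((isClosed_Vor y w j).measurableSet).inter ?_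
  exact MeasurableSet.iInter fun k => MeasurableSet.iInter fun _ =>
    (isClosed_Vor y w k).measurableSet.compl

lemma fmin_eq_of_mem_Vor {x : EuclideanSpace ℝ (Fin d)} {j : Fin n} (h : x ∈ Vor y w j) :
    fmin y w x = ‖x - y j‖ - w j := by
  apply le_antisymm
  · exact Finset.inf'_le _ (Finset.mem_univ j)
  · refine Finset.le_inf' _ _ fun k _ => ?_
    by_cases hk : k = j
    · subst hk; rfl
    · exact h k hk

lemma exists_mem_Vor (x : EuclideanSpace ℝ (Fin d)) : ∃ j, x ∈ Vor y w j := by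
  obtain ⟨j, -, hj⟩ := Finset.exists_mem_eq_inf' (Finset.univ_nonempty (α := Fin n))
    (fun j => ‖x - y j‖ - w j)
  refine ⟨j, fun k _ => ?_⟩
  rw [← hj]
  exact Finset.inf'_le _ (Finset.mem_univ k)

lemma existsUnique_VorP (x : EuclideanSpace ℝ (Fin d)) : ∃! j, x ∈ VorP y w j := by
  classical
  have hex : ∃ j, x ∈ Vor y w j := exists_mem_Vor y w x
  let s : Finset (Fin n) := Finset.univ.filter fun j => x ∈ Vor y w j
  have hs : s.Nonempty := by
    obtain ⟨j, hj⟩ := hex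
    exact ⟨j, by simp [s, hj]⟩
  refine ⟨s.min' hs, ⟨?_, ?_⟩, ?_⟩
  · have := s.min'_mem hs
    simpa [s] using this
  · refine Set.mem_iInter.mpr fun k => Set.mem_iInter.mpr fun hk => fun hxk => ?_
    have : s.min' hs ≤ k := s.min'_le k (by simp [s, hxk])
    exact absurd this (not_le.mpr hk)
  · rintro j ⟨hj1, hj2⟩
    have hjs : j ∈ s := by simp [s, hj1]
    have h1 : s.min' hs ≤ j := s.min'_le j hjs
    rcases lt_or_eq_of_le h1 with h | h
    · exfalso
      have hmem := s.min'_mem hs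
      have : x ∈ Vor y w (s.min' hs) := by simpa [s] using hmem
      have := Set.mem_iInter.mp (Set.mem_iInter.mp hj2 (s.min' hs)) h
      exact this ‹x ∈ Vor y w (s.min' hs)›
    · exact h.symm

lemma fmin_sum_indicator (x : EuclideanSpace ℝ (Fin d)) :
    fmin y w x = ∑ j, Set.indicator (VorP y w j) (fun x => ‖x - y j‖ - w j) x := by
  obtain ⟨j0, hj0, huniq⟩ := existsUnique_VorP y w x
  rw [Finset.sum_eq_single j0]
  · rw [Set.indicator_of_mem hj0]
    exact fmin_eq_of_mem_Vor y w hj0.1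
  · intro k _ hk
    exact Set.indicator_of_notMem (fun hmem => hk (huniq k hmem)) _
  · exact fun h => absurd (Finset.mem_univ j0) h

lemma fmin_lipschitz (x : EuclideanSpace ℝ (Fin d)) :
    LipschitzWith 1 (fun w => fmin y w x) := by
  have key : ∀ w w' : Fin n → ℝ, fmin y w x ≤ fmin y w' x + dist w w' := by
    intro w w'
    obtain ⟨j0, -, hj0⟩ := Finset.exists_mem_eq_inf' (Finset.univ_nonempty (α := Fin n))
      (fun j => ‖x - y j‖ - w' j)
    have h1 : fmin y w x ≤ ‖x - y j0‖ - w j0 := Finset.inf'_le _ (Finset.mem_univ j0)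
    have h2 : fmin y w' x = ‖x - y j0‖ - w' j0 := hj0
    have h3 : dist (w j0) (w' j0) ≤ dist w w' := dist_le_pi_dist w w' j0
    rw [Real.dist_eq] at h3
    have : w' j0 - w j0 ≤ dist w w' := by
      calc w' j0 - w j0 ≤ |w j0 - w' j0| := by rw [abs_sub_comm]; exact le_abs_self _
        _ ≤ dist w w' := h3
    linarith
  refine LipschitzWith.of_dist_le_mul fun w w' => ?_
  rw [NNReal.coe_one, one_mul, Real.dist_eq, abs_sub_le_iff]
  constructor
  · linarith [key w w']
  · have := key w' w
    rw [dist_comm w' w] at this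
    linarith

lemma fmin_continuous : Continuous (fun x => fmin y w x) := by
  apply Continuous.finset_inf'_apply
  exact fun j _ => ((continuous_id.sub continuous_const).norm).sub continuous_const

lemma fmin_abs_le (x : EuclideanSpace ℝ (Fin d)) :
    |fmin y w x| ≤ ‖x‖ + Finset.univ.sup' Finset.univ_nonempty (fun j => ‖y j‖ + |w j|) := by
  obtain ⟨j0, -, hj0⟩ := Finset.exists_mem_eq_inf' (Finset.univ_nonempty (α := Fin n))
    (fun j => ‖x - y j‖ - w j)
  rw [show fmin y w x = ‖x - y j0‖ - w j0 from hj0]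
  have h1 : ‖x - y j0‖ ≤ ‖x‖ + ‖y j0‖ := norm_sub_le x (y j0)
  have h2 : ‖x‖ - ‖y j0‖ ≤ ‖x - y j0‖ := by
    have := norm_sub_norm_le x (y j0); linarith [abs_le.mp (abs_norm_sub_norm_le x (y j0))]
  have h3 : ‖y j0‖ + |w j0| ≤ Finset.univ.sup' Finset.univ_nonempty (fun j => ‖y j‖ + |w j|) :=
    Finset.le_sup' (f := fun j => ‖y j‖ + |w j|) (Finset.mem_univ j0)
  rw [abs_le]
  constructor
  · nlinarith [norm_nonneg x, le_abs_self (w j0), neg_abs_le (w j0), norm_nonneg (y j0)]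
  · nlinarith [le_abs_self (w j0), neg_abs_le (w j0)]

end Main


/-- The function
`Φ(w) = ∑ⱼ ( -νⱼ wⱼ - ∫_{Vor_w(j)} (‖x - yⱼ‖ - wⱼ) dμ(x) )` is continuously
differentiable with partial derivatives `∂Φ/∂wⱼ (w) = -νⱼ + μ(Vor_w(j))`. -/
theorem Phi_contDiff_with_partials
    {d n : ℕ} (hd : 2 ≤ d)
    (μ : Measure (EuclideanSpace ℝ (Fin d))) [IsProbabilityMeasure μ]
    (hac : μ ≪ volume)
    (hμint : Integrable (fun x => ‖x‖) μ)
    (y : Fin n → EuclideanSpace ℝ (Fin d)) (hy : Function.Injective y)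
    (a : Fin n → ℝ) (ha : ∀ j, a j ∈ Set.Ioc (0 : ℝ) 1) (hsum : ∑ j, a j = 1) :
    ∃ Φ' : (Fin n → ℝ) → ((Fin n → ℝ) →L[ℝ] ℝ),
      Continuous Φ' ∧
      (∀ w : Fin n → ℝ,
        HasFDerivAt (fun w : Fin n → ℝ =>
          ∑ j, (-(a j * w j) - ∫ x in Vor y w j, (‖x - y j‖ - w j) ∂μ)) (Φ' w) w) ∧
      (∀ (w : Fin n → ℝ) (j : Fin n),
        Φ' w (Pi.single j 1) = -(a j) + (μ (Vor y w j)).toReal) := by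
  classical
  obtain ⟨N, rfl⟩ : ∃ N, n = N + 1 := by
    cases n with
    | zero => simp at hsum
    | succ N => exact ⟨N, rfl⟩
  -- the bad (bisector) set has measure zero for every weight vector
  have hbad : ∀ w : Fin (N + 1) → ℝ,
      μ {x | ∃ j k, j ≠ k ∧ ‖x - y j‖ - w j = ‖x - y k‖ - w k} = 0 := by
    intro w
    have hsub : {x : EuclideanSpace ℝ (Fin d) | ∃ j k, j ≠ k ∧ ‖x - y j‖ - w j = ‖x - y k‖ - w k}
        ⊆ ⋃ (j : Fin (N + 1)) (k : Fin (N + 1)),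
          {x : EuclideanSpace ℝ (Fin d) | j ≠ k ∧ ‖x - y j‖ - ‖x - y k‖ = w j - w k} := by
      rintro x ⟨j, k, hjk, hx⟩
      exact Set.mem_iUnion.mpr ⟨j, Set.mem_iUnion.mpr ⟨k, hjk, by linarith⟩⟩
    refine measure_mono_null hsub ?_
    refine measure_iUnion_null fun j => measure_iUnion_null fun k => ?_
    by_cases hjk : j = k
    · have he : {x : EuclideanSpace ℝ (Fin d) | j ≠ k ∧ ‖x - y j‖ - ‖x - y k‖ = w j - w k}
          = ∅ := by
        ext x; simp [hjk]
      rw [he]; exact measure_empty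
    · refine hac (measure_mono_null
        (?_ : _ ⊆ {x : EuclideanSpace ℝ (Fin d) | ‖x - y j‖ - ‖x - y k‖ = w j - w k})
        (bisector_null hd (fun h => hjk (hy h)) (w j - w k)))
      exact fun x hx => hx.2
  have hgood : ∀ w : Fin (N + 1) → ℝ, ∀ᵐ x ∂μ,
      ∀ j k, j ≠ k → ‖x - y j‖ - w j ≠ ‖x - y k‖ - w k := by
    intro w
    rw [ae_iff]
    convert hbad w using 2
    ext x
    push_neg
    rfl
  -- integrability facts
  have hterm : ∀ (j : Fin (N + 1)) (wj : ℝ), Integrable (fun x => ‖x - y j‖ - wj) μ := by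
    intro j wj
    refine Integrable.mono' (hμint.add (integrable_const (‖y j‖ + |wj|)))
      (((continuous_id.sub continuous_const).norm.sub continuous_const).aestronglyMeasurable) ?_
    filter_upwards with x
    simp only [Pi.add_apply]
    rw [Real.norm_eq_abs, abs_le]
    have h1 : ‖x - y j‖ ≤ ‖x‖ + ‖y j‖ := norm_sub_le x (y j)
    have h2 := abs_le.mp (abs_norm_sub_norm_le x (y j))
    constructor <;> nlinarith [le_abs_self wj, neg_abs_le wj, norm_nonneg x]
  have hfint : ∀ w : Fin (N + 1) → ℝ, Integrable (fun x => fmin y w x) μ := by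
    intro w
    refine Integrable.mono'
      (hμint.add (integrable_const
        (Finset.univ.sup' Finset.univ_nonempty (fun j => ‖y j‖ + |w j|))))
      ((fmin_continuous y w).aestronglyMeasurable) ?_
    filter_upwards with x
    simp only [Pi.add_apply]
    rw [Real.norm_eq_abs]
    exact fmin_abs_le y w x
  -- μ-measure of cells and their disjointified versions agree
  have hVorP_ae : ∀ (w : Fin (N + 1) → ℝ) (j : Fin (N + 1)), Vor y w j =ᵐ[μ] VorP y w j := by
    intro w j
    have h1 : μ ((Vor y w j) \ (VorP y w j)) = 0 := by
      refine measure_mono_null ?_ (hbad w)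
      rintro x ⟨hx1, hx2⟩
      simp only [VorP, Set.mem_inter_iff, not_and_or] at hx2
      rcases hx2 with h | h
      · exact absurd hx1 h
      · simp only [Set.mem_iInter, Set.mem_compl_iff, not_forall, not_not] at h
        obtain ⟨k, hk, hxk⟩ := h
        have hkj : k ≠ j := ne_of_lt hk
        have h3 : ‖x - y j‖ - w j ≤ ‖x - y k‖ - w k := hx1 k hkj
        have h4 : ‖x - y k‖ - w k ≤ ‖x - y j‖ - w j := hxk j hkj.symm
        exact ⟨j, k, hkj.symm, le_antisymm h3 h4⟩
    have h2 : μ ((VorP y w j) \ (Vor y w j)) = 0 := by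
      have : (VorP y w j) \ (Vor y w j) = ∅ := by
        rw [Set.diff_eq_empty]
        exact Set.inter_subset_left
      rw [this]; exact measure_empty
    rw [Filter.eventuallyEq_set]
    rw [ae_iff]
    refine measure_mono_null ?_ (measure_union_null h1 h2)
    intro x hx
    simp only [Set.mem_setOf_eq, not_iff] at hx
    by_cases hmem : x ∈ Vor y w j
    · exact Or.inl ⟨hmem, fun hP => (hx.mpr hP) hmem⟩
    · exact Or.inr ⟨hx.mp hmem, hmem⟩
  -- continuity of cell measures
  have hcont : ∀ j, Continuous fun w : Fin (N + 1) → ℝ => (μ (Vor y w j)).toReal := by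
    intro j
    have hrep : ∀ w : Fin (N + 1) → ℝ,
        (μ (Vor y w j)).toReal = ∫ x, Set.indicator (Vor y w j) (fun _ => (1:ℝ)) x ∂μ := by
      intro w
      rw [integral_indicator_const (1:ℝ) (isClosed_Vor y w j).measurableSet]
      simp
      rfl
    simp_rw [hrep]
    rw [continuous_iff_continuousAt]
    intro w₀
    have key : Filter.Tendsto (fun w => ∫ x, Set.indicator (Vor y w j) (fun _ => (1:ℝ)) x ∂μ)
        (𝓝 w₀) (𝓝 (∫ x, Set.indicator (Vor y w₀ j) (fun _ => (1:ℝ)) x ∂μ)) := by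
      apply tendsto_integral_filter_of_dominated_convergence (fun _ => (1:ℝ))
      · filter_upwards with w
        exact (stronglyMeasurable_const.indicator
          (isClosed_Vor y w j).measurableSet).aestronglyMeasurable
      · filter_upwards with w
        filter_upwards with x
        by_cases hx : x ∈ Vor y w j <;> simp [hx]
      · exact integrable_const 1
      · filter_upwards [hgood w₀] with x hx
        obtain ⟨j0, hj0⟩ := exists_mem_Vor y w₀ x
        by_cases hjj : j0 = j
        · subst hjj
          have hev : ∀ᶠ w in 𝓝 w₀, x ∈ Vor y w j0 := by
            have hall : ∀ᶠ w in 𝓝 w₀, ∀ k, k ≠ j0 →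
                ‖x - y j0‖ - w j0 < ‖x - y k‖ - w k := by
              rw [eventually_all]
              intro k
              by_cases hk : k = j0
              · filter_upwards with w hkk
                exact absurd hk hkk
              · have hstrict : ‖x - y j0‖ - w₀ j0 < ‖x - y k‖ - w₀ k :=
                  lt_of_le_of_ne (hj0 k hk) (hx j0 k (Ne.symm hk))
                have h1 : ContinuousAt (fun w : Fin (N + 1) → ℝ => ‖x - y j0‖ - w j0) w₀ :=
                  (continuous_const.sub (continuous_apply j0)).continuousAt
                have h2 : ContinuousAt (fun w : Fin (N + 1) → ℝ => ‖x - y k‖ - w k) w₀ :=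
                  (continuous_const.sub (continuous_apply k)).continuousAt
                filter_upwards [h1.eventually_lt h2 hstrict] with w hw hkk
                exact hw
            filter_upwards [hall] with w hw
            exact fun k hk => (hw k hk).le
          have h1 : x ∈ Vor y w₀ j0 := hj0
          rw [Set.indicator_of_mem h1 (fun _ => (1:ℝ))]
          refine Filter.Tendsto.congr' ?_ tendsto_const_nhds
          filter_upwards [hev] with w hw
          exact (Set.indicator_of_mem hw (fun _ => (1:ℝ))).symm
        · have hstrict : ‖x - y j0‖ - w₀ j0 < ‖x - y j‖ - w₀ j :=
            lt_of_le_of_ne (hj0 j (Ne.symm hjj)) (hx j0 j hjj)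
          have h1 : ContinuousAt (fun w : Fin (N + 1) → ℝ => ‖x - y j0‖ - w j0) w₀ :=
            (continuous_const.sub (continuous_apply j0)).continuousAt
          have h2 : ContinuousAt (fun w : Fin (N + 1) → ℝ => ‖x - y j‖ - w j) w₀ :=
            (continuous_const.sub (continuous_apply j)).continuousAt
          have hev2 : ∀ᶠ w in 𝓝 w₀, x ∉ Vor y w j := by
            filter_upwards [h1.eventually_lt h2 hstrict] with w hw hmem
            linarith [hmem j0 hjj]
          have hx0 : x ∉ Vor y w₀ j := fun hmem => by linarith [hmem j0 hjj]
          rw [Set.indicator_of_notMem hx0 (fun _ => (1:ℝ))]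
          refine Filter.Tendsto.congr' ?_ tendsto_const_nhds
          filter_upwards [hev2] with w hw
          exact (Set.indicator_of_notMem hw (fun _ => (1:ℝ))).symm
    exact key
  -- rewrite Φ through fmin
  have hPhi : (fun w : Fin (N + 1) → ℝ =>
        ∑ j, (-(a j * w j) - ∫ x in Vor y w j, (‖x - y j‖ - w j) ∂μ))
      = fun w => (∑ j, -(a j * w j)) - ∫ x, fmin y w x ∂μ := by
    funext w
    rw [Finset.sum_sub_distrib]
    congr 1
    have h1 : ∀ j : Fin (N + 1), ∫ x in Vor y w j, (‖x - y j‖ - w j) ∂μ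
        = ∫ x, Set.indicator (VorP y w j) (fun x => ‖x - y j‖ - w j) x ∂μ := by
      intro j
      rw [setIntegral_congr_set (hVorP_ae w j), integral_indicator (measurableSet_VorP y w j)]
    simp_rw [h1]
    rw [← integral_finset_sum _
      (fun j _ => ((hterm j (w j)).indicator (measurableSet_VorP y w j)))]
    congr 1
    funext x
    exact (fmin_sum_indicator y w x).symm
  refine ⟨fun w => ∑ j, (-(a j) + (μ (Vor y w j)).toReal) •
      (ContinuousLinearMap.proj j : (Fin (N + 1) → ℝ) →L[ℝ] ℝ), ?_, ?_, ?_⟩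
  · refine continuous_finset_sum _ fun j _ => ?_
    exact (continuous_const.add (hcont j)).smul continuous_const
  · intro w₀
    rw [hPhi]
    have hL : HasFDerivAt (fun w : Fin (N + 1) → ℝ => ∑ j, -(a j * w j))
        (∑ j, (-(a j)) • (ContinuousLinearMap.proj j : (Fin (N + 1) → ℝ) →L[ℝ] ℝ)) w₀ := by
      have heq : (fun w : Fin (N + 1) → ℝ => ∑ j, -(a j * w j))
          = fun w => (∑ j, (-(a j)) •
            (ContinuousLinearMap.proj j : (Fin (N + 1) → ℝ) →L[ℝ] ℝ)) w := by
        funext w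
        rw [ContinuousLinearMap.sum_apply]
        refine Finset.sum_congr rfl fun j _ => ?_
        simp [smul_eq_mul]
      rw [heq]
      exact ContinuousLinearMap.hasFDerivAt _
    set F' : EuclideanSpace ℝ (Fin d) → ((Fin (N + 1) → ℝ) →L[ℝ] ℝ) :=
      fun x => ∑ j, (Set.indicator (VorP y w₀ j) (fun _ => (-1:ℝ)) x) •
        (ContinuousLinearMap.proj j : (Fin (N + 1) → ℝ) →L[ℝ] ℝ) with hF'
    have hG : HasFDerivAt (fun w : Fin (N + 1) → ℝ => ∫ x, fmin y w x ∂μ)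
        (∫ x, F' x ∂μ) w₀ := by
      refine (hasFDerivAt_integral_of_dominated_loc_of_lip (Metric.ball_mem_nhds w₀ one_pos) ?_ (hfint w₀) ?_ ?_
        (integrable_const 1) ?_).2
      · filter_upwards with w
        exact (fmin_continuous y w).aestronglyMeasurable
      · refine Finset.aestronglyMeasurable_fun_sum _ fun j _ => ?_
        exact ((stronglyMeasurable_const.indicator
          (measurableSet_VorP y w₀ j)).aestronglyMeasurable).smul_const _
      · filter_upwards with x
        have h1 : Real.nnabs (1:ℝ) = 1 := by simp
        rw [h1]
        exact (fmin_lipschitz y x).lipschitzOnWith (s := Metric.ball w₀ 1)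
      · filter_upwards [hgood w₀] with x hx
        obtain ⟨j0, hj0, huniq⟩ := existsUnique_VorP y w₀ x
        have hev : (fun w => fmin y w x) =ᶠ[𝓝 w₀] fun w => ‖x - y j0‖ - w j0 := by
          have hall : ∀ᶠ w in 𝓝 w₀, ∀ k, k ≠ j0 →
              ‖x - y j0‖ - w j0 < ‖x - y k‖ - w k := by
            rw [eventually_all]
            intro k
            by_cases hk : k = j0
            · filter_upwards with w hkk; exact absurd hk hkk
            · have hstrict : ‖x - y j0‖ - w₀ j0 < ‖x - y k‖ - w₀ k :=
                lt_of_le_of_ne (hj0.1 k hk) (hx j0 k (Ne.symm hk))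
              have hc1 : ContinuousAt (fun w : Fin (N + 1) → ℝ => ‖x - y j0‖ - w j0) w₀ :=
                (continuous_const.sub (continuous_apply j0)).continuousAt
              have hc2 : ContinuousAt (fun w : Fin (N + 1) → ℝ => ‖x - y k‖ - w k) w₀ :=
                (continuous_const.sub (continuous_apply k)).continuousAt
              filter_upwards [hc1.eventually_lt hc2 hstrict] with w hw hkk
              exact hw
          filter_upwards [hall] with w hw
          exact fmin_eq_of_mem_Vor y w (fun k hk => (hw k hk).le)
        have haff : HasFDerivAt (fun w : Fin (N + 1) → ℝ => ‖x - y j0‖ - w j0)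
            (-(ContinuousLinearMap.proj j0 : (Fin (N + 1) → ℝ) →L[ℝ] ℝ)) w₀ := by
          have := (hasFDerivAt_const (‖x - y j0‖) w₀).sub
            ((ContinuousLinearMap.proj j0 : (Fin (N + 1) → ℝ) →L[ℝ] ℝ).hasFDerivAt)
          exact this.congr_fderiv (zero_sub _)
        have hFx : F' x = -(ContinuousLinearMap.proj j0 : (Fin (N + 1) → ℝ) →L[ℝ] ℝ) := by
          simp only [hF']
          rw [Finset.sum_eq_single j0]
          · rw [Set.indicator_of_mem hj0 (fun _ => (-1:ℝ))]
            ext v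
            simp
          · intro k _ hk
            rw [Set.indicator_of_notMem (fun hmem => hk (huniq k hmem)) (fun _ => (-1:ℝ)),
              zero_smul]
          · exact fun h => absurd (Finset.mem_univ j0) h
        rw [hFx]
        exact haff.congr_of_eventuallyEq hev
    have hInt : (∫ x, F' x ∂μ) = ∑ j, (-(μ (Vor y w₀ j)).toReal) •
        (ContinuousLinearMap.proj j : (Fin (N + 1) → ℝ) →L[ℝ] ℝ) := by
      have hIint : ∀ j : Fin (N + 1), Integrable (fun x =>
          Set.indicator (VorP y w₀ j) (fun _ => (-1:ℝ)) x •
            (ContinuousLinearMap.proj j : (Fin (N + 1) → ℝ) →L[ℝ] ℝ)) μ :=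
        fun j => ((integrable_const (-1:ℝ)).indicator (measurableSet_VorP y w₀ j)).smul_const _
      simp only [hF']
      rw [integral_finset_sum _ (fun j _ => hIint j)]
      refine Finset.sum_congr rfl fun j _ => ?_
      rw [integral_smul_const, integral_indicator_const (-1:ℝ) (measurableSet_VorP y w₀ j)]
      rw [← measureReal_congr (hVorP_ae w₀ j)]
      rw [smul_eq_mul, mul_neg_one]
      rfl
    have hD := hL.sub hG
    rw [hInt] at hD
    refine hD.congr_fderiv ?_
    rw [← Finset.sum_sub_distrib]
    refine Finset.sum_congr rfl fun j _ => ?_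
    rw [← sub_smul]
    congr 1
    ring
  · intro w j
    rw [ContinuousLinearMap.sum_apply]
    simp only [ContinuousLinearMap.smul_apply, ContinuousLinearMap.proj_apply, smul_eq_mul]
    rw [Finset.sum_eq_single j]
    · simp
    · intro k _ hk
      rw [Pi.single_eq_of_ne hk, mul_zero]
    · simp
end
end
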